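/- arXiv:1910.03444 — 6 statements merged into one kernel-verified Lean document; each statement's English description precedes it below -/
import Mathlib

section
/- If λ ≤ 1, then for every integer x ≥ 0 one has b(x) ≤ e^{Δ} π_λ(x); equivalently, log ρ(Q, Poiss_λ) ≤ Δ, where ρ(Q, Poiss_λ) := sup_{x ≥ 0} b(x)/π_λ(x). -/
open Filter Topology Finset


open scoped BigOperators

/-- Poisson probability mass function with parameter `l`. -/
noncomputable def poissonPMF (l : ℝ) (x : ℕ) : ℝ :=
  Real.exp (-l) * l ^ x / (Nat.factorial x)

/-- Poisson binomial probability mass function: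
`b(x) = Σ_{J ⊆ ℕ, #J = x} ∏_{i ∈ J} p i · ∏_{k ∉ J} (1 - p k)`. -/
noncomputable def pb (p : ℕ → ℝ) (x : ℕ) : ℝ :=
  ∑' J : {J : Finset ℕ // J.card = x},
    (∏ i ∈ (J : Finset ℕ), p i) * ∏' k : {k : ℕ // k ∉ (J : Finset ℕ)}, (1 - p k)

namespace PBaux

variable (p : ℕ → ℝ)

/-- odds ratio -/
noncomputable def q (i : ℕ) : ℝ := p i / (1 - p i)

/-- elementary symmetric sum of the odds -/
noncomputable def E (s : Finset ℕ) (x : ℕ) : ℝ :=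
  ∑ J ∈ s.powersetCard x, ∏ i ∈ J, q p i

/-- finite Poisson-binomial pmf -/
noncomputable def bfin (s : Finset ℕ) (x : ℕ) : ℝ :=
  ∑ J ∈ s.powersetCard x, (∏ i ∈ J, p i) * ∏ k ∈ s \ J, (1 - p k)

variable {p} (hp : ∀ i, p i ∈ Set.Ico (0:ℝ) 1)

section basic
include hp

lemma hp0 (i : ℕ) : 0 ≤ p i := (hp i).1
lemma hp1 (i : ℕ) : p i < 1 := (hp i).2
lemma h1p (i : ℕ) : 0 < 1 - p i := by linarith [(hp i).2]
lemma hq0 (i : ℕ) : 0 ≤ q p i := div_nonneg (hp0 hp i) (le_of_lt (h1p hp i))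
lemma hqp (i : ℕ) : q p i * (1 - p i) = p i := by
  rw [q, div_mul_cancel₀ _ (h1p hp i).ne']
lemma hq_eq (i : ℕ) : q p i = p i + p i * q p i := by
  have h := hqp hp i; nlinarith [h]
lemma hq_ge (i : ℕ) : p i ≤ q p i := by
  nlinarith [hq_eq hp i, hq0 hp i, hp0 hp i]

lemma E_nonneg (s : Finset ℕ) (x : ℕ) : 0 ≤ E p s x :=
  Finset.sum_nonneg fun J _ => Finset.prod_nonneg fun i _ => hq0 hp i

end basic

lemma E_zero (s : Finset ℕ) : E p s 0 = 1 := by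
  simp [E]

lemma E_one (s : Finset ℕ) : E p s 1 = ∑ i ∈ s, q p i := by
  rw [E, powersetCard_one, Finset.sum_map]
  simp

lemma E_empty (x : ℕ) (hx : x ≠ 0) : E p ∅ x = 0 := by
  rw [E, Finset.powersetCard_eq_empty.2 (by simpa using Nat.pos_of_ne_zero hx), Finset.sum_empty]

lemma E_insert {a : ℕ} {s : Finset ℕ} (ha : a ∉ s) (x : ℕ) :
    E p (insert a s) (x + 1) = E p s (x + 1) + q p a * E p s x := by
  rw [E, powersetCard_succ_insert ha, Finset.sum_union, E, E, Finset.mul_sum]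
  · congr 1
    rw [Finset.sum_image]
    · refine Finset.sum_congr rfl fun J hJ => ?_
      rw [Finset.mem_powersetCard] at hJ
      rw [Finset.prod_insert (fun h => ha (hJ.1 h))]
    · intro J hJ K hK hJK
      rw [Finset.mem_coe, Finset.mem_powersetCard] at hJ hK
      have : ∀ L : Finset ℕ, L ⊆ s → (insert a L).erase a = L := fun L hL => by
        rw [Finset.erase_insert_eq_erase, Finset.erase_eq_of_notMem (fun h => ha (hL h))]
      rw [← this J hJ.1, ← this K hK.1, hJK]
  · rw [Finset.disjoint_right]
    rintro J hJ hJ'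
    rw [Finset.mem_image] at hJ
    obtain ⟨K, _, rfl⟩ := hJ
    rw [Finset.mem_powersetCard] at hJ'
    exact ha (hJ'.1 (Finset.mem_insert_self a K))

end PBaux

namespace PBaux
variable {p : ℕ → ℝ} (hp : ∀ i, p i ∈ Set.Ico (0:ℝ) 1)
include hp

lemma bfin_eq (s : Finset ℕ) (x : ℕ) :
    bfin p s x = (∏ k ∈ s, (1 - p k)) * E p s x := by
  rw [bfin, E, Finset.mul_sum]
  refine Finset.sum_congr rfl fun J hJ => ?_
  rw [Finset.mem_powersetCard] at hJ
  have hJs : J ⊆ s := hJ.1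
  have h1 : ∏ i ∈ J, p i = (∏ i ∈ J, q p i) * ∏ i ∈ J, (1 - p i) := by
    rw [← Finset.prod_mul_distrib]
    exact Finset.prod_congr rfl fun i _ => (hqp hp i).symm
  have h2 : (∏ k ∈ s \ J, (1 - p k)) * ∏ i ∈ J, (1 - p i) = ∏ k ∈ s, (1 - p k) :=
    Finset.prod_sdiff hJs
  calc (∏ i ∈ J, p i) * ∏ k ∈ s \ J, (1 - p k)
      = (∏ i ∈ J, q p i) * ((∏ k ∈ s \ J, (1 - p k)) * ∏ i ∈ J, (1 - p i)) := by
        rw [h1]; ring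
    _ = (∏ k ∈ s, (1 - p k)) * ∏ i ∈ J, q p i := by rw [h2]; ring

lemma sq_sum_eq (s : Finset ℕ) :
    (∑ i ∈ s, q p i) ^ 2 = (∑ i ∈ s, q p i ^ 2) + 2 * E p s 2 := by
  classical
  induction s using Finset.induction_on with
  | empty => simp [E_empty (p := p) 2 (by norm_num)]
  | insert a s ha ih =>
    have hrec : E p (insert a s) 2 = E p s 2 + q p a * E p s 1 := E_insert ha 1
    rw [Finset.sum_insert ha, Finset.sum_insert ha, hrec, E_one, add_sq, ih]
    ring

/-- Chebyshev-type inequality: `(Σq)(Σ pq) ≤ Σ q²` when `Σ p ≤ 1`. -/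
lemma cheb (s : Finset ℕ) (hl1 : ∑ i ∈ s, p i ≤ 1) :
    (∑ i ∈ s, q p i) * (∑ i ∈ s, p i * q p i) ≤ ∑ i ∈ s, q p i ^ 2 := by
  have h1 : (∑ j ∈ s, p j) * (∑ i ∈ s, q p i ^ 2) ≤ ∑ i ∈ s, q p i ^ 2 := by
    have h2 : 0 ≤ ∑ i ∈ s, q p i ^ 2 := Finset.sum_nonneg fun i _ => sq_nonneg _
    nlinarith
  have key : ∀ i ∈ s, ∀ j ∈ s,
      q p i * (p j * q p j) + q p j * (p i * q p i) ≤ p i * q p j ^ 2 + p j * q p i ^ 2 := by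
    intro i hi j hj
    have hij : 0 ≤ (q p i - q p j) * (p i - p j) := by
      rcases le_total (p i) (p j) with h | h
      · have : q p i ≤ q p j := by
          rw [q, q, div_le_div_iff₀ (h1p hp i) (h1p hp j)]
          nlinarith
        nlinarith
      · have : q p j ≤ q p i := by
          rw [q, q, div_le_div_iff₀ (h1p hp j) (h1p hp i)]
          nlinarith
        nlinarith
    have e1 : p i * q p j = q p i * (1 - p i) * q p j := by rw [hqp hp i]
    have e2 : p j * q p i = q p j * (1 - p j) * q p i := by rw [hqp hp j]
    nlinarith [hq0 hp i, hq0 hp j, mul_nonneg (mul_nonneg (hq0 hp i) (hq0 hp j)) hij]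
  have hmain : ∑ i ∈ s, ∑ j ∈ s, (q p i * (p j * q p j) + q p j * (p i * q p i))
      ≤ ∑ i ∈ s, ∑ j ∈ s, (p i * q p j ^ 2 + p j * q p i ^ 2) :=
    Finset.sum_le_sum fun i hi => Finset.sum_le_sum fun j hj => key i hi j hj
  have hswap1 : ∑ i ∈ s, ∑ j ∈ s, q p j * (p i * q p i)
      = ∑ i ∈ s, ∑ j ∈ s, q p i * (p j * q p j) := Finset.sum_comm
  have hswap2 : ∑ i ∈ s, ∑ j ∈ s, p j * q p i ^ 2
      = ∑ i ∈ s, ∑ j ∈ s, p i * q p j ^ 2 := Finset.sum_comm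
  have e3 : ∑ i ∈ s, ∑ j ∈ s, (q p i * (p j * q p j) + q p j * (p i * q p i))
      = (∑ i ∈ s, ∑ j ∈ s, q p i * (p j * q p j)) + ∑ i ∈ s, ∑ j ∈ s, q p j * (p i * q p i) := by
    simp [Finset.sum_add_distrib]
  have e4 : ∑ i ∈ s, ∑ j ∈ s, (p i * q p j ^ 2 + p j * q p i ^ 2)
      = (∑ i ∈ s, ∑ j ∈ s, p i * q p j ^ 2) + ∑ i ∈ s, ∑ j ∈ s, p j * q p i ^ 2 := by
    simp [Finset.sum_add_distrib]
  have e5 : (∑ i ∈ s, q p i) * (∑ i ∈ s, p i * q p i)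
      = ∑ i ∈ s, ∑ j ∈ s, q p i * (p j * q p j) := by
    rw [Finset.sum_mul_sum]
  have e6 : (∑ j ∈ s, p j) * (∑ i ∈ s, q p i ^ 2)
      = ∑ i ∈ s, ∑ j ∈ s, p i * q p j ^ 2 := by
    rw [Finset.sum_mul_sum]
  linarith

/-- `2 E₂ ≤ λ E₁`. -/
lemma E2_le (s : Finset ℕ) (hl1 : ∑ i ∈ s, p i ≤ 1) :
    2 * E p s 2 ≤ (∑ i ∈ s, p i) * E p s 1 := by
  have h := cheb hp s hl1
  have hsq := sq_sum_eq hp s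
  have hid : ∑ i ∈ s, p i = (∑ i ∈ s, q p i) - ∑ i ∈ s, p i * q p i := by
    rw [← Finset.sum_sub_distrib]
    exact Finset.sum_congr rfl fun i _ => by have := hq_eq hp i; linarith
  rw [E_one, hid]
  nlinarith [hsq, h]

end PBaux

namespace PBaux
variable {p : ℕ → ℝ} (hp : ∀ i, p i ∈ Set.Ico (0:ℝ) 1)
include hp

/-- Main recurrence inequality: `(x+1) E(x+1) ≤ λ E(x)` for `x ≥ 1`. -/
lemma E_step (s : Finset ℕ) (hl1 : ∑ i ∈ s, p i ≤ 1) :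
    ∀ x : ℕ, 1 ≤ x → (x + 1 : ℝ) * E p s (x + 1) ≤ (∑ i ∈ s, p i) * E p s x := by
  classical
  induction s using Finset.induction_on with
  | empty =>
    intro x hx
    rw [E_empty (p := p) (x+1) (Nat.succ_ne_zero x)]
    rw [E_empty (p := p) x (by omega)]
    simp
  | insert a s ha ih =>
    intro x hx
    have hpa := (hp a).1
    have hl1s : ∑ i ∈ s, p i ≤ 1 := by
      rw [Finset.sum_insert ha] at hl1; linarith
    rcases Nat.eq_or_lt_of_le hx with h1 | h2
    · -- x = 1 : direct Chebyshev argument on `insert a s`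
      subst h1
      have h := E2_le hp (insert a s) hl1
      have e : ((1:ℕ):ℝ) + 1 = 2 := by norm_num
      rw [e]
      exact h
    · -- x ≥ 2
      obtain ⟨y, rfl⟩ : ∃ y, x = y + 1 := ⟨x - 1, by omega⟩
      have hy : 1 ≤ y := by omega
      have ih1 := ih hl1s (y + 1) (by omega)
      have ih2 := ih hl1s y hy
      have hqa := hq0 hp a
      have hE1 : E p s (y + 1) ≤ E p s y := by
        have hEy : 0 ≤ E p s y := E_nonneg hp s y
        have : (y + 1 : ℝ) * E p s (y + 1) ≤ E p s y := by
          calc (y + 1 : ℝ) * E p s (y + 1) ≤ (∑ i ∈ s, p i) * E p s y := ih2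
            _ ≤ 1 * E p s y := by
              apply mul_le_mul_of_nonneg_right hl1s hEy
            _ = E p s y := one_mul _
        nlinarith [E_nonneg hp s (y+1)]
      rw [E_insert ha (y + 1), E_insert ha y, Finset.sum_insert ha]
      have hqp' : q p a - p a = p a * q p a := by
        have := hq_eq hp a; linarith
      have hEy1 : 0 ≤ E p s (y+1) := E_nonneg hp s (y+1)
      have hEy : 0 ≤ E p s y := E_nonneg hp s y
      have hls : 0 ≤ ∑ i ∈ s, p i := Finset.sum_nonneg fun i _ => (hp i).1
      -- goal : (y+2) * (E(y+2) + qa E(y+1)) ≤ (pa + λ)(E(y+1) + qa E y)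
      have key : (q p a - p a) * E p s (y+1) ≤ p a * q p a * E p s y := by
        rw [hqp']
        apply mul_le_mul_of_nonneg_left hE1 (mul_nonneg hpa hqa)
      have hint1 := mul_le_mul_of_nonneg_left ih2 hqa
      push_cast at ih1 hint1 ⊢
      nlinarith [ih1, hint1, key]

/-- `x! E(x) ≤ λ^(x-1) E(1)` for `x ≥ 1`. -/
lemma E_fact (s : Finset ℕ) (hl1 : ∑ i ∈ s, p i ≤ 1) :
    ∀ x : ℕ, (Nat.factorial (x+1) : ℝ) * E p s (x+1) ≤ (∑ i ∈ s, p i)^x * E p s 1 := by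
  intro x
  induction x with
  | zero => simp [Nat.factorial]
  | succ y ih =>
    have h1 := E_step hp s hl1 (y+1) (by omega)
    push_cast at h1
    have hls : 0 ≤ ∑ i ∈ s, p i := Finset.sum_nonneg fun i _ => (hp i).1
    have hfacpos : (0:ℝ) ≤ (Nat.factorial (y+1) : ℝ) := by positivity
    calc (Nat.factorial (y+1+1) : ℝ) * E p s (y+1+1)
        = (Nat.factorial (y+1) : ℝ) * (((y:ℝ)+1+1) * E p s (y+1+1)) := by
          rw [Nat.factorial_succ]; push_cast; ring
      _ ≤ (Nat.factorial (y+1) : ℝ) * ((∑ i ∈ s, p i) * E p s (y+1)) :=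
          mul_le_mul_of_nonneg_left h1 hfacpos
      _ = (∑ i ∈ s, p i) * ((Nat.factorial (y+1) : ℝ) * E p s (y+1)) := by ring
      _ ≤ (∑ i ∈ s, p i) * ((∑ i ∈ s, p i)^y * E p s 1) :=
          mul_le_mul_of_nonneg_left ih hls
      _ = (∑ i ∈ s, p i)^(y+1) * E p s 1 := by ring

end PBaux

namespace PBaux

lemma one_add_sum_le_prod (a : ℕ → ℝ) (s : Finset ℕ) (ha : ∀ i ∈ s, 0 ≤ a i) :
    1 + ∑ i ∈ s, a i ≤ ∏ i ∈ s, (1 + a i) := by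
  classical
  induction s using Finset.induction_on with
  | empty => simp
  | insert b s hb ih =>
    have hb0 : 0 ≤ a b := ha b (Finset.mem_insert_self b s)
    have has : ∀ i ∈ s, 0 ≤ a i := fun i hi => ha i (Finset.mem_insert_of_mem hi)
    have ih' := ih has
    have hsum : 0 ≤ ∑ i ∈ s, a i := Finset.sum_nonneg has
    rw [Finset.sum_insert hb, Finset.prod_insert hb]
    nlinarith [ih']

variable {p : ℕ → ℝ} (hp : ∀ i, p i ∈ Set.Ico (0:ℝ) 1)
include hp

lemma lemB (s : Finset ℕ) (hl0 : 0 < ∑ i ∈ s, p i) :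
    (∏ k ∈ s, (1 - p k)) * E p s 1 ≤
      (∑ i ∈ s, p i) * Real.exp ((∑ i ∈ s, p i ^ 2) / (∑ i ∈ s, p i) - ∑ i ∈ s, p i) := by
  set l := ∑ i ∈ s, p i with hldef
  have hE1 : E p s 1 = l + ∑ i ∈ s, p i * q p i := by
    rw [E_one, hldef, ← Finset.sum_add_distrib]
    exact Finset.sum_congr rfl fun i _ => hq_eq hp i
  have hA : ∀ i ∈ s, 0 ≤ p i * q p i / l := fun i _ =>
    div_nonneg (mul_nonneg (hp0 hp i) (hq0 hp i)) hl0.le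
  have h1 : E p s 1 ≤ l * ∏ i ∈ s, (1 + p i * q p i / l) := by
    rw [hE1]
    have := one_add_sum_le_prod (fun i => p i * q p i / l) s hA
    have hsum : l * (1 + ∑ i ∈ s, p i * q p i / l) = l + ∑ i ∈ s, p i * q p i := by
      rw [mul_add, mul_one, Finset.mul_sum]
      congr 1
      exact Finset.sum_congr rfl fun i _ => by field_simp
    calc l + ∑ i ∈ s, p i * q p i = l * (1 + ∑ i ∈ s, p i * q p i / l) := hsum.symm
      _ ≤ l * ∏ i ∈ s, (1 + p i * q p i / l) := by
          apply mul_le_mul_of_nonneg_left this hl0.le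
  have hP0 : 0 ≤ ∏ k ∈ s, (1 - p k) := Finset.prod_nonneg fun k _ => (h1p hp k).le
  calc (∏ k ∈ s, (1 - p k)) * E p s 1
      ≤ (∏ k ∈ s, (1 - p k)) * (l * ∏ i ∈ s, (1 + p i * q p i / l)) :=
        mul_le_mul_of_nonneg_left h1 hP0
    _ = l * ∏ i ∈ s, ((1 - p i) * (1 + p i * q p i / l)) := by
        rw [Finset.prod_mul_distrib]; ring
    _ = l * ∏ i ∈ s, (1 - p i + p i ^ 2 / l) := by
        congr 1
        refine Finset.prod_congr rfl fun i _ => ?_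
        have hq := hqp hp i
        field_simp
        linear_combination (p i) * hq
    _ ≤ l * ∏ i ∈ s, Real.exp (p i ^ 2 / l - p i) := by
        apply mul_le_mul_of_nonneg_left _ hl0.le
        apply Finset.prod_le_prod
        · intro i _
          have := h1p hp i
          have : 0 ≤ p i ^ 2 / l := div_nonneg (sq_nonneg _) hl0.le
          linarith [h1p hp i]
        · intro i _
          have := Real.add_one_le_exp (p i ^ 2 / l - p i)
          linarith
    _ = l * Real.exp ((∑ i ∈ s, p i ^ 2) / l - l) := by
        rw [← Real.exp_sum]
        congr 1
        rw [Finset.sum_sub_distrib, Finset.sum_div]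
  -- done

lemma lemA (s : Finset ℕ) (hl0 : 0 ≤ ∑ i ∈ s, p i) :
    ∏ k ∈ s, (1 - p k) ≤
      Real.exp ((∑ i ∈ s, p i ^ 2) / (∑ i ∈ s, p i) - ∑ i ∈ s, p i) := by
  have h1 : ∏ k ∈ s, (1 - p k) ≤ ∏ k ∈ s, Real.exp (-p k) := by
    apply Finset.prod_le_prod
    · intro i _; linarith [h1p hp i]
    · intro i _
      have := Real.add_one_le_exp (-p i)
      linarith
  rw [← Real.exp_sum] at h1
  refine h1.trans (Real.exp_le_exp.2 ?_)
  rw [Finset.sum_neg_distrib]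
  have : 0 ≤ (∑ i ∈ s, p i ^ 2) / (∑ i ∈ s, p i) :=
    div_nonneg (Finset.sum_nonneg fun i _ => sq_nonneg _) hl0
  linarith

/-- The finite Poisson-binomial bound. -/
theorem fin_bound (s : Finset ℕ) (hl0 : 0 < ∑ i ∈ s, p i) (hl1 : ∑ i ∈ s, p i ≤ 1) (x : ℕ) :
    (Nat.factorial x : ℝ) * bfin p s x ≤
      (∑ i ∈ s, p i) ^ x *
        Real.exp ((∑ i ∈ s, p i ^ 2) / (∑ i ∈ s, p i) - ∑ i ∈ s, p i) := by
  have hP0 : 0 ≤ ∏ k ∈ s, (1 - p k) := Finset.prod_nonneg fun k _ => (h1p hp k).le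
  cases x with
  | zero =>
    rw [bfin_eq hp, E_zero]
    simpa using lemA hp s hl0.le
  | succ y =>
    rw [bfin_eq hp]
    calc (Nat.factorial (y+1) : ℝ) * ((∏ k ∈ s, (1 - p k)) * E p s (y+1))
        = (∏ k ∈ s, (1 - p k)) * ((Nat.factorial (y+1) : ℝ) * E p s (y+1)) := by ring
      _ ≤ (∏ k ∈ s, (1 - p k)) * ((∑ i ∈ s, p i)^y * E p s 1) :=
          mul_le_mul_of_nonneg_left (E_fact hp s hl1 y) hP0
      _ = (∑ i ∈ s, p i)^y * ((∏ k ∈ s, (1 - p k)) * E p s 1) := by ring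
      _ ≤ (∑ i ∈ s, p i)^y * ((∑ i ∈ s, p i) *
            Real.exp ((∑ i ∈ s, p i ^ 2) / (∑ i ∈ s, p i) - ∑ i ∈ s, p i)) := by
          apply mul_le_mul_of_nonneg_left (lemB hp s hl0) (by positivity)
      _ = (∑ i ∈ s, p i)^(y+1) *
            Real.exp ((∑ i ∈ s, p i ^ 2) / (∑ i ∈ s, p i) - ∑ i ∈ s, p i) := by ring

end PBaux

namespace PBaux

lemma hasProd_inf {ι : Type*} (f : ι → ℝ) (h0 : ∀ i, 0 ≤ f i) (h1 : ∀ i, f i ≤ 1) :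
    HasProd f (⨅ u : Finset ι, ∏ i ∈ u, f i) := by
  classical
  have anti : Antitone (fun u : Finset ι => ∏ i ∈ u, f i) := by
    intro u v huv
    dsimp only
    rw [← Finset.prod_sdiff huv]
    calc (∏ i ∈ v \ u, f i) * ∏ i ∈ u, f i
        ≤ 1 * ∏ i ∈ u, f i := by
          apply mul_le_mul_of_nonneg_right
            (Finset.prod_le_one (fun i _ => h0 i) (fun i _ => h1 i))
            (Finset.prod_nonneg fun i _ => h0 i)
      _ = ∏ i ∈ u, f i := one_mul _
  have hbdd : BddBelow (Set.range fun u : Finset ι => ∏ i ∈ u, f i) := by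
    refine ⟨0, ?_⟩
    rintro y ⟨u, rfl⟩
    exact Finset.prod_nonneg fun i _ => h0 i
  exact tendsto_atTop_ciInf anti hbdd

lemma tprod_le_prod_fin {ι : Type*} (f : ι → ℝ) (h0 : ∀ i, 0 ≤ f i) (h1 : ∀ i, f i ≤ 1)
    (u : Finset ι) : ∏' i, f i ≤ ∏ i ∈ u, f i := by
  classical
  rw [(hasProd_inf f h0 h1).tprod_eq]
  refine ciInf_le ?_ u
  refine ⟨0, ?_⟩
  rintro y ⟨v, rfl⟩
  exact Finset.prod_nonneg fun i _ => h0 i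

lemma tprod_nonneg' {ι : Type*} (f : ι → ℝ) (h0 : ∀ i, 0 ≤ f i) (h1 : ∀ i, f i ≤ 1) :
    0 ≤ ∏' i, f i := by
  classical
  rw [(hasProd_inf f h0 h1).tprod_eq]
  exact le_ciInf fun u => Finset.prod_nonneg fun i _ => h0 i

variable {p : ℕ → ℝ} (hp : ∀ i, p i ∈ Set.Ico (0:ℝ) 1)
include hp

lemma tp_le (J s : Finset ℕ) (hJs : J ⊆ s) :
    (∏' k : {k : ℕ // k ∉ J}, (1 - p k)) ≤ ∏ k ∈ s \ J, (1 - p k) := by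
  have h0 : ∀ k : {k : ℕ // k ∉ J}, 0 ≤ 1 - p k.1 := fun k => (h1p hp k.1).le
  have h1 : ∀ k : {k : ℕ // k ∉ J}, 1 - p k.1 ≤ 1 := fun k => by linarith [(hp k.1).1]
  let emb : {x : ℕ // x ∈ s \ J} ↪ {k : ℕ // k ∉ J} :=
    ⟨fun x => ⟨x.1, (Finset.mem_sdiff.1 x.2).2⟩,
      fun a b h => Subtype.ext (by simpa using congrArg Subtype.val h)⟩
  refine le_trans (tprod_le_prod_fin _ h0 h1 ((s \ J).attach.map emb)) (le_of_eq ?_)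
  rw [Finset.prod_map, ← Finset.prod_attach (s \ J) (fun k => 1 - p k)]
  exact Finset.prod_congr rfl fun x _ => rfl

lemma tp_nonneg (J : Finset ℕ) :
    0 ≤ ∏' k : {k : ℕ // k ∉ J}, (1 - p k) := by
  have h0 : ∀ k : {k : ℕ // k ∉ J}, 0 ≤ 1 - p k.1 := fun k => (h1p hp k.1).le
  have h1 : ∀ k : {k : ℕ // k ∉ J}, 1 - p k.1 ≤ 1 := fun k => by linarith [(hp k.1).1]
  exact tprod_nonneg' _ h0 h1

lemma partial_le (x : ℕ) (s : Finset ℕ) (𝒥 : Finset {J : Finset ℕ // J.card = x})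
    (hsub : ∀ J ∈ 𝒥, (J : Finset ℕ) ⊆ s) :
    ∑ J ∈ 𝒥, (∏ i ∈ (J : Finset ℕ), p i) * (∏' k : {k : ℕ // k ∉ (J : Finset ℕ)}, (1 - p k))
      ≤ bfin p s x := by
  have step1 : ∑ J ∈ 𝒥, (∏ i ∈ (J : Finset ℕ), p i) *
        (∏' k : {k : ℕ // k ∉ (J : Finset ℕ)}, (1 - p k))
      ≤ ∑ J ∈ 𝒥, (∏ i ∈ (J : Finset ℕ), p i) * ∏ k ∈ s \ (J : Finset ℕ), (1 - p k) := by
    refine Finset.sum_le_sum fun J hJ => ?_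
    exact mul_le_mul_of_nonneg_left (tp_le hp _ s (hsub J hJ))
      (Finset.prod_nonneg fun i _ => (hp i).1)
  refine step1.trans ?_
  have step2 : ∑ J ∈ 𝒥, (∏ i ∈ (J : Finset ℕ), p i) * ∏ k ∈ s \ (J : Finset ℕ), (1 - p k)
      = ∑ A ∈ 𝒥.image Subtype.val, (∏ i ∈ A, p i) * ∏ k ∈ s \ A, (1 - p k) := by
    rw [Finset.sum_image]
    intro a _ b _ h
    exact Subtype.ext h
  rw [step2, bfin]
  refine Finset.sum_le_sum_of_subset_of_nonneg ?_ ?_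
  · intro A hA
    rw [Finset.mem_image] at hA
    obtain ⟨J, hJ, rfl⟩ := hA
    rw [Finset.mem_powersetCard]
    exact ⟨hsub J hJ, J.2⟩
  · intro A _ _
    exact mul_nonneg (Finset.prod_nonneg fun i _ => (hp i).1)
      (Finset.prod_nonneg fun k _ => (h1p hp k).le)

end PBaux


open PBaux

/-- If `λ ≤ 1` then `b(x) ≤ e^Δ · π_λ(x)` for all `x`; equivalently
`log ρ(Q, Poiss_λ) ≤ Δ` where `Δ = λ⁻¹ Σ p_i²`. -/
theorem stmt_1 (p : ℕ → ℝ) (hp : ∀ i, p i ∈ Set.Ico (0 : ℝ) 1) (hsum : Summable p)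
    (l : ℝ) (hl : l = ∑' i, p i) (hlpos : 0 < l) (hl1 : l ≤ 1)
    (Δ : ℝ) (hΔ : Δ = l⁻¹ * ∑' i, p i ^ 2) :
    (∀ x : ℕ, pb p x ≤ Real.exp Δ * poissonPMF l x) ∧
      Real.log (⨆ x : ℕ, pb p x / poissonPMF l x) ≤ Δ := by

  classical
  have hπpos : ∀ x : ℕ, 0 < poissonPMF l x := by
    intro x
    rw [poissonPMF]
    have := Nat.factorial_pos x
    positivity
  have hσsum : Summable (fun i => p i ^ 2) := by
    refine Summable.of_nonneg_of_le (fun i => sq_nonneg _) (fun i => ?_) hsum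
    nlinarith [(hp i).1, (hp i).2]
  set σ := ∑' i, p i ^ 2 with hσdef
  have hσ0 : 0 ≤ σ := tsum_nonneg fun i => sq_nonneg _
  have hΔ0 : 0 ≤ Δ := by
    rw [hΔ]
    exact mul_nonneg (inv_nonneg.2 hlpos.le) hσ0
  have key : ∀ x : ℕ, pb p x ≤ Real.exp Δ * poissonPMF l x := by
    intro x
    set C := Real.exp Δ * poissonPMF l x with hC
    have hC0 : 0 ≤ C := le_of_lt (mul_pos (Real.exp_pos _) (hπpos x))
    have hxfac : (0:ℝ) < (Nat.factorial x : ℝ) := by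
      have := Nat.factorial_pos x; positivity
    rw [pb]
    refine tsum_le_of_sum_le' hC0 ?_
    intro 𝒥
    refine le_of_forall_pos_le_add ?_
    intro ε hε
    have hL : Tendsto (fun s : Finset ℕ => ∑ i ∈ s, p i) atTop (𝓝 l) := by
      rw [hl]; exact hsum.hasSum
    have hS2 : Tendsto (fun s : Finset ℕ => ∑ i ∈ s, p i ^ 2) atTop (𝓝 σ) := hσsum.hasSum
    have hF : Tendsto (fun s : Finset ℕ => (∑ i ∈ s, p i) ^ x *
        Real.exp ((∑ i ∈ s, p i ^ 2) / (∑ i ∈ s, p i) - ∑ i ∈ s, p i)) atTop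
        (𝓝 (l ^ x * Real.exp (σ / l - l))) :=
      (hL.pow x).mul (((hS2.div hL hlpos.ne').sub hL).rexp)
    have hlim_eq : l ^ x * Real.exp (σ / l - l) = (Nat.factorial x : ℝ) * C := by
      rw [hC, poissonPMF, hΔ, Real.exp_sub, Real.exp_neg, div_eq_inv_mul σ l]
      field_simp
    have ev1 : ∀ᶠ s : Finset ℕ in atTop, 𝒥.sup (fun J => (J : Finset ℕ)) ≤ s :=
      eventually_ge_atTop _
    have ev2 : ∀ᶠ s : Finset ℕ in atTop, 0 < ∑ i ∈ s, p i :=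
      hL.eventually_const_lt hlpos
    have ev3 : ∀ᶠ s : Finset ℕ in atTop, (∑ i ∈ s, p i) ^ x *
        Real.exp ((∑ i ∈ s, p i ^ 2) / (∑ i ∈ s, p i) - ∑ i ∈ s, p i)
          < (Nat.factorial x : ℝ) * C + (Nat.factorial x : ℝ) * ε := by
      refine hF.eventually_lt_const ?_
      rw [hlim_eq]
      nlinarith
    obtain ⟨s, hs1, hs2, hs3⟩ := (ev1.and (ev2.and ev3)).exists
    have hsub : ∀ J ∈ 𝒥, (J : Finset ℕ) ⊆ s := fun J hJ =>
      le_trans (Finset.le_sup hJ) hs1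
    have h1 := partial_le hp x s 𝒥 hsub
    have hl1s : ∑ i ∈ s, p i ≤ 1 :=
      le_trans (Summable.sum_le_tsum s (fun i _ => (hp i).1) hsum) (by rw [← hl]; exact hl1)
    have h2 := fin_bound hp s hs2 hl1s x
    have h3 := hs3
    have h4 := mul_le_mul_of_nonneg_left h1 hxfac.le
    nlinarith [h2, h3, h4, hxfac]
  refine ⟨key, ?_⟩
  have hratio : ∀ x, pb p x / poissonPMF l x ≤ Real.exp Δ := by
    intro x
    rw [div_le_iff₀ (hπpos x)]
    calc pb p x ≤ Real.exp Δ * poissonPMF l x := key x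
      _ = Real.exp Δ * poissonPMF l x := rfl
  have hbdd : BddAbove (Set.range fun x => pb p x / poissonPMF l x) := by
    refine ⟨Real.exp Δ, ?_⟩
    rintro y ⟨x, rfl⟩
    exact hratio x
  have hpb0 : ∀ x, 0 ≤ pb p x := by
    intro x
    rw [pb]
    refine tsum_nonneg fun J => mul_nonneg (Finset.prod_nonneg fun i _ => (hp i).1) ?_
    exact tp_nonneg hp (J : Finset ℕ)
  have h0le : 0 ≤ ⨆ x : ℕ, pb p x / poissonPMF l x :=
    le_trans (div_nonneg (hpb0 0) (hπpos 0).le) (le_ciSup hbdd 0)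
  rcases h0le.eq_or_lt with h | h
  · rw [← h, Real.log_zero]; exact hΔ0
  · exact (Real.log_le_iff_le_exp h).2 (ciSup_le hratio)
end

section
/- If λ ≤ 1, then the density ratio at x = 1 satisfies b(1)/π_λ(1) ≥ exp( Δ(1 − Δ/2 − λ/(2(1 − p*))) ); in particular ρ(Q, Poiss_λ) := sup_{x ≥ 0} b(x)/π_λ(x) satisfies log ρ(Q, Poiss_λ) ≥ Δ(1 − Δ/2 − λ/(2(1 − p*))). -/
open scoped BigOperators

lemma aux_log_one_add {x : ℝ} (hx : 0 ≤ x) : x - x ^ 2 / 2 ≤ Real.log (1 + x) := by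
  set f : ℝ → ℝ := fun t => Real.log (1 + t) - t + t ^ 2 / 2 with hf
  have hder : ∀ t : ℝ, 0 ≤ t → HasDerivAt f ((1 + t)⁻¹ - 1 + t) t := by
    intro t ht
    have h1 : (1 : ℝ) + t ≠ 0 := by positivity
    have hlog : HasDerivAt (fun t : ℝ => Real.log (1 + t)) ((1 + t)⁻¹) t := by
      have := (Real.hasDerivAt_log h1).comp t ((hasDerivAt_id t).const_add 1)
      simp at this; exact this
    have hsq : HasDerivAt (fun t : ℝ => t ^ 2 / 2) t t := by
      have := (hasDerivAt_pow 2 t).div_const 2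
      norm_num at this
      simpa using this
    have h := (hlog.sub (hasDerivAt_id t)).add hsq; exact h
  have hmono : MonotoneOn f (Set.Ici 0) := by
    apply monotoneOn_of_deriv_nonneg (convex_Ici 0)
    · intro t ht
      exact (hder t ht).continuousAt.continuousWithinAt
    · intro t ht
      rw [interior_Ici] at ht
      exact (hder t (le_of_lt ht)).differentiableAt.differentiableWithinAt
    · intro t ht
      rw [interior_Ici] at ht
      replace ht := Set.mem_Ioi.mp ht
      rw [(hder t ht.le).deriv]
      have h1 : (0 : ℝ) < 1 + t := by linarith
      have h2 : (1 + t)⁻¹ * (1 + t) = 1 := inv_mul_cancel₀ h1.ne'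
      have hu1 : (1 + t)⁻¹ ≤ 1 := inv_le_one_of_one_le₀ (by linarith)
      nlinarith [h2, mul_nonneg ht.le (sub_nonneg.mpr hu1)]
  have h0 : f 0 ≤ f x := hmono Set.self_mem_Ici hx hx
  have hf0 : f 0 = 0 := by simp [hf]
  rw [hf0] at h0
  simp only [hf] at h0
  linarith

lemma aux_log_one_sub {s q : ℝ} (hs : s < 1) (h0 : 0 ≤ q) (hqs : q ≤ s) :
    -q - q ^ 2 / (2 * (1 - s)) ≤ Real.log (1 - q) := by
  rcases eq_or_lt_of_le h0 with h | h
  · simp [← h]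
  · have hspos : 0 < s := lt_of_lt_of_le h hqs
    set f : ℝ → ℝ := fun t => Real.log (1 - t) + t + t ^ 2 / (2 * (1 - s)) with hf
    have hder : ∀ t : ℝ, t ≤ s → HasDerivAt f (-(1 - t)⁻¹ + 1 + t / (1 - s)) t := by
      intro t ht
      have h1 : (1 : ℝ) - t ≠ 0 := by
        have : t < 1 := lt_of_le_of_lt ht hs
        intro hc; rw [sub_eq_zero] at hc; exact absurd hc.symm this.ne
      have hlog : HasDerivAt (fun t : ℝ => Real.log (1 - t)) (-(1 - t)⁻¹) t := by
        have := (Real.hasDerivAt_log h1).comp t ((hasDerivAt_id t).const_sub 1)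
        simp at this; exact this
      have hsq : HasDerivAt (fun t : ℝ => t ^ 2 / (2 * (1 - s))) (t / (1 - s)) t := by
        have h2 := (hasDerivAt_pow 2 t).div_const (2 * (1 - s))
        have h1s : (1 : ℝ) - s ≠ 0 := by intro hc; rw [sub_eq_zero] at hc; exact absurd hc.symm hs.ne
        refine h2.congr_deriv ?_
        norm_num
        field_simp
      have h := (hlog.add (hasDerivAt_id t)).add hsq; exact h
    have hmono : MonotoneOn f (Set.Icc 0 s) := by
      apply monotoneOn_of_deriv_nonneg (convex_Icc 0 s)
      · intro t ht
        exact (hder t ht.2).continuousAt.continuousWithinAt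
      · intro t ht
        rw [interior_Icc] at ht
        exact (hder t ht.2.le).differentiableAt.differentiableWithinAt
      · intro t ht
        rw [interior_Icc] at ht
        replace ht := Set.mem_Ioo.mp ht
        rw [(hder t ht.2.le).deriv]
        have h1 : (0 : ℝ) < 1 - t := by linarith [ht.2]
        have h1s : (0 : ℝ) < 1 - s := by linarith
        have huv : (1 - t)⁻¹ ≤ (1 - s)⁻¹ := by
          apply inv_anti₀ h1s
          linarith [ht.2]
        have hut : (1 - t)⁻¹ - 1 = t * (1 - t)⁻¹ := by
          field_simp
          ring
        rw [div_eq_mul_inv]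
        nlinarith [mul_nonneg ht.1.le (sub_nonneg.mpr huv), hut]
    have hle : f 0 ≤ f q := hmono (Set.mem_Icc.mpr ⟨le_refl _, hspos.le⟩)
      (Set.mem_Icc.mpr ⟨h0, hqs⟩) h0
    have hf0 : f 0 = 0 := by simp [hf]
    rw [hf0] at hle
    simp only [hf] at hle
    linarith

lemma aux_tprod_nonneg {ι : Type*} (f : ι → ℝ) (h0 : ∀ i, 0 ≤ f i) : 0 ≤ ∏' i, f i := by
  by_cases hm : Multipliable f
  · exact ge_of_tendsto hm.hasProd
      (Filter.Eventually.of_forall fun s => Finset.prod_nonneg fun i _ => h0 i)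
  · rw [tprod_eq_one_of_not_multipliable hm]; norm_num

lemma aux_tprod_le_one {ι : Type*} (f : ι → ℝ) (h0 : ∀ i, 0 ≤ f i) (h1 : ∀ i, f i ≤ 1) :
    (∏' i, f i) ≤ 1 := by
  by_cases hm : Multipliable f
  · exact le_of_tendsto hm.hasProd
      (Filter.Eventually.of_forall fun s => Finset.prod_le_one (fun i _ => h0 i) fun i _ => h1 i)
  · rw [tprod_eq_one_of_not_multipliable hm]

lemma aux_esymm_step (p : ℕ → ℝ) (x : ℕ) (s : Finset ℕ) :
    ((x : ℝ) + 1) * ∑ J ∈ Finset.powersetCard (x + 1) s, ∏ i ∈ J, p i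
      = ∑ i ∈ s, p i * ∑ J ∈ Finset.powersetCard x (s.erase i), ∏ j ∈ J, p j := by
  classical
  rw [Finset.mul_sum]
  have hterm : ∀ J ∈ Finset.powersetCard (x + 1) s,
      ((x : ℝ) + 1) * ∏ i ∈ J, p i = ∑ i ∈ J, p i * ∏ j ∈ J.erase i, p j := by
    intro J hJ
    rw [Finset.mem_powersetCard] at hJ
    have h1 : ∀ i ∈ J, p i * ∏ j ∈ J.erase i, p j = ∏ j ∈ J, p j := fun i hi =>
      Finset.mul_prod_erase J p hi
    rw [Finset.sum_congr rfl h1, Finset.sum_const, hJ.2, nsmul_eq_mul]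
    push_cast
    ring
  rw [Finset.sum_congr rfl hterm]
  have hr : ∀ i ∈ s, p i * ∑ J ∈ Finset.powersetCard x (s.erase i), ∏ j ∈ J, p j
      = ∑ J ∈ Finset.powersetCard x (s.erase i), p i * ∏ j ∈ J, p j := fun i _ =>
    Finset.mul_sum _ _ _
  rw [Finset.sum_congr rfl hr]
  rw [Finset.sum_sigma', Finset.sum_sigma']
  refine Finset.sum_nbij' (fun a => ⟨a.2, a.1.erase a.2⟩) (fun a => ⟨insert a.1 a.2, a.1⟩)
    ?_ ?_ ?_ ?_ ?_
  · rintro ⟨J, i⟩ ha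
    simp only [Finset.mem_sigma, Finset.mem_powersetCard] at ha ⊢
    obtain ⟨⟨hJs, hJc⟩, hiJ⟩ := ha
    refine ⟨hJs hiJ, Finset.erase_subset_erase i hJs, ?_⟩
    rw [Finset.card_erase_of_mem hiJ, hJc]
    omega
  · rintro ⟨i, J⟩ ha
    simp only [Finset.mem_sigma, Finset.mem_powersetCard] at ha ⊢
    obtain ⟨his, hJe, hJc⟩ := ha
    have hiJ : i ∉ J := fun hc => (Finset.mem_erase.mp (hJe hc)).1 rfl
    refine ⟨⟨?_, ?_⟩, Finset.mem_insert_self i J⟩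
    · intro j hj
      rcases Finset.mem_insert.mp hj with h | h
      · exact h ▸ his
      · exact (Finset.erase_subset i s) (hJe h)
    · rw [Finset.card_insert_of_notMem hiJ, hJc]
  · rintro ⟨J, i⟩ ha
    simp only [Finset.mem_sigma, Finset.mem_powersetCard] at ha
    have : insert i (J.erase i) = J := Finset.insert_erase ha.2
    simp [this]
  · rintro ⟨i, J⟩ ha
    simp only [Finset.mem_sigma, Finset.mem_powersetCard] at ha
    have hiJ : i ∉ J := fun hc => (Finset.mem_erase.mp (ha.2.1 hc)).1 rfl
    have : (insert i J).erase i = J := Finset.erase_insert hiJ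
    simp [this]
  · rintro ⟨J, i⟩ _
    rfl

lemma aux_esymm_le (p : ℕ → ℝ) (hp : ∀ i, 0 ≤ p i) :
    ∀ (x : ℕ) (s : Finset ℕ),
      (Nat.factorial x : ℝ) * ∑ J ∈ Finset.powersetCard x s, ∏ i ∈ J, p i
        ≤ (∑ i ∈ s, p i) ^ x
  | 0, s => by simp
  | (x + 1), s => by
    have hs0 : 0 ≤ ∑ i ∈ s, p i := Finset.sum_nonneg fun i _ => hp i
    have key := aux_esymm_step p x s
    have hmono : ∀ i ∈ s, ∑ J ∈ Finset.powersetCard x (s.erase i), ∏ j ∈ J, p j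
        ≤ ∑ J ∈ Finset.powersetCard x s, ∏ j ∈ J, p j := by
      intro i _
      apply Finset.sum_le_sum_of_subset_of_nonneg
        (Finset.powersetCard_mono (Finset.erase_subset i s))
      intro J _ _
      exact Finset.prod_nonneg fun j _ => hp j
    have h2 : ∑ i ∈ s, p i * ∑ J ∈ Finset.powersetCard x (s.erase i), ∏ j ∈ J, p j
        ≤ (∑ i ∈ s, p i) * ∑ J ∈ Finset.powersetCard x s, ∏ j ∈ J, p j := by
      rw [Finset.sum_mul]
      exact Finset.sum_le_sum fun i hi => mul_le_mul_of_nonneg_left (hmono i hi) (hp i)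
    have IH := aux_esymm_le p hp x s
    have hfac : (Nat.factorial (x + 1) : ℝ)
        = ((x : ℝ) + 1) * (Nat.factorial x : ℝ) := by
      rw [Nat.factorial_succ]; push_cast; ring
    have hE0 : 0 ≤ ∑ J ∈ Finset.powersetCard x s, ∏ j ∈ J, p j :=
      Finset.sum_nonneg fun J _ => Finset.prod_nonneg fun j _ => hp j
    calc (Nat.factorial (x + 1) : ℝ) * ∑ J ∈ Finset.powersetCard (x + 1) s, ∏ i ∈ J, p i
        = (Nat.factorial x : ℝ) *
            (((x : ℝ) + 1) * ∑ J ∈ Finset.powersetCard (x + 1) s, ∏ i ∈ J, p i) := by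
          rw [hfac]; ring
      _ = (Nat.factorial x : ℝ) *
            ∑ i ∈ s, p i * ∑ J ∈ Finset.powersetCard x (s.erase i), ∏ j ∈ J, p j := by
          rw [key]
      _ ≤ (Nat.factorial x : ℝ) *
            ((∑ i ∈ s, p i) * ∑ J ∈ Finset.powersetCard x s, ∏ j ∈ J, p j) := by
          apply mul_le_mul_of_nonneg_left h2
          positivity
      _ = (∑ i ∈ s, p i) *
            ((Nat.factorial x : ℝ) * ∑ J ∈ Finset.powersetCard x s, ∏ j ∈ J, p j) := by ring
      _ ≤ (∑ i ∈ s, p i) * (∑ i ∈ s, p i) ^ x := mul_le_mul_of_nonneg_left IH hs0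
      _ = (∑ i ∈ s, p i) ^ (x + 1) := by ring

noncomputable def auxSingletonEquiv : ℕ ≃ {J : Finset ℕ // J.card = 1} :=
  Equiv.ofBijective (fun i => ⟨{i}, Finset.card_singleton i⟩)
    ⟨fun a b hab => Finset.singleton_injective (congrArg Subtype.val hab),
     fun J => by
      obtain ⟨a, ha⟩ := Finset.card_eq_one.mp J.2
      exact ⟨a, Subtype.ext ha.symm⟩⟩

/-- If `λ ≤ 1` then `b(1)/π_λ(1) ≥ exp(Δ(1 − Δ/2 − λ/(2(1 − p*))))`; in particular
`log ρ(Q, Poiss_λ) ≥ Δ(1 − Δ/2 − λ/(2(1 − p*)))`. -/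
theorem stmt_2 (p : ℕ → ℝ) (hp : ∀ i, p i ∈ Set.Ico (0 : ℝ) 1) (hsum : Summable p)
    (l : ℝ) (hl : l = ∑' i, p i) (hlpos : 0 < l) (hl1 : l ≤ 1)
    (Δ : ℝ) (hΔ : Δ = l⁻¹ * ∑' i, p i ^ 2)
    (pstar : ℝ) (hpstar : IsGreatest (Set.range p) pstar) :
    Real.exp (Δ * (1 - Δ / 2 - l / (2 * (1 - pstar)))) ≤ pb p 1 / poissonPMF l 1 ∧
      Δ * (1 - Δ / 2 - l / (2 * (1 - pstar))) ≤
        Real.log (⨆ x : ℕ, pb p x / poissonPMF l x) := by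
  classical
  have hp0 : ∀ i, 0 ≤ p i := fun i => (hp i).1
  have hp1 : ∀ i, p i < 1 := fun i => (hp i).2
  have hub : ∀ i, p i ≤ pstar := fun i => hpstar.2 (Set.mem_range_self i)
  have hps1 : pstar < 1 := by
    obtain ⟨i0, hi0⟩ := hpstar.1
    rw [← hi0]; exact hp1 i0
  have hps0 : 0 ≤ pstar := le_trans (hp0 0) (hub 0)
  have h1ps : (0 : ℝ) < 1 - pstar := by linarith
  have h1pi : ∀ i, (0 : ℝ) < 1 - p i := fun i => by linarith [hp1 i]
  -- summability of squares
  have hp2 : Summable (fun i => p i ^ 2) := by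
    apply Summable.of_nonneg_of_le (fun i => sq_nonneg _) (fun i => ?_) hsum
    nlinarith [hp0 i, hp1 i]
  have htsum2 : ∑' i, p i ^ 2 = l * Δ := by
    rw [hΔ]; field_simp
  have hΔ0 : 0 ≤ Δ := by
    rw [hΔ]
    exact mul_nonneg (inv_nonneg.mpr hlpos.le) (tsum_nonneg fun i => sq_nonneg _)
  -- log summability
  have hlog_bd : ∀ k, -Real.log (1 - p k) ≤ p k + p k ^ 2 / (2 * (1 - pstar)) := by
    intro k
    have := aux_log_one_sub hps1 (hp0 k) (hub k)
    linarith
  have hlogs : Summable (fun k => Real.log (1 - p k)) := by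
    have hn : Summable (fun k => -Real.log (1 - p k)) := by
      apply Summable.of_nonneg_of_le (fun k => ?_) hlog_bd (hsum.add (hp2.div_const _))
      have : Real.log (1 - p k) ≤ 0 :=
        Real.log_nonpos (by linarith [h1pi k]) (by linarith [hp0 k])
      linarith
    simpa using hn.neg
  -- the infinite product
  set F : ℝ := ∏' k : ℕ, (1 - p k) with hFdef
  have hF : Real.exp (∑' k, Real.log (1 - p k)) = F := by
    have := Real.rexp_tsum_eq_tprod (f := fun n => 1 - p n) h1pi hlogs
    simpa using this
  have hFpos : 0 < F := hF ▸ Real.exp_pos _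
  have hmult : Multipliable (fun k : ℕ => 1 - p k) :=
    Real.multipliable_of_summable_log (f := fun n => 1 - p n) h1pi hlogs
  -- lower bound on F
  have hFlb : Real.exp (-l - l * Δ / (2 * (1 - pstar))) ≤ F := by
    rw [← hF]
    apply Real.exp_le_exp.mpr
    have hsum' : Summable (fun k => -p k - p k ^ 2 / (2 * (1 - pstar))) :=
      hsum.neg.sub (hp2.div_const _)
    have hT : ∑' k, (-p k - p k ^ 2 / (2 * (1 - pstar))) = -l - l * Δ / (2 * (1 - pstar)) := by
      rw [Summable.tsum_sub hsum.neg (hp2.div_const _), tsum_neg, tsum_div_const, htsum2, hl]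
    rw [← hT]
    exact Summable.tsum_le_tsum (fun k => aux_log_one_sub hps1 (hp0 k) (hub k)) hsum' hlogs
  -- the sum S
  have hSsum : Summable (fun i => p i / (1 - p i)) := by
    apply Summable.of_nonneg_of_le (fun i => div_nonneg (hp0 i) (h1pi i).le) (fun i => ?_)
      (hsum.mul_left (1 - pstar)⁻¹)
    rw [div_eq_inv_mul]
    apply mul_le_mul_of_nonneg_right _ (hp0 i)
    apply inv_anti₀ h1ps
    linarith [hub i]
  set S : ℝ := ∑' i, p i / (1 - p i) with hSdef
  have hSlb : l * (1 + Δ) ≤ S := by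
    have h1 : ∑' i, (p i + p i ^ 2) = l * (1 + Δ) := by
      rw [Summable.tsum_add hsum hp2, htsum2, ← hl]; ring
    rw [← h1]
    apply Summable.tsum_le_tsum (fun i => ?_) (hsum.add hp2) hSsum
    rw [le_div_iff₀ (h1pi i)]
    nlinarith [hp0 i, hp1 i]
  have hS0 : 0 ≤ S := tsum_nonneg fun i => div_nonneg (hp0 i) (h1pi i).le
  -- computing pb p 1
  have hsub : ∀ i : ℕ,
      (∏' k : {k : ℕ // k ∉ ({i} : Finset ℕ)}, (1 - p (k : ℕ))) = F / (1 - p i) := by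
    intro i
    have h1 : (∏' k : {k : ℕ // k ∉ ({i} : Finset ℕ)}, (1 - p (k : ℕ)))
        = ∏' k : ℕ, Set.mulIndicator {k : ℕ | k ∉ ({i} : Finset ℕ)} (fun k => 1 - p k) k :=
      tprod_subtype {k : ℕ | k ∉ ({i} : Finset ℕ)} (fun k => 1 - p k)
    have h2 : Set.mulIndicator {k : ℕ | k ∉ ({i} : Finset ℕ)} (fun k => 1 - p k)
        = fun k => if k = i then 1 else 1 - p k := by
      funext k
      by_cases hk : k = i <;> simp [Set.mulIndicator, hk]
    have hlogupd : Summable (Function.update (fun k => Real.log (1 - p k)) i 0) :=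
      hlogs.update i 0
    have hcongr : (fun k => Real.log (Function.update (fun k : ℕ => 1 - p k) i 1 k))
        = Function.update (fun k => Real.log (1 - p k)) i 0 := by
      funext k
      rcases eq_or_ne k i with rfl | hk
      · simp
      · simp [Function.update_of_ne hk]
    have hpos' : ∀ k, 0 < Function.update (fun k : ℕ => 1 - p k) i 1 k := by
      intro k
      rcases eq_or_ne k i with rfl | hk
      · simp
      · simpa [Function.update_of_ne hk] using h1pi k
    have hmu : Multipliable (Function.update (fun k : ℕ => 1 - p k) i 1) :=
      Real.multipliable_of_summable_log
        (f := fun n => Function.update (fun k : ℕ => 1 - p k) i 1 n)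
        hpos' (by rw [hcongr]; exact hlogupd)
    have h3 := Multipliable.tprod_eq_mul_tprod_ite' (f := fun k : ℕ => 1 - p k) i hmu
    rw [h1, h2]
    rw [eq_div_iff (h1pi i).ne', hFdef, h3]
    ring
  have hpb1 : pb p 1 = F * S := by
    rw [pb, ← Equiv.tsum_eq auxSingletonEquiv]
    have : ∀ i : ℕ,
        (∏ j ∈ ((auxSingletonEquiv i : {J : Finset ℕ // J.card = 1}) : Finset ℕ), p j) *
            (∏' k : {k : ℕ // k ∉ ((auxSingletonEquiv i : {J : Finset ℕ // J.card = 1})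
              : Finset ℕ)}, (1 - p (k : ℕ)))
          = F * (p i / (1 - p i)) := by
      intro i
      have he : ((auxSingletonEquiv i : {J : Finset ℕ // J.card = 1}) : Finset ℕ)
          = {i} := rfl
      rw [he]
      rw [Finset.prod_singleton, hsub i]
      field_simp
    rw [tsum_congr this, tsum_mul_left]
  -- first part
  have hpoi1 : poissonPMF l 1 = Real.exp (-l) * l := by
    simp [poissonPMF]
  have hden : 0 < Real.exp (-l) * l := mul_pos (Real.exp_pos _) hlpos
  have hmain : Real.exp (Δ * (1 - Δ / 2 - l / (2 * (1 - pstar)))) ≤ pb p 1 / poissonPMF l 1 := by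
    rw [hpb1, hpoi1]
    have hnum : Real.exp (-l - l * Δ / (2 * (1 - pstar))) * (l * (1 + Δ)) ≤ F * S :=
      mul_le_mul hFlb hSlb (by positivity) hFpos.le
    have hq : Real.exp (-l - l * Δ / (2 * (1 - pstar))) * (l * (1 + Δ)) / (Real.exp (-l) * l)
        = (1 + Δ) * Real.exp (-(l * Δ / (2 * (1 - pstar)))) := by
      rw [show -l - l * Δ / (2 * (1 - pstar)) = -l + -(l * Δ / (2 * (1 - pstar))) by ring,
        Real.exp_add]
      field_simp
    have h5 : Real.exp (Δ - Δ ^ 2 / 2) ≤ 1 + Δ := by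
      calc Real.exp (Δ - Δ ^ 2 / 2) ≤ Real.exp (Real.log (1 + Δ)) :=
            Real.exp_le_exp.mpr (aux_log_one_add hΔ0)
        _ = 1 + Δ := Real.exp_log (by linarith)
    calc Real.exp (Δ * (1 - Δ / 2 - l / (2 * (1 - pstar))))
        = Real.exp (Δ - Δ ^ 2 / 2) * Real.exp (-(l * Δ / (2 * (1 - pstar)))) := by
          rw [← Real.exp_add]; congr 1; ring
      _ ≤ (1 + Δ) * Real.exp (-(l * Δ / (2 * (1 - pstar)))) :=
          mul_le_mul_of_nonneg_right h5 (Real.exp_pos _).le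
      _ = Real.exp (-l - l * Δ / (2 * (1 - pstar))) * (l * (1 + Δ)) / (Real.exp (-l) * l) :=
          hq.symm
      _ ≤ F * S / (Real.exp (-l) * l) := by gcongr
  refine ⟨hmain, ?_⟩
  -- second part: bound on pb p x
  have hpoi_pos : ∀ x : ℕ, 0 < poissonPMF l x := by
    intro x
    unfold poissonPMF
    have : (0 : ℝ) < Nat.factorial x := by positivity
    positivity
  have hpb_le : ∀ x : ℕ, pb p x ≤ l ^ x / (Nat.factorial x) := by
    intro x
    apply tsum_le_of_sum_le' (by positivity)
    intro u
    set B : Finset ℕ := u.sup (fun σ => Subtype.val σ) with hB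
    have hBl : ∑ i ∈ B, p i ≤ l := by
      rw [hl]
      exact Summable.sum_le_tsum B (fun i _ => hp0 i) hsum
    have hB0 : 0 ≤ ∑ i ∈ B, p i := Finset.sum_nonneg fun i _ => hp0 i
    calc ∑ σ ∈ u, (∏ i ∈ (σ : Finset ℕ), p i) *
            ∏' k : {k : ℕ // k ∉ ((σ : {J : Finset ℕ // J.card = x}) : Finset ℕ)}, (1 - p (k : ℕ))
        ≤ ∑ σ ∈ u, ∏ i ∈ (σ : Finset ℕ), p i := by
          apply Finset.sum_le_sum
          intro σ _
          have hle1 := aux_tprod_le_one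
            (fun k : {k : ℕ // k ∉ ((σ : {J : Finset ℕ // J.card = x}) : Finset ℕ)} =>
              1 - p (k : ℕ))
            (fun k => (h1pi (k : ℕ)).le)
            (fun k => by show (1 : ℝ) - p (k : ℕ) ≤ 1; linarith [hp0 (k : ℕ)])
          exact mul_le_of_le_one_right (Finset.prod_nonneg fun i _ => hp0 i) hle1
      _ = ∑ J ∈ u.image Subtype.val, ∏ i ∈ J, p i :=
          (Finset.sum_image (g := Subtype.val) (f := fun J => ∏ i ∈ J, p i)
            (fun a _ b _ hab => Subtype.ext hab)).symm
      _ ≤ ∑ J ∈ Finset.powersetCard x B, ∏ i ∈ J, p i := by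
          apply Finset.sum_le_sum_of_subset_of_nonneg
          · intro J hJ
            obtain ⟨σ, hσ, rfl⟩ := Finset.mem_image.mp hJ
            rw [Finset.mem_powersetCard]
            exact ⟨Finset.le_sup (f := fun σ => Subtype.val σ) hσ, σ.2⟩
          · intro J _ _
            exact Finset.prod_nonneg fun i _ => hp0 i
      _ ≤ (∑ i ∈ B, p i) ^ x / (Nat.factorial x) := by
          rw [le_div_iff₀ (by positivity : (0 : ℝ) < (Nat.factorial x : ℝ))]
          rw [mul_comm]
          exact aux_esymm_le p hp0 x B
      _ ≤ l ^ x / (Nat.factorial x) := by gcongr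
  have hr_le : ∀ x : ℕ, pb p x / poissonPMF l x ≤ Real.exp l := by
    intro x
    rw [div_le_iff₀ (hpoi_pos x)]
    calc pb p x ≤ l ^ x / (Nat.factorial x) := hpb_le x
      _ = Real.exp l * poissonPMF l x := by
          unfold poissonPMF
          rw [Real.exp_neg]
          field_simp
  have hbdd : BddAbove (Set.range fun x : ℕ => pb p x / poissonPMF l x) := by
    refine ⟨Real.exp l, ?_⟩
    rintro _ ⟨x, rfl⟩
    exact hr_le x
  have hle_sup : pb p 1 / poissonPMF l 1 ≤ ⨆ x : ℕ, pb p x / poissonPMF l x :=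
    le_ciSup hbdd 1
  have hsup : Real.exp (Δ * (1 - Δ / 2 - l / (2 * (1 - pstar))))
      ≤ ⨆ x : ℕ, pb p x / poissonPMF l x := hmain.trans hle_sup
  calc Δ * (1 - Δ / 2 - l / (2 * (1 - pstar)))
      = Real.log (Real.exp (Δ * (1 - Δ / 2 - l / (2 * (1 - pstar))))) :=
        (Real.log_exp _).symm
    _ ≤ Real.log (⨆ x : ℕ, pb p x / poissonPMF l x) :=
        Real.log_le_log (Real.exp_pos _) hsup
end

section
/- The total variation distance satisfies d_TV(Q, Poiss_λ) ≤ min(1, λ) · (1 − ρ(Q, Poiss_λ)^{−1}), where ρ(Q, Poiss_λ) := sup_{x ≥ 0} b(x)/π_λ(x). -/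
open scoped BigOperators

open Filter

private lemma hasProd_exp_aux {ι : Type*} {g : ι → ℝ} {S : ℝ} (h : HasSum g S) :
    HasProd (fun i => Real.exp (g i)) (Real.exp S) := by
  have h2 := (Real.continuous_exp.tendsto S).comp h
  simpa [HasProd, Function.comp_def, Real.exp_sum] using h2

private lemma one_sub_sum_le_prod_aux {p : ℕ → ℝ} (hp0 : ∀ i, 0 ≤ p i) (hp1 : ∀ i, p i ≤ 1)
    (s : Finset ℕ) : 1 - ∑ i ∈ s, p i ≤ ∏ i ∈ s, (1 - p i) := by
  classical
  induction s using Finset.induction_on with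
  | empty => simp
  | @insert a s ha ih =>
    rw [Finset.sum_insert ha, Finset.prod_insert ha]
    have h1 : 0 ≤ ∏ i ∈ s, (1 - p i) := Finset.prod_nonneg fun i _ => by linarith [hp1 i]
    have h2 : 0 ≤ ∑ i ∈ s, p i := Finset.sum_nonneg fun i _ => hp0 i
    nlinarith [hp0 a, hp1 a, mul_nonneg (show (0:ℝ) ≤ 1 - p a by linarith [hp1 a])
      (show (0:ℝ) ≤ ∏ i ∈ s, (1 - p i) - (1 - ∑ i ∈ s, p i) by linarith)]

set_option maxHeartbeats 2000000 in
private lemma pb_core {p : ℕ → ℝ} (hp : ∀ i, p i ∈ Set.Ico (0:ℝ) 1) (hsum : Summable p) :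
    HasSum (pb p) 1 ∧ (∀ x, 0 ≤ pb p x) ∧ 1 - (∑' i, p i) ≤ pb p 0 ∧
      pb p 0 ≤ Real.exp (-(∑' i, p i)) := by
  classical
  have hp0 : ∀ i, 0 ≤ p i := fun i => (hp i).1
  have hp1 : ∀ i, p i < 1 := fun i => (hp i).2
  have h1p : ∀ i, (0:ℝ) < 1 - p i := fun i => by linarith [hp1 i]
  have hev : ∀ᶠ i in Filter.cofinite, p i < 1/2 :=
    hsum.tendsto_cofinite_zero.eventually (gt_mem_nhds (by norm_num : (0:ℝ) < 1/2))
  have hinv2 : ∀ i, p i < 1/2 → (1 - p i)⁻¹ ≤ 2 := by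
    intro i hi
    have h3 : (1:ℝ)/2 ≤ 1 - p i := by linarith
    calc (1 - p i)⁻¹ ≤ ((1:ℝ)/2)⁻¹ := by
          apply inv_anti₀ (by norm_num) h3
      _ = 2 := by norm_num
  have hlog : Summable fun i => Real.log (1 - p i) := by
    apply Summable.of_norm_bounded_eventually (hsum.mul_left 2)
    filter_upwards [hev] with i hi
    rw [Real.norm_eq_abs, abs_of_nonpos (Real.log_nonpos (by linarith [hp0 i]) (by linarith [hp0 i]))]
    have h2 := Real.one_sub_inv_le_log_of_pos (h1p i)
    have h5 : (1 - p i)⁻¹ - 1 = p i * (1 - p i)⁻¹ := by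
      have hne := (h1p i).ne'
      field_simp
      ring
    have h6 : p i * (1 - p i)⁻¹ ≤ p i * 2 :=
      mul_le_mul_of_nonneg_left (hinv2 i hi) (hp0 i)
    linarith
  set L := ∑' i, Real.log (1 - p i) with hL
  have hC : HasProd (fun i => 1 - p i) (Real.exp L) := by
    have h := hasProd_exp_aux hlog.hasSum
    have h2 : (fun i => Real.exp (Real.log (1 - p i))) = fun i => 1 - p i := by
      funext i; rw [Real.exp_log (h1p i)]
    rwa [h2] at h
  set C := Real.exp L with hCdef
  have hCpos : 0 < C := Real.exp_pos _
  set q : ℕ → ℝ := fun i => p i * (1 - p i)⁻¹ with hqdef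
  have hq0 : ∀ i, 0 ≤ q i := fun i => mul_nonneg (hp0 i) (inv_nonneg.2 (h1p i).le)
  have hqsum : Summable q := by
    apply Summable.of_norm_bounded_eventually (hsum.mul_left 2)
    filter_upwards [hev] with i hi
    rw [Real.norm_eq_abs, abs_of_nonneg (hq0 i)]
    calc q i ≤ p i * 2 := mul_le_mul_of_nonneg_left (hinv2 i hi) (hp0 i)
      _ = 2 * p i := by ring
  have hlogq : Summable fun i => Real.log (1 + q i) := by
    apply Summable.of_norm_bounded hqsum
    intro i
    rw [Real.norm_eq_abs, abs_of_nonneg (Real.log_nonneg (by linarith [hq0 i]))]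
    have h := Real.log_le_sub_one_of_pos (show (0:ℝ) < 1 + q i by linarith [hq0 i])
    linarith
  set M := ∑' i, Real.log (1 + q i) with hM
  have hD : HasProd (fun i => 1 + q i) (Real.exp M) := by
    have h := hasProd_exp_aux hlogq.hasSum
    have h2 : (fun i => Real.exp (Real.log (1 + q i))) = fun i => 1 + q i := by
      funext i; rw [Real.exp_log (by linarith [hq0 i])]
    rwa [h2] at h
  set D := Real.exp M with hDdef
  have hCD : C * D = 1 := by
    have h1 : HasProd (fun i => (1 - p i) * (1 + q i)) (C * D) := hC.mul hD
    have h2 : (fun i => (1 - p i) * (1 + q i)) = fun _ => (1:ℝ) := by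
      funext i
      have hne := (h1p i).ne'
      rw [hqdef]
      field_simp
      ring
    rw [h2] at h1
    exact h1.unique hasProd_one
  -- sum over all finsets of products of q
  have hprodadd : ∀ n : ℕ, ∏ i ∈ Finset.range n, (1 + q i)
      = ∑ J ∈ (Finset.range n).powerset, ∏ i ∈ J, q i := by
    intro n
    calc ∏ i ∈ Finset.range n, (1 + q i) = ∏ i ∈ Finset.range n, (q i + 1) := by
          simp [add_comm]
      _ = ∑ J ∈ (Finset.range n).powerset, (∏ i ∈ J, q i) * ∏ i ∈ Finset.range n \ J, (1:ℝ) :=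
          Finset.prod_add q (fun _ => (1:ℝ)) _
      _ = ∑ J ∈ (Finset.range n).powerset, ∏ i ∈ J, q i := by simp
  have hgD : HasSum (fun J : Finset ℕ => ∏ i ∈ J, q i) D := by
    apply hasSum_of_isLUB_of_nonneg
    · intro J; exact Finset.prod_nonneg fun i _ => hq0 i
    constructor
    · rintro x ⟨S, rfl⟩
      set N := (S.sup id).sup id + 1 with hN
      have hsub : S ⊆ (Finset.range N).powerset := by
        intro J hJ
        rw [Finset.mem_powerset]
        intro i hi
        rw [Finset.mem_range]
        have h1 : J ⊆ S.sup id := Finset.le_sup (f := id) hJ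
        have h2 : i ≤ (S.sup id).sup id := Finset.le_sup (f := id) (h1 hi)
        omega
      calc ∑ J ∈ S, ∏ i ∈ J, q i ≤ ∑ J ∈ (Finset.range N).powerset, ∏ i ∈ J, q i :=
            Finset.sum_le_sum_of_subset_of_nonneg hsub
              (fun J _ _ => Finset.prod_nonneg fun i _ => hq0 i)
        _ = ∏ i ∈ Finset.range N, (1 + q i) := (hprodadd N).symm
        _ ≤ D := by
            have hsplit := Summable.sum_add_tsum_subtype_compl hlogq (Finset.range N)
            have hDsplit : D = (∏ i ∈ Finset.range N, (1 + q i)) *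
                Real.exp (∑' k : {k : ℕ // k ∉ (Finset.range N : Finset ℕ)},
                  Real.log (1 + q k.1)) := by
              rw [hDdef, hM, ← hsplit, Real.exp_add]
              congr 1
              rw [Real.exp_sum]
              exact Finset.prod_congr rfl fun i _ =>
                Real.exp_log (by linarith [hq0 i])
            have htail : (1:ℝ) ≤ Real.exp (∑' k : {k : ℕ // k ∉ (Finset.range N : Finset ℕ)},
                Real.log (1 + q k.1)) := by
              exact Real.one_le_exp
                (tsum_nonneg fun k => Real.log_nonneg (by linarith [hq0 k.1]))
            have hprodnn : 0 ≤ ∏ i ∈ Finset.range N, (1 + q i) :=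
              Finset.prod_nonneg fun i _ => by linarith [hq0 i]
            rw [hDsplit]
            exact le_mul_of_one_le_right hprodnn htail
    · rintro x hx
      refine le_of_tendsto hD.tendsto_prod_nat ?_
      filter_upwards with n
      rw [hprodadd n]
      exact hx ⟨(Finset.range n).powerset, rfl⟩
  set W : Finset ℕ → ℝ := fun J =>
    (∏ i ∈ J, p i) * ∏' k : {k : ℕ // k ∉ J}, (1 - p k) with hWdef
  have hWeq : ∀ J, W J = C * ∏ i ∈ J, q i := by
    intro J
    have hprodpos : 0 < ∏ i ∈ J, (1 - p i) := Finset.prod_pos fun i _ => h1p i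
    have hprodexp : ∏ i ∈ J, (1 - p i) = Real.exp (∑ i ∈ J, Real.log (1 - p i)) := by
      rw [Real.exp_sum]
      exact Finset.prod_congr rfl fun i _ => (Real.exp_log (h1p i)).symm
    have hstail : Summable (fun k : {k : ℕ // k ∉ J} => Real.log (1 - p k.1)) :=
      hlog.subtype {k | k ∉ J}
    have htailval : (∏' k : {k : ℕ // k ∉ J}, (1 - p k)) =
        Real.exp (∑' k : {k : ℕ // k ∉ J}, Real.log (1 - p k.1)) := by
      have h := hasProd_exp_aux hstail.hasSum
      have h2 : (fun k : {k : ℕ // k ∉ J} => Real.exp (Real.log (1 - p k.1))) =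
          fun k : {k : ℕ // k ∉ J} => 1 - p k.1 :=
        funext fun k => Real.exp_log (h1p k.1)
      rw [h2] at h
      exact h.tprod_eq
    have hsplit := Summable.sum_add_tsum_subtype_compl hlog J
    have h2 : (∏' k : {k : ℕ // k ∉ J}, (1 - p k)) = C / ∏ i ∈ J, (1 - p i) := by
      rw [htailval, hprodexp, hCdef, hL, ← Real.exp_sub]
      congr 1
      rw [← hsplit]
      ring
    rw [hWdef]
    simp only [h2, hqdef]
    rw [Finset.prod_mul_distrib, Finset.prod_inv_distrib, div_eq_mul_inv]
    ring
  have hW1 : HasSum W 1 := by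
    have h := hgD.mul_left C
    rw [hCD] at h
    have h2 : W = fun J => C * ∏ i ∈ J, q i := funext hWeq
    rw [h2]
    exact h
  have hWnn : ∀ J, 0 ≤ W J := fun J => by
    rw [hWeq]
    exact mul_nonneg hCpos.le (Finset.prod_nonneg fun i _ => hq0 i)
  have hpb : HasSum (pb p) 1 := by
    have h := hW1.tsum_fiberwise Finset.card
    exact h
  have hpbnn : ∀ x, 0 ≤ pb p x := by
    intro x
    have : pb p x = ∑' J : {J : Finset ℕ // J.card = x}, W J.1 := rfl
    rw [this]
    exact tsum_nonneg fun J => hWnn J.1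
  have hpb0 : pb p 0 = C := by
    have h1 : pb p 0 = ∑' J : {J : Finset ℕ // J.card = 0}, W J.1 := rfl
    have h2 : pb p 0 = W ∅ := by
      rw [h1]
      refine tsum_eq_single (⟨∅, Finset.card_empty⟩ : {J : Finset ℕ // J.card = 0}) ?_
      rintro ⟨J, hJ⟩ hne
      exact absurd (Subtype.ext (Finset.card_eq_zero.mp hJ)) hne
    rw [h2, hWeq ∅]
    simp
  refine ⟨hpb, hpbnn, ?_, ?_⟩
  · rw [hpb0]
    refine ge_of_tendsto hC ?_
    filter_upwards with s
    calc 1 - ∑' i, p i ≤ 1 - ∑ i ∈ s, p i := by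
          have := Summable.sum_le_tsum s (fun i _ => hp0 i) hsum
          linarith
      _ ≤ ∏ i ∈ s, (1 - p i) := one_sub_sum_le_prod_aux hp0 (fun i => (hp1 i).le) s
  · rw [hpb0, hCdef]
    apply Real.exp_le_exp.mpr
    calc L ≤ ∑' i, (-p i) := by
          refine Summable.tsum_le_tsum (fun i => ?_) hlog hsum.neg
          have := Real.log_le_sub_one_of_pos (h1p i)
          linarith
      _ = -(∑' i, p i) := by rw [tsum_neg]

set_option maxHeartbeats 2000000 in
/-- `d_TV(Q, Poiss_λ) ≤ min(1, λ) · (1 − ρ(Q, Poiss_λ)⁻¹)`. -/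
theorem stmt_3 (p : ℕ → ℝ) (hp : ∀ i, p i ∈ Set.Ico (0 : ℝ) 1) (hsum : Summable p)
    (l : ℝ) (hl : l = ∑' i, p i) (hlpos : 0 < l) :
    (1 / 2) * ∑' x : ℕ, |pb p x - poissonPMF l x| ≤
      min 1 l * (1 - (⨆ x : ℕ, pb p x / poissonPMF l x)⁻¹) := by
  classical
  obtain ⟨hb, hbnn, hbge, hble⟩ := pb_core hp hsum
  rw [← hl] at hbge hble
  set b := pb p with hbdef
  set π := poissonPMF l with hπdef
  have hπpos : ∀ x, 0 < π x := by
    intro x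
    have hfac : (0:ℝ) < (Nat.factorial x : ℝ) := by
      exact_mod_cast Nat.factorial_pos x
    rw [hπdef]
    unfold poissonPMF
    positivity
  have hπ : HasSum π 1 := by
    have hexp : HasSum (fun n : ℕ => l ^ n / (Nat.factorial n : ℝ)) (Real.exp l) := by
      rw [Real.exp_eq_exp_ℝ]
      exact NormedSpace.expSeries_div_hasSum_exp l
    have h2 := hexp.mul_left (Real.exp (-l))
    have h3 : Real.exp (-l) * Real.exp l = 1 := by
      rw [← Real.exp_add]; simp
    rw [h3] at h2
    have h4 : (fun n : ℕ => Real.exp (-l) * (l ^ n / (Nat.factorial n : ℝ))) = π := by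
      funext n
      rw [hπdef]
      unfold poissonPMF
      ring
    rwa [h4] at h2
  have hb0π : b 0 ≤ π 0 := by
    have : π 0 = Real.exp (-l) := by
      rw [hπdef]; unfold poissonPMF; simp
    rw [this]
    exact hble
  set ρ := ⨆ x : ℕ, b x / π x with hρdef
  set c := ρ⁻¹ with hcdef
  obtain ⟨hc0, hc1, hcb⟩ : 0 ≤ c ∧ c ≤ 1 ∧ ∀ x, c * b x ≤ π x := by
    by_cases hbdd : BddAbove (Set.range fun x : ℕ => b x / π x)
    · have hle : ∀ x, b x ≤ ρ * π x := by
        intro x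
        have h := le_ciSup hbdd x
        rw [hρdef]
        rwa [div_le_iff₀ (hπpos x)] at h
      have hρ1 : (1:ℝ) ≤ ρ := by
        have h2 : ∑' x, b x ≤ ∑' x, ρ * π x :=
          Summable.tsum_le_tsum hle hb.summable (hπ.summable.mul_left ρ)
        rw [hb.tsum_eq, tsum_mul_left, hπ.tsum_eq, mul_one] at h2
        exact h2
      have hρpos : (0:ℝ) < ρ := lt_of_lt_of_le one_pos hρ1
      refine ⟨inv_nonneg.2 hρpos.le, ?_, ?_⟩
      · have h := inv_anti₀ one_pos hρ1
        simpa using h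
      · intro x
        calc c * b x ≤ c * (ρ * π x) := mul_le_mul_of_nonneg_left (hle x) (inv_nonneg.2 hρpos.le)
          _ = π x := by
            rw [hcdef, ← mul_assoc, inv_mul_cancel₀ hρpos.ne', one_mul]
    · have hρ0 : ρ = 0 := Real.iSup_of_not_bddAbove hbdd
      refine ⟨by rw [hcdef, hρ0, inv_zero], by rw [hcdef, hρ0, inv_zero]; norm_num, ?_⟩
      intro x
      rw [hcdef, hρ0, inv_zero, zero_mul]
      exact (hπpos x).le
  -- the function cutting off x = 0
  set f : ℕ → ℝ := fun x => if x = 0 then 0 else b x with hfdef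
  have hf : HasSum f (1 - b 0) := by
    have hg : HasSum (fun x : ℕ => if x = 0 then b 0 else 0) (b 0) := hasSum_ite_eq 0 (b 0)
    have h := hb.sub hg
    have h2 : (fun x : ℕ => b x - if x = 0 then b 0 else 0) = f := by
      funext x
      by_cases hx : x = 0 <;> simp [hfdef, hx]
    rwa [h2] at h
  have hRHS : HasSum (fun x => 2 * ((1 - c) * f x) - (b x - π x)) (2 * ((1 - c) * (1 - b 0))) := by
    have h1 := (hf.mul_left (1 - c)).mul_left 2
    have h2 : HasSum (fun x => b x - π x) 0 := by
      have h3 := hb.sub hπ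
      norm_num at h3
      exact h3
    simpa using h1.sub h2
  have hpt : ∀ x, |b x - π x| ≤ 2 * ((1 - c) * f x) - (b x - π x) := by
    intro x
    rcases eq_or_ne x 0 with hx | hx
    · subst hx
      have hf0 : f 0 = 0 := by simp [hfdef]
      rw [hf0]
      simp only [mul_zero]
      rw [abs_of_nonpos (by linarith [hb0π] : b 0 - π 0 ≤ 0)]
      linarith
    · have hfx : f x = b x := by rw [hfdef]; simp [hx]
      rw [hfx]
      have h1 : 0 ≤ (1 - c) * b x := mul_nonneg (by linarith) (hbnn x)
      rcases le_or_gt (b x) (π x) with h | h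
      · rw [abs_of_nonpos (by linarith)]
        linarith
      · rw [abs_of_pos (by linarith)]
        linarith [hcb x]
  have habs : Summable fun x => |b x - π x| := (hb.summable.sub hπ.summable).abs
  have hmain : ∑' x, |b x - π x| ≤ 2 * ((1 - c) * (1 - b 0)) := by
    have h := Summable.tsum_le_tsum hpt habs hRHS.summable
    rw [hRHS.tsum_eq] at h
    linarith
  have hb0nn : 0 ≤ b 0 := hbnn 0
  have hmin : 1 - b 0 ≤ min 1 l := le_min (by linarith) (by linarith)
  calc (1/2 : ℝ) * ∑' x, |b x - π x| ≤ (1/2) * (2 * ((1 - c) * (1 - b 0))) := by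
        apply mul_le_mul_of_nonneg_left hmain
        norm_num
    _ = (1 - c) * (1 - b 0) := by ring
    _ ≤ (1 - c) * min 1 l := mul_le_mul_of_nonneg_left hmin (by linarith)
    _ = min 1 l * (1 - c) := by ring
end

section
/- If λ ≤ 1, then d_TV(Q, Poiss_λ) ≤ λ (1 − e^{−Δ}) ≤ Σ_{i≥1} p_i². -/
open scoped BigOperators

section LeCamAux

variable {q : ℕ → ℝ}


noncomputable def rr (q : ℕ → ℝ) (i : ℕ) : ℝ := q i / (1 - q i)

noncomputable def PP (q : ℕ → ℝ) : ℝ := ∏' k, (1 - q k)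

lemma rr_nonneg (hq : ∀ i, 0 ≤ q i ∧ q i < 1) (i : ℕ) : 0 ≤ rr q i :=
  div_nonneg (hq i).1 (by linarith [(hq i).2])

lemma summable_rr (hq : ∀ i, 0 ≤ q i ∧ q i < 1) (hs : Summable q) : Summable (rr q) := by
  obtain ⟨N, hN⟩ := (Metric.tendsto_atTop.mp hs.tendsto_atTop_zero) (1/2) (by norm_num)
  rw [← summable_nat_add_iff N]
  apply Summable.of_nonneg_of_le (fun n => rr_nonneg hq _)
    (g := fun n => rr q (n + N)) (f := fun n => 2 * q (n + N))
  · intro n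
    have h1 : q (n + N) ≤ 1/2 := by
      have := hN (n + N) (by omega)
      rw [Real.dist_eq, sub_zero, abs_of_nonneg (hq _).1] at this
      linarith
    have h2 : (1:ℝ)/2 ≤ 1 - q (n + N) := by linarith
    calc rr q (n + N) ≤ q (n + N) / (1/2) :=
          div_le_div_of_nonneg_left (hq _).1 (by norm_num) h2
      _ = 2 * q (n + N) := by ring
  · exact ((summable_nat_add_iff N).mpr hs).mul_left 2

lemma abs_log_one_sub_le (hq : ∀ i, 0 ≤ q i ∧ q i < 1) (i : ℕ) :
    |Real.log (1 - q i)| ≤ rr q i := by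
  have h1 : 0 < 1 - q i := by linarith [(hq i).2]
  have h2 : Real.log (1 - q i) ≤ 0 :=
    Real.log_nonpos (by linarith [(hq i).1]) (by linarith [(hq i).1])
  rw [abs_of_nonpos h2]
  have h3 : Real.log (1 - q i)⁻¹ ≤ (1 - q i)⁻¹ - 1 :=
    Real.log_le_sub_one_of_pos (inv_pos.mpr h1)
  rw [Real.log_inv] at h3
  have h4 : (1 - q i)⁻¹ - 1 = rr q i := by
    rw [rr]
    field_simp
    ring
  linarith

lemma summable_log_one_sub (hq : ∀ i, 0 ≤ q i ∧ q i < 1) (hs : Summable q) :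
    Summable (fun k => Real.log (1 - q k)) := by
  apply Summable.of_abs
  exact Summable.of_nonneg_of_le (fun i => abs_nonneg _) (abs_log_one_sub_le hq)
    (summable_rr hq hs)

lemma hasProd_one_sub (hq : ∀ i, 0 ≤ q i ∧ q i < 1) (hs : Summable q) :
    HasProd (fun k => 1 - q k) (Real.exp (∑' k, Real.log (1 - q k))) := by
  apply HasProd.congr_fun ((summable_log_one_sub hq hs).hasSum.rexp)
  intro k
  exact (Real.exp_log (by linarith [(hq k).2])).symm

lemma multipliable_one_sub (hq : ∀ i, 0 ≤ q i ∧ q i < 1) (hs : Summable q) :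
    Multipliable (fun k => 1 - q k) :=
  ⟨_, hasProd_one_sub hq hs⟩

lemma PP_pos (hq : ∀ i, 0 ≤ q i ∧ q i < 1) (hs : Summable q) : 0 < PP q := by
  rw [PP, (hasProd_one_sub hq hs).tprod_eq]
  exact Real.exp_pos _

lemma hasProd_one_sub_subtype (hq : ∀ i, 0 ≤ q i ∧ q i < 1) (hs : Summable q) (S : Set ℕ) :
    HasProd (fun k : S => 1 - q (k : ℕ)) (Real.exp (∑' k : S, Real.log (1 - q (k : ℕ)))) := by
  have hsl : Summable (fun k : S => Real.log (1 - q (k : ℕ))) :=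
    (summable_log_one_sub hq hs).subtype S
  apply HasProd.congr_fun hsl.hasSum.rexp
  intro k
  exact (Real.exp_log (by linarith [(hq (k : ℕ)).2])).symm

lemma tprod_one_sub_subtype_pos (hq : ∀ i, 0 ≤ q i ∧ q i < 1) (hs : Summable q) (S : Set ℕ) :
    0 < ∏' k : S, (1 - q (k : ℕ)) := by
  rw [(hasProd_one_sub_subtype hq hs S).tprod_eq]
  exact Real.exp_pos _

lemma prod_one_sub_pos (hq : ∀ i, 0 ≤ q i ∧ q i < 1) (J : Finset ℕ) :
    0 < ∏ i ∈ J, (1 - q i) :=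
  Finset.prod_pos (fun i _ => by linarith [(hq i).2])

lemma tprod_compl (hq : ∀ i, 0 ≤ q i ∧ q i < 1) (hs : Summable q) (J : Finset ℕ) :
    (∏' k : {k : ℕ // k ∉ J}, (1 - q (k : ℕ))) = PP q / ∏ i ∈ J, (1 - q i) := by
  have hlog := summable_log_one_sub hq hs
  have h := Summable.sum_add_tsum_compl (s := J) hlog
  have e : ↑(↑J : Set ℕ)ᶜ ≃ {k : ℕ // k ∉ J} :=
    Equiv.subtypeEquivRight (fun k => by simp)
  have he : (∑' k : ↑(↑J : Set ℕ)ᶜ, Real.log (1 - q (k : ℕ)))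
      = ∑' k : {k : ℕ // k ∉ J}, Real.log (1 - q (k : ℕ)) :=
    e.tsum_eq (fun k : {k : ℕ // k ∉ J} => Real.log (1 - q (k : ℕ))) |>.symm ▸
      (Equiv.tsum_eq e (fun k : {k : ℕ // k ∉ J} => Real.log (1 - q (k : ℕ))))
  rw [he] at h
  have hP : PP q = Real.exp (∑' k, Real.log (1 - q k)) := (hasProd_one_sub hq hs).tprod_eq
  have hplus : (∏' k : {k : ℕ // k ∉ J}, (1 - q (k : ℕ)))
      = Real.exp (∑' k : {k : ℕ // k ∉ J}, Real.log (1 - q (k : ℕ))) :=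
    (hasProd_one_sub_subtype hq hs {k : ℕ | k ∉ J}).tprod_eq
  have hprod : (∏ i ∈ J, (1 - q i)) = Real.exp (∑ i ∈ J, Real.log (1 - q i)) := by
    rw [Real.exp_sum]
    exact Finset.prod_congr rfl (fun i _ => (Real.exp_log (by linarith [(hq i).2])).symm)
  rw [hplus, hP, hprod, ← Real.exp_sub]
  congr 1
  linarith [h]


noncomputable def EE (q : ℕ → ℝ) (x : ℕ) : ℝ :=
  ∑' J : {J : Finset ℕ // J.card = x}, ∏ i ∈ (J : Finset ℕ), rr q i

lemma pb_eq (hq : ∀ i, 0 ≤ q i ∧ q i < 1) (hs : Summable q) (x : ℕ) :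
    pb q x = PP q * EE q x := by
  rw [pb, EE, ← tsum_mul_left]
  apply tsum_congr
  intro J
  rw [tprod_compl hq hs (J : Finset ℕ)]
  have hrw : ∏ i ∈ (J : Finset ℕ), rr q i
      = (∏ i ∈ (J : Finset ℕ), q i) / ∏ i ∈ (J : Finset ℕ), (1 - q i) := by
    rw [← Finset.prod_div_distrib]
    rfl
  rw [hrw]
  have hne : (∏ i ∈ (J : Finset ℕ), (1 - q i)) ≠ 0 := (prod_one_sub_pos hq _).ne'
  field_simp

noncomputable def Gq (q : ℕ → ℝ) : Finset ℕ → ENNReal :=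
  fun J => ∏ i ∈ J, ENNReal.ofReal (rr q i)

lemma sum_powerset_G (q : ℕ → ℝ) (n : ℕ) :
    ∑ J ∈ (Finset.range n).powerset, Gq q J
      = ∏ k ∈ Finset.range n, (1 + ENNReal.ofReal (rr q k)) := by
  have := Finset.prod_add (fun k => ENNReal.ofReal (rr q k)) (fun _ => (1:ENNReal))
    (Finset.range n)
  simp only [Finset.prod_const_one, mul_one] at this
  simp only [Gq]
  rw [← this]
  apply Finset.prod_congr rfl
  intro k _
  rw [add_comm]

lemma tsum_G (q : ℕ → ℝ) :
    ∑' J : Finset ℕ, Gq q J = ⨆ n, ∏ k ∈ Finset.range n, (1 + ENNReal.ofReal (rr q k)) := by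
  apply le_antisymm
  · rw [ENNReal.tsum_eq_iSup_sum]
    apply iSup_le
    intro s
    set n := (s.sup (fun J => J.sup id)) + 1 with hn
    have hsub : s ⊆ (Finset.range n).powerset := by
      intro J hJ
      rw [Finset.mem_powerset]
      intro i hi
      rw [Finset.mem_range]
      have h1 : i ≤ J.sup id := Finset.le_sup (f := id) hi
      have h2 : J.sup id ≤ s.sup (fun J => J.sup id) := Finset.le_sup hJ
      omega
    calc ∑ J ∈ s, Gq q J ≤ ∑ J ∈ (Finset.range n).powerset, Gq q J :=
          Finset.sum_le_sum_of_subset hsub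
      _ = ∏ k ∈ Finset.range n, (1 + ENNReal.ofReal (rr q k)) := sum_powerset_G q n
      _ ≤ _ := le_iSup (f := fun n => ∏ k ∈ Finset.range n, (1 + ENNReal.ofReal (rr q k))) n
  · apply iSup_le
    intro n
    rw [← sum_powerset_G]
    exact ENNReal.sum_le_tsum _

lemma PP_mul_prod_tail (hq : ∀ i, 0 ≤ q i ∧ q i < 1) (hs : Summable q) (n : ℕ) :
    PP q = (∏ k ∈ Finset.range n, (1 - q k))
      * ∏' k : {k : ℕ // k ∉ Finset.range n}, (1 - q (k : ℕ)) := by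
  rw [tprod_compl hq hs]
  rw [mul_div_assoc', mul_comm, mul_div_assoc, div_self (prod_one_sub_pos hq _).ne', mul_one]

lemma tail_nonneg (hq : ∀ i, 0 ≤ q i ∧ q i < 1) (hs : Summable q) (n : ℕ) :
    0 ≤ ∏' k : {k : ℕ // k ∉ Finset.range n}, (1 - q (k : ℕ)) := by
  rw [tprod_compl hq hs]
  exact div_nonneg (PP_pos hq hs).le (prod_one_sub_pos hq _).le

lemma tail_le_succ (hq : ∀ i, 0 ≤ q i ∧ q i < 1) (hs : Summable q) (n : ℕ) :
    (∏' k : {k : ℕ // k ∉ Finset.range n}, (1 - q (k : ℕ)))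
      ≤ ∏' k : {k : ℕ // k ∉ Finset.range (n+1)}, (1 - q (k : ℕ)) := by
  rw [tprod_compl hq hs, tprod_compl hq hs]
  rw [div_le_div_iff₀ (prod_one_sub_pos hq _) (prod_one_sub_pos hq _)]
  have h : (∏ i ∈ Finset.range (n+1), (1 - q i))
      = (∏ i ∈ Finset.range n, (1 - q i)) * (1 - q n) := Finset.prod_range_succ _ n
  rw [h]
  have h2 : PP q * ((∏ i ∈ Finset.range n, (1 - q i)) * (1 - q n))
      ≤ PP q * ((∏ i ∈ Finset.range n, (1 - q i)) * 1) := by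
    apply mul_le_mul_of_nonneg_left _ (PP_pos hq hs).le
    apply mul_le_mul_of_nonneg_left _ (prod_one_sub_pos hq _).le
    linarith [(hq n).1]
  calc PP q * ((∏ i ∈ Finset.range n, (1 - q i)) * (1 - q n))
      ≤ PP q * ((∏ i ∈ Finset.range n, (1 - q i)) * 1) := h2
    _ = PP q * ∏ i ∈ Finset.range n, (1 - q i) := by ring

lemma tail_tendsto_one (hq : ∀ i, 0 ≤ q i ∧ q i < 1) (hs : Summable q) :
    Filter.Tendsto (fun n => ∏' k : {k : ℕ // k ∉ Finset.range n}, (1 - q (k : ℕ)))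
      Filter.atTop (nhds 1) := by
  have h1 : Filter.Tendsto (fun n => ∏ k ∈ Finset.range n, (1 - q k))
      Filter.atTop (nhds (PP q)) :=
    HasProd.tendsto_prod_nat ((hasProd_one_sub hq hs).multipliable.hasProd)
  have h2 : Filter.Tendsto (fun n => PP q / ∏ k ∈ Finset.range n, (1 - q k))
      Filter.atTop (nhds (PP q / PP q)) :=
    Filter.Tendsto.div tendsto_const_nhds h1 (PP_pos hq hs).ne'
  rw [div_self (PP_pos hq hs).ne'] at h2
  apply h2.congr
  intro n
  rw [tprod_compl hq hs]

lemma key_prod (hq : ∀ i, 0 ≤ q i ∧ q i < 1) (hs : Summable q) (n : ℕ) :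
    ENNReal.ofReal (PP q) * ∏ k ∈ Finset.range n, (1 + ENNReal.ofReal (rr q k))
      = ENNReal.ofReal (∏' k : {k : ℕ // k ∉ Finset.range n}, (1 - q (k : ℕ))) := by
  have h1 : ∀ k ∈ Finset.range n, (1 + ENNReal.ofReal (rr q k)) = ENNReal.ofReal (1 + rr q k) := by
    intro k _
    rw [ENNReal.ofReal_add (by norm_num) (rr_nonneg hq k), ENNReal.ofReal_one]
  rw [Finset.prod_congr rfl h1, ← ENNReal.ofReal_prod_of_nonneg
    (fun i _ => by linarith [rr_nonneg hq i]),
    ← ENNReal.ofReal_mul (PP_pos hq hs).le]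
  congr 1
  have h3 : ∀ k, (1 - q k) * (1 + rr q k) = 1 := by
    intro k
    have : (1 : ℝ) - q k ≠ 0 := (by linarith [(hq k).2] : (0:ℝ) < 1 - q k).ne'
    rw [rr, mul_add, mul_one, mul_div_assoc', mul_comm (1 - q k) (q k), mul_div_assoc,
      div_self this, mul_one]
    ring
  rw [PP_mul_prod_tail hq hs n]
  rw [mul_comm (∏ k ∈ Finset.range n, (1 - q k)) _, mul_assoc, ← Finset.prod_mul_distrib]
  have : ∏ k ∈ Finset.range n, (1 - q k) * (1 + rr q k) = 1 := by
    rw [Finset.prod_congr rfl (fun k _ => h3 k), Finset.prod_const_one]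
  rw [this, mul_one]

lemma total_G (hq : ∀ i, 0 ≤ q i ∧ q i < 1) (hs : Summable q) :
    ENNReal.ofReal (PP q) * ∑' J : Finset ℕ, Gq q J = 1 := by
  rw [tsum_G, ENNReal.mul_iSup]
  have hmono : Monotone (fun n => ENNReal.ofReal
      (∏' k : {k : ℕ // k ∉ Finset.range n}, (1 - q (k : ℕ)))) := by
    apply monotone_nat_of_le_succ
    intro n
    exact ENNReal.ofReal_le_ofReal (tail_le_succ hq hs n)
  have hT : Filter.Tendsto (fun n => ENNReal.ofReal
      (∏' k : {k : ℕ // k ∉ Finset.range n}, (1 - q (k : ℕ))))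
      Filter.atTop (nhds (ENNReal.ofReal 1)) :=
    (ENNReal.continuous_ofReal.tendsto 1).comp (tail_tendsto_one hq hs)
  have hsup := tendsto_atTop_iSup hmono
  have := tendsto_nhds_unique hT hsup
  simp only [ENNReal.ofReal_one] at this
  have hcongr : (⨆ n, ENNReal.ofReal (PP q) * ∏ k ∈ Finset.range n, (1 + ENNReal.ofReal (rr q k)))
      = ⨆ n, ENNReal.ofReal (∏' k : {k : ℕ // k ∉ Finset.range n}, (1 - q (k : ℕ))) := by
    congr 1
    funext n
    exact key_prod hq hs n
  rw [hcongr]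
  exact this.symm


lemma tsum_G_ne_top (hq : ∀ i, 0 ≤ q i ∧ q i < 1) (hs : Summable q) :
    (∑' J : Finset ℕ, Gq q J) ≠ ⊤ := by
  intro h
  have h2 := total_G hq hs
  rw [h, ENNReal.mul_top] at h2
  · exact (ENNReal.top_ne_one) h2
  · simp [ENNReal.ofReal_eq_zero, not_le.mpr (PP_pos hq hs)]

lemma summable_prod_rr (hq : ∀ i, 0 ≤ q i ∧ q i < 1) (hs : Summable q) :
    Summable (fun J : Finset ℕ => ∏ i ∈ J, rr q i) := by
  have := ENNReal.summable_toReal (tsum_G_ne_top hq hs)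
  apply this.congr
  intro J
  simp only [Gq, ENNReal.toReal_prod]
  exact Finset.prod_congr rfl (fun i _ => ENNReal.toReal_ofReal (rr_nonneg hq i))

lemma tsum_prod_rr (hq : ∀ i, 0 ≤ q i ∧ q i < 1) (hs : Summable q) :
    PP q * ∑' J : Finset ℕ, ∏ i ∈ J, rr q i = 1 := by
  have h1 : ENNReal.ofReal (∑' J : Finset ℕ, ∏ i ∈ J, rr q i) = ∑' J : Finset ℕ, Gq q J := by
    rw [ENNReal.ofReal_tsum_of_nonneg (fun J => Finset.prod_nonneg (fun i _ => rr_nonneg hq i))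
      (summable_prod_rr hq hs)]
    apply tsum_congr
    intro J
    rw [Gq, ENNReal.ofReal_prod_of_nonneg (fun i _ => rr_nonneg hq i)]
  have h2 := total_G hq hs
  rw [← h1, ← ENNReal.ofReal_mul (PP_pos hq hs).le] at h2
  have h3 : (0:ℝ) ≤ PP q * ∑' J : Finset ℕ, ∏ i ∈ J, rr q i :=
    mul_nonneg (PP_pos hq hs).le (tsum_nonneg (fun J => Finset.prod_nonneg
      (fun i _ => rr_nonneg hq i)))
  rw [← ENNReal.ofReal_one] at h2
  exact (ENNReal.ofReal_eq_ofReal_iff h3 (by norm_num)).mp h2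

def sigmaFinsetEquiv : (Σ x : ℕ, {J : Finset ℕ // J.card = x}) ≃ Finset ℕ where
  toFun a := a.2.1
  invFun J := ⟨J.card, J, rfl⟩
  left_inv := by rintro ⟨x, J, rfl⟩; rfl
  right_inv J := rfl

lemma summable_sigma_rr (hq : ∀ i, 0 ≤ q i ∧ q i < 1) (hs : Summable q) :
    Summable (fun a : (Σ x : ℕ, {J : Finset ℕ // J.card = x}) =>
      ∏ i ∈ (a.2 : Finset ℕ), rr q i) :=
  (Equiv.summable_iff sigmaFinsetEquiv).mpr (summable_prod_rr hq hs)

lemma summable_EE_inner (hq : ∀ i, 0 ≤ q i ∧ q i < 1) (hs : Summable q) (x : ℕ) :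
    Summable (fun J : {J : Finset ℕ // J.card = x} => ∏ i ∈ (J : Finset ℕ), rr q i) :=
  (summable_sigma_rr hq hs).sigma_factor x

lemma EE_nonneg (hq : ∀ i, 0 ≤ q i ∧ q i < 1) (x : ℕ) : 0 ≤ EE q x :=
  tsum_nonneg (fun J => Finset.prod_nonneg (fun i _ => rr_nonneg hq i))

lemma summable_EE (hq : ∀ i, 0 ≤ q i ∧ q i < 1) (hs : Summable q) :
    Summable (EE q) := by
  have := (summable_sigma_rr hq hs).sigma (f := fun a : (Σ x : ℕ, {J : Finset ℕ // J.card = x}) =>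
      ∏ i ∈ (a.2 : Finset ℕ), rr q i)
  exact this

/-- truncation -/
noncomputable def tq (q : ℕ → ℝ) (n : ℕ) : ℕ → ℝ := fun i => if i < n then q i else 0

lemma tq_cond (hq : ∀ i, 0 ≤ q i ∧ q i < 1) (n : ℕ) : ∀ i, 0 ≤ tq q n i ∧ tq q n i < 1 := by
  intro i
  unfold tq
  split
  · exact hq i
  · norm_num

lemma tq_summable (hs : Summable q) (n : ℕ) : Summable (tq q n) := by
  apply summable_of_finite_support
  apply Set.Finite.subset (Set.finite_Iio n)
  intro i hi
  simp only [Function.mem_support, tq] at hi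
  by_contra h
  simp only [Set.mem_Iio, not_lt] at h
  exact hi (by rw [if_neg (by omega)])

lemma PP_tq (hq : ∀ i, 0 ≤ q i ∧ q i < 1) (n : ℕ) :
    PP (tq q n) = ∏ k ∈ Finset.range n, (1 - q k) := by
  rw [PP]
  rw [tprod_eq_prod (s := Finset.range n) (f := fun k => 1 - tq q n k)]
  · apply Finset.prod_congr rfl
    intro k hk
    rw [Finset.mem_range] at hk
    simp [tq, hk]
  · intro b hb
    rw [Finset.mem_range] at hb
    simp [tq, hb]

lemma rr_tq (n : ℕ) (i : ℕ) (h : i < n) : rr (tq q n) i = rr q i := by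
  simp [rr, tq, h]

lemma rr_tq_zero (n : ℕ) (i : ℕ) (h : ¬ i < n) : rr (tq q n) i = 0 := by
  simp [rr, tq, h]

lemma EE_tq (hq : ∀ i, 0 ≤ q i ∧ q i < 1) (n x : ℕ) :
    EE (tq q n) x = ∑ J ∈ (Finset.range n).powersetCard x, ∏ i ∈ J, rr q i := by
  rw [EE]
  rw [tsum_eq_sum (s := ((Finset.range n).powerset).subtype (fun J => J.card = x))]
  · rw [Finset.sum_subtype_eq_sum_filter (fun J => ∏ i ∈ J, rr (tq q n) i)
      (p := fun J => J.card = x) (s := (Finset.range n).powerset)]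
    rw [Finset.powersetCard_eq_filter]
    apply Finset.sum_congr rfl
    intro J hJ
    simp only [Finset.mem_filter, Finset.mem_powerset] at hJ
    apply Finset.prod_congr rfl
    intro i hi
    have : i < n := Finset.mem_range.mp (hJ.1 hi)
    exact rr_tq n i this
  · intro J hJ
    rw [Finset.mem_subtype, Finset.mem_powerset] at hJ
    obtain ⟨i, hiJ, hin⟩ := Finset.not_subset.mp hJ
    apply Finset.prod_eq_zero hiJ
    exact rr_tq_zero n i (fun h => hin (Finset.mem_range.mpr h))


end LeCamAux

section Conv

noncomputable def bern (a : ℝ) (x : ℕ) : ℝ := if x = 0 then 1 - a else if x = 1 then a else 0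

noncomputable def conv (f g : ℕ → ℝ) (x : ℕ) : ℝ :=
  ∑ ab ∈ Finset.HasAntidiagonal.antidiagonal x, f ab.1 * g ab.2

lemma conv_comm (f g : ℕ → ℝ) : conv f g = conv g f := by
  funext x
  rw [conv, conv]
  conv_rhs => rw [← Finset.HasAntidiagonal.map_swap_antidiagonal, Finset.sum_map]
  apply Finset.sum_congr rfl
  intro ab _
  simp [mul_comm]

lemma conv_sub (f g h : ℕ → ℝ) :
    (fun x => conv f h x - conv g h x) = conv (fun y => f y - g y) h := by
  funext x
  rw [conv, conv, conv, ← Finset.sum_sub_distrib]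
  apply Finset.sum_congr rfl
  intro ab _
  ring

lemma conv_bern_zero (f : ℕ → ℝ) (a : ℝ) : conv f (bern a) 0 = (1 - a) * f 0 := by
  rw [conv]
  simp [Finset.Nat.antidiagonal_zero, bern, mul_comm]

lemma conv_bern_succ (f : ℕ → ℝ) (a : ℝ) (x : ℕ) :
    conv f (bern a) (x + 1) = (1 - a) * f (x + 1) + a * f x := by
  rw [conv, Finset.Nat.sum_antidiagonal_eq_sum_range_succ_mk]
  have h : ∀ k ∈ Finset.range x, f k * bern a (x + 1 - k) = 0 := by
    intro k hk
    rw [Finset.mem_range] at hk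
    have h1 : x + 1 - k ≠ 0 := by omega
    have h2 : x + 1 - k ≠ 1 := by omega
    simp [bern, h1, h2]
  rw [Finset.sum_range_succ, Finset.sum_range_succ, Finset.sum_eq_zero h]
  have h1 : x + 1 - x = 1 := by omega
  simp [bern, h1]
  ring

/-- Poisson convolution identity. -/
lemma conv_poisson (a b : ℝ) : conv (poissonPMF a) (poissonPMF b) = poissonPMF (a + b) := by
  funext x
  rw [conv, Finset.Nat.sum_antidiagonal_eq_sum_range_succ_mk, poissonPMF, neg_add,
    Real.exp_add, add_pow, Finset.mul_sum, Finset.sum_div]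
  apply Finset.sum_congr rfl
  intro k hk
  rw [Finset.mem_range] at hk
  have hk' : k ≤ x := by omega
  simp only
  rw [poissonPMF, poissonPMF]
  have hcast : (x.choose k : ℝ)
      = (x.factorial : ℝ) / ((k.factorial : ℝ) * ((x - k).factorial : ℝ)) :=
    Nat.cast_choose ℝ hk'
  have hkf : (k.factorial : ℝ) ≠ 0 := Nat.cast_ne_zero.mpr k.factorial_ne_zero
  have hxkf : ((x - k).factorial : ℝ) ≠ 0 := Nat.cast_ne_zero.mpr (x - k).factorial_ne_zero
  have hxf : (x.factorial : ℝ) ≠ 0 := Nat.cast_ne_zero.mpr x.factorial_ne_zero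
  rw [hcast]
  field_simp

end Conv

section Bfin

variable {q : ℕ → ℝ}

noncomputable def bfin (q : ℕ → ℝ) (n x : ℕ) : ℝ :=
  ∑ J ∈ (Finset.range n).powersetCard x, (∏ i ∈ J, q i) * ∏ k ∈ Finset.range n \ J, (1 - q k)

lemma bfin_zero (q : ℕ → ℝ) (x : ℕ) : bfin q 0 x = if x = 0 then 1 else 0 := by
  rw [bfin]
  rcases x with _ | x
  · simp
  · rw [Finset.range_zero]
    have hempty : (∅ : Finset ℕ).powersetCard (x + 1) = ∅ := by
      ext J
      simp only [Finset.mem_powersetCard, Finset.subset_empty, Finset.notMem_empty, iff_false,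
        not_and]
      rintro rfl
      simp
    rw [hempty, Finset.sum_empty]
    simp

lemma bfin_succ (q : ℕ → ℝ) (n x : ℕ) :
    bfin q (n + 1) x = conv (bfin q n) (bern (q n)) x := by
  have hnotmem : n ∉ Finset.range n := by simp
  rcases x with _ | x
  · rw [conv_bern_zero, bfin, bfin]
    simp only [Finset.powersetCard_zero]
    rw [Finset.sum_singleton, Finset.sum_singleton]
    simp only [Finset.prod_empty, one_mul, Finset.sdiff_empty]
    rw [Finset.range_add_one, Finset.prod_insert hnotmem]
  · rw [conv_bern_succ, bfin, bfin, bfin]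
    rw [Finset.range_add_one, Finset.powersetCard_succ_insert hnotmem]
    rw [Finset.sum_union, Finset.sum_image]
    · congr 1
      · -- J ⊆ range n, card x+1;  insert n (range n) \ J = insert n (range n \ J)
        rw [Finset.mul_sum]
        apply Finset.sum_congr rfl
        intro J hJ
        rw [Finset.mem_powersetCard] at hJ
        have hnJ : n ∉ J := fun h => hnotmem (hJ.1 h)
        have hd : insert n (Finset.range n) \ J = insert n (Finset.range n \ J) := by
          ext k
          simp only [Finset.mem_sdiff, Finset.mem_insert, Finset.mem_range]
          constructor
          · rintro ⟨hk | hk, hkJ⟩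
            · exact Or.inl hk
            · exact Or.inr ⟨hk, hkJ⟩
          · rintro (rfl | ⟨hk, hkJ⟩)
            · exact ⟨Or.inl rfl, hnJ⟩
            · exact ⟨Or.inr hk, hkJ⟩
        rw [hd, Finset.prod_insert (by simp)]
        ring
      · -- J = insert n K
        rw [Finset.mul_sum]
        apply Finset.sum_congr rfl
        intro J hJ
        rw [Finset.mem_powersetCard] at hJ
        have hnJ : n ∉ J := fun h => hnotmem (hJ.1 h)
        have h1 : insert n (Finset.range n) \ insert n J = Finset.range n \ J := by
          ext k
          simp only [Finset.mem_sdiff, Finset.mem_insert, Finset.mem_range]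
          constructor
          · rintro ⟨hk | hk, hkJ⟩
            · exact absurd (Or.inl hk) hkJ
            · exact ⟨hk, fun h => hkJ (Or.inr h)⟩
          · rintro ⟨hk, hkJ⟩
            exact ⟨Or.inr hk, by rintro (rfl | h); omega; exact hkJ h⟩
        rw [h1, Finset.prod_insert hnJ]
        ring
    · intro J hJ K hK hJK
      rw [Finset.mem_coe, Finset.mem_powersetCard] at hJ hK
      have hnJ : n ∉ J := fun h => hnotmem (hJ.1 h)
      have hnK : n ∉ K := fun h => hnotmem (hK.1 h)
      have := congrArg (fun s => Finset.erase s n) hJK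
      simpa [Finset.erase_insert hnJ, Finset.erase_insert hnK] using this
    · -- disjoint
      rw [Finset.disjoint_left]
      intro J hJ hJ2
      rw [Finset.mem_powersetCard] at hJ
      have hnJ : n ∉ J := fun h => hnotmem (hJ.1 h)
      rw [Finset.mem_image] at hJ2
      obtain ⟨K, _, rfl⟩ := hJ2
      exact hnJ (Finset.mem_insert_self n K)

end Bfin

noncomputable def N1 (f : ℕ → ℝ) : ENNReal := ∑' x, ENNReal.ofReal |f x|
noncomputable def ed (f g : ℕ → ℝ) : ENNReal := N1 (fun x => f x - g x)

lemma ed_triangle (f g h : ℕ → ℝ) : ed f h ≤ ed f g + ed g h := by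
  rw [ed, ed, ed, N1, N1, N1, ← ENNReal.tsum_add]
  apply ENNReal.tsum_le_tsum
  intro x
  rw [← ENNReal.ofReal_add (abs_nonneg _) (abs_nonneg _)]
  apply ENNReal.ofReal_le_ofReal
  exact abs_sub_le (f x) (g x) (h x)

lemma N1_conv_le (f g : ℕ → ℝ) : N1 (conv f g) ≤ N1 f * N1 g := by
  rw [N1]
  have step1 : ∀ x : ℕ, ENNReal.ofReal |conv f g x|
      ≤ ∑ ab ∈ Finset.HasAntidiagonal.antidiagonal x, ENNReal.ofReal |f ab.1| * ENNReal.ofReal |g ab.2| := by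
    intro x
    have h1 : |conv f g x| ≤ ∑ ab ∈ Finset.HasAntidiagonal.antidiagonal x, |f ab.1| * |g ab.2| := by
      rw [conv]
      refine (Finset.abs_sum_le_sum_abs _ _).trans ?_
      apply Finset.sum_le_sum
      intro ab _
      rw [abs_mul]
    refine (ENNReal.ofReal_le_ofReal h1).trans ?_
    rw [ENNReal.ofReal_sum_of_nonneg (fun ab _ => mul_nonneg (abs_nonneg _) (abs_nonneg _))]
    apply Finset.sum_le_sum
    intro ab _
    rw [ENNReal.ofReal_mul (abs_nonneg _)]
  refine (ENNReal.tsum_le_tsum step1).trans ?_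
  have step2 : ∑' x : ℕ, (∑ ab ∈ Finset.HasAntidiagonal.antidiagonal x,
        ENNReal.ofReal |f ab.1| * ENNReal.ofReal |g ab.2|)
      = ∑' p : ℕ × ℕ, ENNReal.ofReal |f p.1| * ENNReal.ofReal |g p.2| := by
    have h3 : ∀ x : ℕ, (∑ ab ∈ Finset.HasAntidiagonal.antidiagonal x,
        ENNReal.ofReal |f ab.1| * ENNReal.ofReal |g ab.2|)
        = ∑' ab : (Finset.HasAntidiagonal.antidiagonal x : Finset (ℕ × ℕ)),
            ENNReal.ofReal |f (ab : ℕ × ℕ).1| * ENNReal.ofReal |g (ab : ℕ × ℕ).2| :=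
      fun x => (Finset.tsum_subtype _ _).symm
    rw [tsum_congr h3]
    have h4 := (ENNReal.tsum_sigma' (fun p : (Σ x : ℕ, {ab : ℕ × ℕ // ab ∈ Finset.HasAntidiagonal.antidiagonal x}) =>
      ENNReal.ofReal |f (p.2 : ℕ × ℕ).1| * ENNReal.ofReal |g (p.2 : ℕ × ℕ).2|)).symm
    refine h4.trans ?_
    exact Finset.HasAntidiagonal.sigmaAntidiagonalEquivProd.tsum_eq
      (fun p : ℕ × ℕ => ENNReal.ofReal |f p.1| * ENNReal.ofReal |g p.2|)
  rw [step2]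
  rw [ENNReal.tsum_prod (f := fun a b => ENNReal.ofReal |f a| * ENNReal.ofReal |g b|)]
  rw [N1, N1]
  calc ∑' (a : ℕ), ∑' (b : ℕ), ENNReal.ofReal |f a| * ENNReal.ofReal |g b|
      = ∑' (a : ℕ), ENNReal.ofReal |f a| * ∑' (b : ℕ), ENNReal.ofReal |g b| := by
        exact tsum_congr (fun a => ENNReal.tsum_mul_left)
    _ = (∑' (a : ℕ), ENNReal.ofReal |f a|) * ∑' (b : ℕ), ENNReal.ofReal |g b| :=
        ENNReal.tsum_mul_right
    _ ≤ _ := le_rfl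

lemma ed_conv_right (f g h : ℕ → ℝ) : ed (conv f h) (conv g h) ≤ ed f g * N1 h := by
  rw [ed, conv_sub]
  exact N1_conv_le _ _

lemma tsum_poissonPMF (l : ℝ) : ∑' x : ℕ, poissonPMF l x = 1 := by
  have h1 : ∀ x : ℕ, poissonPMF l x = Real.exp (-l) * (l ^ x / (x.factorial : ℝ)) := by
    intro x
    rw [poissonPMF, mul_div_assoc]
  rw [tsum_congr h1, tsum_mul_left]
  have h2 : ∑' x : ℕ, l ^ x / (x.factorial : ℝ) = Real.exp l := by
    rw [Real.exp_eq_exp_ℝ, NormedSpace.exp_eq_tsum_div]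
  rw [h2, ← Real.exp_add]
  simp

lemma summable_poissonPMF (l : ℝ) : Summable (poissonPMF l) := by
  have h1 : ∀ x : ℕ, poissonPMF l x = Real.exp (-l) * (l ^ x / (x.factorial : ℝ)) := by
    intro x
    rw [poissonPMF, mul_div_assoc]
  rw [show poissonPMF l = fun x => Real.exp (-l) * (l ^ x / (x.factorial : ℝ)) from funext h1]
  exact (Real.summable_pow_div_factorial l).mul_left _

lemma poissonPMF_nonneg {l : ℝ} (hl : 0 ≤ l) (x : ℕ) : 0 ≤ poissonPMF l x := by
  rw [poissonPMF]
  positivity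

lemma N1_poissonPMF {l : ℝ} (hl : 0 ≤ l) : N1 (poissonPMF l) = 1 := by
  rw [N1]
  have h1 : ∀ x : ℕ, ENNReal.ofReal |poissonPMF l x| = ENNReal.ofReal (poissonPMF l x) :=
    fun x => by rw [abs_of_nonneg (poissonPMF_nonneg hl x)]
  rw [tsum_congr h1, ← ENNReal.ofReal_tsum_of_nonneg (poissonPMF_nonneg hl)
    (summable_poissonPMF l), tsum_poissonPMF, ENNReal.ofReal_one]

lemma N1_bern {a : ℝ} (ha : 0 ≤ a) (ha1 : a ≤ 1) : N1 (bern a) = 1 := by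
  rw [N1]
  rw [tsum_eq_sum (s := {0, 1})]
  · rw [Finset.sum_pair (by norm_num : (0:ℕ) ≠ 1)]
    norm_num [bern]
    rw [abs_of_nonneg (by linarith : (0:ℝ) ≤ 1 - a), abs_of_nonneg ha,
      ← ENNReal.ofReal_add (by linarith) ha]
    norm_num
  · intro x hx
    simp only [Finset.mem_insert, Finset.mem_singleton] at hx
    push_neg at hx
    simp [bern, hx.1, hx.2]


section LeCamAux2
variable {q : ℕ → ℝ}

lemma summable_bern (a : ℝ) : Summable (bern a) := by
  apply summable_of_finite_support
  apply Set.Finite.subset (Set.finite_Iio 2)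
  intro x hx
  simp only [Function.mem_support, bern] at hx
  rcases x with _ | _ | x
  · simp
  · simp
  · simp at hx

lemma poissonPMF_zero (a : ℝ) : poissonPMF a 0 = Real.exp (-a) := by
  simp [poissonPMF]

lemma poissonPMF_one (a : ℝ) : poissonPMF a 1 = Real.exp (-a) * a := by
  simp [poissonPMF]

lemma ed_bern_poisson {a : ℝ} (ha : 0 ≤ a) (ha1 : a < 1) :
    ed (bern a) (poissonPMF a) ≤ ENNReal.ofReal (2 * a * (1 - Real.exp (-a))) := by
  set h : ℕ → ℝ := fun x => |bern a x - poissonPMF a x| with hh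
  have hnn : ∀ x, 0 ≤ h x := fun x => abs_nonneg _
  have hsum : Summable h := ((summable_bern a).sub (summable_poissonPMF a)).abs
  have hexp1 : Real.exp (-a) ≤ 1 := Real.exp_le_one_iff.mpr (by linarith)
  have hexp2 : 1 - a ≤ Real.exp (-a) := by
    have := Real.add_one_le_exp (-a)
    linarith
  have h0 : h 0 = Real.exp (-a) - (1 - a) := by
    rw [hh]
    simp only [bern, if_true, poissonPMF_zero]
    norm_num
    rw [abs_of_nonpos (by linarith)]
    ring
  have h1 : h 1 = a - Real.exp (-a) * a := by
    rw [hh]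
    simp only [bern, if_neg (by norm_num : (1:ℕ) ≠ 0), if_true, poissonPMF_one]
    norm_num
    nlinarith
  have h2 : ∀ x : ℕ, h (x + 2) = poissonPMF a (x + 2) := by
    intro x
    rw [hh]
    simp only [bern, if_neg (by omega : x + 2 ≠ 0), if_neg (by omega : x + 2 ≠ 1)]
    rw [zero_sub, abs_neg, abs_of_nonneg (poissonPMF_nonneg ha _)]
  -- tail sums
  have hps : Summable (fun x => poissonPMF a (x + 1)) := by
    rw [summable_nat_add_iff]
    exact summable_poissonPMF a
  have hps2 : Summable (fun x => poissonPMF a (x + 2)) := by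
    rw [summable_nat_add_iff]
    exact summable_poissonPMF a
  have hpt : ∑' x : ℕ, poissonPMF a (x + 2)
      = 1 - Real.exp (-a) - Real.exp (-a) * a := by
    have e1 : ∑' x : ℕ, poissonPMF a x = poissonPMF a 0 + ∑' x : ℕ, poissonPMF a (x + 1) :=
      Summable.tsum_eq_zero_add (summable_poissonPMF a)
    have e2 : ∑' x : ℕ, poissonPMF a (x + 1)
        = poissonPMF a 1 + ∑' x : ℕ, poissonPMF a (x + 2) := by
      rw [Summable.tsum_eq_zero_add hps]
    rw [tsum_poissonPMF, poissonPMF_zero] at e1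
    rw [poissonPMF_one] at e2
    rw [e2] at e1
    linarith
  have hsum1 : Summable (fun x => h (x + 1)) := by
    rw [summable_nat_add_iff]
    exact hsum
  have hS : ∑' x : ℕ, h x = 2 * a * (1 - Real.exp (-a)) := by
    rw [Summable.tsum_eq_zero_add hsum, Summable.tsum_eq_zero_add hsum1]
    have : ∑' x : ℕ, h (x + 1 + 1) = ∑' x : ℕ, poissonPMF a (x + 2) :=
      tsum_congr (fun x => h2 x)
    rw [this, hpt, h0, h1]
    ring
  rw [ed, N1]
  have : ∀ x : ℕ, ENNReal.ofReal |bern a x - poissonPMF a x| = ENNReal.ofReal (h x) :=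
    fun x => rfl
  rw [tsum_congr this, ← ENNReal.ofReal_tsum_of_nonneg hnn hsum, hS]

lemma term_nonneg {t : ℝ} (ht : 0 ≤ t) : 0 ≤ 2 * t * (1 - Real.exp (-t)) := by
  have : Real.exp (-t) ≤ 1 := Real.exp_le_one_iff.mpr (by linarith)
  nlinarith

lemma ed_bfin_le (hq : ∀ i, 0 ≤ q i ∧ q i < 1) (n : ℕ) :
    ed (bfin q n) (poissonPMF (∑ i ∈ Finset.range n, q i))
      ≤ ENNReal.ofReal (∑ i ∈ Finset.range n, 2 * q i * (1 - Real.exp (-(q i)))) := by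
  induction n with
  | zero =>
    have hz : ∀ x, bfin q 0 x - poissonPMF (∑ i ∈ Finset.range 0, q i) x = 0 := by
      intro x
      rw [bfin_zero, Finset.range_zero, Finset.sum_empty, poissonPMF]
      rcases x with _ | x
      · simp
      · simp [zero_pow (Nat.succ_ne_zero x)]
    rw [ed, N1]
    have : ∀ x : ℕ, ENNReal.ofReal |bfin q 0 x - poissonPMF (∑ i ∈ Finset.range 0, q i) x|
        = 0 := by
      intro x
      rw [hz x]
      simp
    rw [tsum_congr this]
    simp
  | succ n ih =>
    set ln := ∑ i ∈ Finset.range n, q i with hln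
    have hln0 : 0 ≤ ln := Finset.sum_nonneg (fun i _ => (hq i).1)
    have hA : bfin q (n + 1) = conv (bfin q n) (bern (q n)) := funext (bfin_succ q n)
    have hC : poissonPMF (∑ i ∈ Finset.range (n+1), q i)
        = conv (poissonPMF ln) (poissonPMF (q n)) := by
      rw [conv_poisson, Finset.sum_range_succ]
    have tri := ed_triangle (bfin q (n+1)) (conv (poissonPMF ln) (bern (q n)))
      (poissonPMF (∑ i ∈ Finset.range (n+1), q i))
    have e1 : ed (bfin q (n+1)) (conv (poissonPMF ln) (bern (q n)))
        ≤ ENNReal.ofReal (∑ i ∈ Finset.range n, 2 * q i * (1 - Real.exp (-(q i)))) := by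
      rw [hA]
      calc ed (conv (bfin q n) (bern (q n))) (conv (poissonPMF ln) (bern (q n)))
          ≤ ed (bfin q n) (poissonPMF ln) * N1 (bern (q n)) := ed_conv_right _ _ _
        _ = ed (bfin q n) (poissonPMF ln) := by
            rw [N1_bern (hq n).1 (hq n).2.le, mul_one]
        _ ≤ _ := ih
    have e2 : ed (conv (poissonPMF ln) (bern (q n)))
        (poissonPMF (∑ i ∈ Finset.range (n+1), q i))
        ≤ ENNReal.ofReal (2 * q n * (1 - Real.exp (-(q n)))) := by
      rw [hC, conv_comm (poissonPMF ln) (bern (q n)),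
        conv_comm (poissonPMF ln) (poissonPMF (q n))]
      calc ed (conv (bern (q n)) (poissonPMF ln)) (conv (poissonPMF (q n)) (poissonPMF ln))
          ≤ ed (bern (q n)) (poissonPMF (q n)) * N1 (poissonPMF ln) := ed_conv_right _ _ _
        _ = ed (bern (q n)) (poissonPMF (q n)) := by rw [N1_poissonPMF hln0, mul_one]
        _ ≤ _ := ed_bern_poisson (hq n).1 (hq n).2
    calc ed (bfin q (n+1)) (poissonPMF (∑ i ∈ Finset.range (n+1), q i))
        ≤ _ + _ := tri
      _ ≤ ENNReal.ofReal (∑ i ∈ Finset.range n, 2 * q i * (1 - Real.exp (-(q i))))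
          + ENNReal.ofReal (2 * q n * (1 - Real.exp (-(q n)))) := add_le_add e1 e2
      _ = ENNReal.ofReal (∑ i ∈ Finset.range (n+1), 2 * q i * (1 - Real.exp (-(q i)))) := by
          rw [← ENNReal.ofReal_add (Finset.sum_nonneg (fun i _ => term_nonneg (hq i).1))
            (term_nonneg (hq n).1), Finset.sum_range_succ]

lemma bfin_eq (hq : ∀ i, 0 ≤ q i ∧ q i < 1) (n x : ℕ) :
    bfin q n x = (∏ k ∈ Finset.range n, (1 - q k))
      * ∑ J ∈ (Finset.range n).powersetCard x, ∏ i ∈ J, rr q i := by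
  rw [bfin, Finset.mul_sum]
  apply Finset.sum_congr rfl
  intro J hJ
  rw [Finset.mem_powersetCard] at hJ
  have hsub : J ⊆ Finset.range n := hJ.1
  have hsd := Finset.prod_sdiff (f := fun k => 1 - q k) hsub
  have hrr : ∏ i ∈ J, rr q i = (∏ i ∈ J, q i) / ∏ i ∈ J, (1 - q i) := by
    rw [← Finset.prod_div_distrib]
    rfl
  rw [hrr, ← hsd]
  have hne : (∏ i ∈ J, (1 - q i)) ≠ 0 := (prod_one_sub_pos hq J).ne'
  field_simp

lemma bfin_eq_pb (hq : ∀ i, 0 ≤ q i ∧ q i < 1) (hs : Summable q) (n x : ℕ) :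
    bfin q n x = pb (tq q n) x := by
  rw [pb_eq (tq_cond hq n) (tq_summable hs n), PP_tq hq, EE_tq hq, bfin_eq hq]

lemma tendsto_bfin (hq : ∀ i, 0 ≤ q i ∧ q i < 1) (hs : Summable q) (x : ℕ) :
    Filter.Tendsto (fun n => bfin q n x) Filter.atTop (nhds (pb q x)) := by
  rw [pb_eq hq hs x]
  have hprod : Filter.Tendsto (fun n => ∏ k ∈ Finset.range n, (1 - q k))
      Filter.atTop (nhds (PP q)) :=
    HasProd.tendsto_prod_nat ((hasProd_one_sub hq hs).multipliable.hasProd)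
  have hgsum := (summable_EE_inner hq hs x).hasSum
  set T : ℕ → Finset {J : Finset ℕ // J.card = x} :=
    fun n => ((Finset.range n).powerset).subtype (fun J => J.card = x) with hT
  have hTmono : Monotone T := by
    intro m n hmn J hJ
    rw [hT, Finset.mem_subtype] at hJ ⊢
    rw [Finset.mem_powerset] at hJ ⊢
    exact hJ.trans (Finset.range_subset_range.mpr hmn)
  have hTtend : Filter.Tendsto T Filter.atTop Filter.atTop := by
    apply Filter.tendsto_atTop_atTop_of_monotone hTmono
    intro b
    refine ⟨(b.sup (fun J => (J : Finset ℕ).sup id)) + 1, ?_⟩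
    intro J hJ
    rw [hT, Finset.mem_subtype, Finset.mem_powerset]
    intro i hi
    rw [Finset.mem_range]
    have h1 : i ≤ (J : Finset ℕ).sup id := Finset.le_sup (f := id) hi
    have h2 : (J : Finset ℕ).sup id ≤ b.sup (fun J => (J : Finset ℕ).sup id) :=
      Finset.le_sup (f := fun J : {J : Finset ℕ // J.card = x} => (J : Finset ℕ).sup id) hJ
    omega
  have hsums : Filter.Tendsto (fun n => ∑ J ∈ T n, ∏ i ∈ (J : Finset ℕ), rr q i)
      Filter.atTop (nhds (EE q x)) := hgsum.comp hTtend
  have heq : ∀ n, (∑ J ∈ T n, ∏ i ∈ (J : Finset ℕ), rr q i)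
      = ∑ J ∈ (Finset.range n).powersetCard x, ∏ i ∈ J, rr q i := by
    intro n
    rw [hT]
    rw [Finset.sum_subtype_eq_sum_filter (fun J => ∏ i ∈ J, rr q i)
      (p := fun J => J.card = x) (s := (Finset.range n).powerset)]
    rw [Finset.powersetCard_eq_filter]
  rw [show (fun n => bfin q n x)
      = fun n => (∏ k ∈ Finset.range n, (1 - q k))
        * ∑ J ∈ (Finset.range n).powersetCard x, ∏ i ∈ J, rr q i from
    funext (fun n => bfin_eq hq n x)]
  have := hsums.congr heq
  exact hprod.mul this

lemma tendsto_poisson_pt {l : ℝ} (hs : Summable q) (hl : l = ∑' i, q i) (x : ℕ) :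
    Filter.Tendsto (fun n => poissonPMF (∑ i ∈ Finset.range n, q i) x)
      Filter.atTop (nhds (poissonPMF l x)) := by
  have h1 : Filter.Tendsto (fun n => ∑ i ∈ Finset.range n, q i) Filter.atTop (nhds l) := by
    rw [hl]
    exact hs.hasSum.tendsto_sum_nat
  have hcont : Continuous (fun t : ℝ => Real.exp (-t) * t ^ x / (Nat.factorial x : ℝ)) := by
    continuity
  have := (hcont.tendsto l).comp h1
  exact this


end LeCamAux2

lemma tangent_line (Δ t : ℝ) :
    1 - Real.exp (-t) ≤ (1 - Real.exp (-Δ)) + Real.exp (-Δ) * (t - Δ) := by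
  have h := Real.add_one_le_exp (Δ - t)
  have hmul : Real.exp (-Δ) * Real.exp (Δ - t) = Real.exp (-t) := by
    rw [← Real.exp_add]
    ring_nf
  nlinarith [Real.exp_pos (-Δ), mul_le_mul_of_nonneg_left h (Real.exp_pos (-Δ)).le]

/-- If `λ ≤ 1` then `d_TV(Q, Poiss_λ) ≤ λ(1 − e^{−Δ}) ≤ Σ p_i²`. -/
theorem stmt_5 (p : ℕ → ℝ) (hp : ∀ i, p i ∈ Set.Ico (0 : ℝ) 1) (hsum : Summable p)
    (l : ℝ) (hl : l = ∑' i, p i) (hlpos : 0 < l) (hl1 : l ≤ 1)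
    (Δ : ℝ) (hΔ : Δ = l⁻¹ * ∑' i, p i ^ 2) :
    (1 / 2) * ∑' x : ℕ, |pb p x - poissonPMF l x| ≤ l * (1 - Real.exp (-Δ)) ∧
      l * (1 - Real.exp (-Δ)) ≤ ∑' i, p i ^ 2 := by
  have hq : ∀ i, 0 ≤ p i ∧ p i < 1 := fun i => ⟨(hp i).1, (hp i).2⟩
  have hsq : Summable (fun i => p i ^ 2) := by
    apply Summable.of_nonneg_of_le (fun i => sq_nonneg _) _ hsum
    intro i
    nlinarith [(hq i).1, (hq i).2]
  have hΔl : Δ * l = ∑' i, p i ^ 2 := by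
    rw [hΔ]
    field_simp
  have hΔ0 : 0 ≤ Δ := by
    rw [hΔ]
    exact mul_nonneg (inv_nonneg.mpr hlpos.le) (tsum_nonneg (fun i => sq_nonneg _))
  -- the Le Cam bound B
  set B := ∑' i, 2 * p i * (1 - Real.exp (-(p i))) with hB
  have hBsummable : Summable (fun i => 2 * p i * (1 - Real.exp (-(p i)))) := by
    apply Summable.of_nonneg_of_le (fun i => term_nonneg (hq i).1) _ (hsum.mul_left 2)
    intro i
    have h1 : 0 ≤ Real.exp (-(p i)) := (Real.exp_pos _).le
    nlinarith [(hq i).1]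
  have hB0 : 0 ≤ B := tsum_nonneg (fun i => term_nonneg (hq i).1)
  -- Step A : finite-sum bound for each n
  have stepA : ∀ (s : Finset ℕ) (n : ℕ),
      (∑ x ∈ s, |bfin p n x - poissonPMF (∑ i ∈ Finset.range n, p i) x|) ≤ B := by
    intro s n
    have hedge : ENNReal.ofReal (∑ x ∈ s, |bfin p n x
        - poissonPMF (∑ i ∈ Finset.range n, p i) x|) ≤ ENNReal.ofReal B := by
      rw [ENNReal.ofReal_sum_of_nonneg (fun x _ => abs_nonneg _)]
      calc (∑ x ∈ s, ENNReal.ofReal |bfin p n x - poissonPMF (∑ i ∈ Finset.range n, p i) x|)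
          ≤ ∑' x : ℕ, ENNReal.ofReal |bfin p n x
              - poissonPMF (∑ i ∈ Finset.range n, p i) x| := ENNReal.sum_le_tsum s
        _ = ed (bfin p n) (poissonPMF (∑ i ∈ Finset.range n, p i)) := rfl
        _ ≤ ENNReal.ofReal (∑ i ∈ Finset.range n, 2 * p i * (1 - Real.exp (-(p i)))) :=
            ed_bfin_le hq n
        _ ≤ ENNReal.ofReal B := by
            apply ENNReal.ofReal_le_ofReal
            exact Summable.sum_le_tsum (Finset.range n) (fun i _ => term_nonneg (hq i).1) hBsummable
    rw [ENNReal.ofReal_le_ofReal_iff hB0] at hedge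
    exact hedge
  -- Step B : finite-sum bound in the limit
  have stepB : ∀ s : Finset ℕ, (∑ x ∈ s, |pb p x - poissonPMF l x|) ≤ B := by
    intro s
    have htends : Filter.Tendsto
        (fun n => ∑ x ∈ s, |bfin p n x - poissonPMF (∑ i ∈ Finset.range n, p i) x|)
        Filter.atTop (nhds (∑ x ∈ s, |pb p x - poissonPMF l x|)) := by
      apply tendsto_finset_sum
      intro x _
      exact ((tendsto_bfin hq hsum x).sub (tendsto_poisson_pt hsum hl x)).abs
    exact le_of_tendsto' htends (fun n => stepA s n)
  -- Step C : summability
  have hpbsummable : Summable (pb p) := by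
    have h1 : Summable (fun x => PP p * EE p x) := (summable_EE hq hsum).mul_left _
    exact h1.congr (fun x => (pb_eq hq hsum x).symm)
  have stepC : Summable (fun x => |pb p x - poissonPMF l x|) :=
    (hpbsummable.sub (summable_poissonPMF l)).abs
  -- Step D : tsum bound
  have stepD : (∑' x : ℕ, |pb p x - poissonPMF l x|) ≤ B :=
    Summable.tsum_le_of_sum_le stepC stepB
  -- Step E : B ≤ 2 l (1 - e^{-Δ})
  have stepE : B ≤ 2 * (l * (1 - Real.exp (-Δ))) := by
    set g : ℕ → ℝ := fun i =>
      2 * (p i * (1 - Real.exp (-Δ)) + Real.exp (-Δ) * (p i ^ 2 - Δ * p i)) with hg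
    have hgsummable : Summable g := by
      apply Summable.mul_left
      exact (hsum.mul_right (1 - Real.exp (-Δ))).add
        ((hsq.sub (hsum.mul_left Δ)).mul_left (Real.exp (-Δ)))
    have hterm : ∀ i, 2 * p i * (1 - Real.exp (-(p i))) ≤ g i := by
      intro i
      have ht := tangent_line Δ (p i)
      have hp0 := (hq i).1
      rw [hg]
      simp only
      nlinarith [mul_le_mul_of_nonneg_left ht (by linarith : (0:ℝ) ≤ 2 * p i)]
    have hsumg : (∑' i, g i) = 2 * (l * (1 - Real.exp (-Δ))) := by
      rw [hg, tsum_mul_left]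
      rw [Summable.tsum_add (hsum.mul_right (1 - Real.exp (-Δ)))
        ((hsq.sub (hsum.mul_left Δ)).mul_left (Real.exp (-Δ)))]
      rw [tsum_mul_right, tsum_mul_left]
      rw [Summable.tsum_sub hsq (hsum.mul_left Δ), tsum_mul_left]
      rw [← hl, ← hΔl]
      ring
    calc B ≤ ∑' i, g i := Summable.tsum_le_tsum hterm hBsummable hgsummable
      _ = 2 * (l * (1 - Real.exp (-Δ))) := hsumg
  constructor
  · nlinarith [stepD, stepE, (tsum_nonneg (fun x : ℕ => abs_nonneg (pb p x - poissonPMF l x)) :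
      0 ≤ ∑' x : ℕ, |pb p x - poissonPMF l x|)]
  · have h1 : 1 - Real.exp (-Δ) ≤ Δ := by
      have := Real.add_one_le_exp (-Δ)
      linarith
    calc l * (1 - Real.exp (-Δ)) ≤ l * Δ := by
          apply mul_le_mul_of_nonneg_left h1 hlpos.le
      _ = Δ * l := mul_comm l Δ
      _ = ∑' i, p i ^ 2 := hΔl
end

section
/- The ratio (x+1) b(x+1)/b(x) is strictly decreasing on the support of b: for every integer x ≥ 0 with b(x) > 0 and b(x+1) > 0, one has (x+2) b(x+2) / b(x+1) < (x+1) b(x+1) / b(x); equivalently (x+2) b(x+2) b(x) < (x+1) b(x+1)². -/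
open scoped BigOperators

section Aux

open ENNReal

noncomputable def auxF (Q : ℕ → ℝ≥0∞) (y : ℕ) : ℝ≥0∞ :=
  ∑' J : {J : Finset ℕ // J.card = y}, ∏ i ∈ (J : Finset ℕ), Q i

lemma auxF_eq (Q : ℕ → ℝ≥0∞) (y : ℕ) :
    auxF Q y = ∑' J : Finset ℕ, if J.card = y then ∏ i ∈ J, Q i else 0 := by
  classical
  have h := tsum_subtype {J : Finset ℕ | J.card = y} (fun J => ∏ i ∈ J, Q i)
  refine Eq.trans (Eq.trans ?_ h) (tsum_congr fun J => ?_)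
  · rfl
  · rw [Set.indicator_apply]; rfl

-- helper finset identities
lemma fs1 (A B : Finset ℕ) : (A ∩ B) ∪ (A \ B) = A := by
  ext a; simp only [Finset.mem_union, Finset.mem_inter, Finset.mem_sdiff]; tauto

lemma fs2 (A B : Finset ℕ) : ((A \ B) ∪ (B \ A)) \ (A \ B) = B \ A := by
  ext a; simp only [Finset.mem_union, Finset.mem_sdiff]; tauto

lemma fs3 (A B : Finset ℕ) : (A ∩ B) ∪ (B \ A) = B := by
  ext a; simp only [Finset.mem_union, Finset.mem_inter, Finset.mem_sdiff]; tauto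

lemma master (Q : ℕ → ℝ≥0∞) (a b : ℕ) :
    auxF Q a * auxF Q b =
      ∑' DE : Finset ℕ × Finset ℕ,
        (if Disjoint DE.1 DE.2 then
          (((DE.2.powerset.filter (fun S => DE.1.card + S.card = a ∧
              DE.1.card + (DE.2 \ S).card = b)).card : ℕ) : ℝ≥0∞)
         else 0) * ((∏ i ∈ DE.1, Q i) ^ 2 * ∏ i ∈ DE.2, Q i) := by
  classical
  have step2 : auxF Q a * auxF Q b =
      ∑' AB : Finset ℕ × Finset ℕ,
        (if AB.1.card = a ∧ AB.2.card = b then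
          (∏ i ∈ AB.1, Q i) * ∏ i ∈ AB.2, Q i else 0) := by
    rw [auxF_eq Q a, auxF_eq Q b, ENNReal.tsum_prod']
    rw [← ENNReal.tsum_mul_right]
    refine tsum_congr fun A => ?_
    rw [← ENNReal.tsum_mul_left]
    refine tsum_congr fun B => ?_
    by_cases h1 : A.card = a <;> by_cases h2 : B.card = b <;> simp [h1, h2]
  set i : Finset ℕ × Finset ℕ → (Finset ℕ × Finset ℕ) × Finset ℕ :=
    fun AB => ((AB.1 ∩ AB.2, (AB.1 \ AB.2) ∪ (AB.2 \ AB.1)), AB.1 \ AB.2) with hi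
  set W : (Finset ℕ × Finset ℕ) × Finset ℕ → ℝ≥0∞ := fun t =>
    if Disjoint t.1.1 t.1.2 ∧ t.2 ⊆ t.1.2 ∧ t.1.1.card + t.2.card = a ∧
        t.1.1.card + (t.1.2 \ t.2).card = b then
      (∏ i ∈ t.1.1, Q i) ^ 2 * ∏ i ∈ t.1.2, Q i else 0 with hW
  have hWa : ∀ D E S : Finset ℕ, W ((D, E), S) =
      if Disjoint D E ∧ S ⊆ E ∧ D.card + S.card = a ∧ D.card + (E \ S).card = b then
        (∏ i ∈ D, Q i) ^ 2 * ∏ i ∈ E, Q i else 0 := fun _ _ _ => rfl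
  have hia : ∀ A B : Finset ℕ, i (A, B) = ((A ∩ B, (A \ B) ∪ (B \ A)), A \ B) :=
    fun _ _ => rfl
  set r : (Finset ℕ × Finset ℕ) × Finset ℕ → Finset ℕ × Finset ℕ :=
    fun t => (t.1.1 ∪ t.2, t.1.1 ∪ (t.1.2 \ t.2)) with hr
  have hleft : Function.LeftInverse r i := by
    rintro ⟨A, B⟩
    simp only [hi, hr]
    refine Prod.ext ?_ ?_
    · simpa using fs1 A B
    · simp only []
      rw [fs2 A B]
      simpa using fs3 A B
  have hinj : Function.Injective i := hleft.injective
  -- step 3 : termwise match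
  have step3 : ∀ AB : Finset ℕ × Finset ℕ,
      (if AB.1.card = a ∧ AB.2.card = b then
        (∏ i ∈ AB.1, Q i) * ∏ i ∈ AB.2, Q i else 0) = W (i AB) := by
    rintro ⟨A, B⟩
    rw [hia, hWa]
    have hd1 : Disjoint (A ∩ B) ((A \ B) ∪ (B \ A)) := by
      rw [Finset.disjoint_left]
      intro x hx hx'
      simp only [Finset.mem_inter] at hx
      simp only [Finset.mem_union, Finset.mem_sdiff] at hx'
      tauto
    have hsub : A \ B ⊆ (A \ B) ∪ (B \ A) := Finset.subset_union_left
    have hcA : (A ∩ B).card + (A \ B).card = A.card := Finset.card_inter_add_card_sdiff A B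
    have hcB : (A ∩ B).card + (((A \ B) ∪ (B \ A)) \ (A \ B)).card = B.card := by
      rw [fs2 A B, Finset.inter_comm]
      exact Finset.card_inter_add_card_sdiff B A
    have hval : (∏ i ∈ A ∩ B, Q i) ^ 2 * ∏ i ∈ (A \ B) ∪ (B \ A), Q i =
        (∏ i ∈ A, Q i) * ∏ i ∈ B, Q i := by
      have hdAB : Disjoint (A ∩ B) (A \ B) := by
        rw [Finset.disjoint_left]; intro x hx hx'
        simp only [Finset.mem_inter] at hx; simp only [Finset.mem_sdiff] at hx'; tauto
      have hdBA : Disjoint (A ∩ B) (B \ A) := by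
        rw [Finset.disjoint_left]; intro x hx hx'
        simp only [Finset.mem_inter] at hx; simp only [Finset.mem_sdiff] at hx'; tauto
      have hdSS : Disjoint (A \ B) (B \ A) := by
        rw [Finset.disjoint_left]; intro x hx hx'
        simp only [Finset.mem_sdiff] at hx hx'; tauto
      have eA : ∏ i ∈ A, Q i = (∏ i ∈ A ∩ B, Q i) * ∏ i ∈ A \ B, Q i := by
        rw [← Finset.prod_union hdAB, fs1 A B]
      have eB : ∏ i ∈ B, Q i = (∏ i ∈ A ∩ B, Q i) * ∏ i ∈ B \ A, Q i := by
        rw [← Finset.prod_union hdBA, fs3 A B]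
      rw [eA, eB, Finset.prod_union hdSS]
      ring
    by_cases h1 : A.card = a ∧ B.card = b
    · rw [if_pos h1, if_pos ⟨hd1, hsub, by rw [hcA]; exact h1.1, by rw [hcB]; exact h1.2⟩, hval]
    · rw [if_neg h1, if_neg ?_]
      rintro ⟨-, -, hca, hcb⟩
      exact h1 ⟨by rw [← hcA, hca], by rw [← hcB, hcb]⟩
  have hsupp : Function.support W ⊆ Set.range i := by
    rintro ⟨⟨D, E⟩, S⟩ hts
    rw [Function.mem_support, hWa] at hts
    by_cases hc : Disjoint D E ∧ S ⊆ E ∧ D.card + S.card = a ∧ D.card + (E \ S).card = b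
    · obtain ⟨hdisj, hS, -, -⟩ := hc
      refine ⟨(D ∪ S, D ∪ (E \ S)), ?_⟩
      have hmD : ∀ x, x ∈ D → x ∉ E := fun x h => Finset.disjoint_left.mp hdisj h
      have hmS : ∀ x, x ∈ S → x ∈ E := fun x h => hS h
      rw [hia]
      refine Prod.ext (Prod.ext ?_ ?_) ?_
      · ext x
        simp only [Finset.mem_inter, Finset.mem_union, Finset.mem_sdiff]
        have h1 := hmD x; have h2 := hmS x; tauto
      · ext x
        simp only [Finset.mem_union, Finset.mem_sdiff]
        have h1 := hmD x; have h2 := hmS x; tauto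
      · ext x
        simp only [Finset.mem_sdiff, Finset.mem_union]
        have h1 := hmD x; have h2 := hmS x; tauto
    · exact absurd (if_neg hc) hts
  rw [step2, tsum_congr step3, hinj.tsum_eq hsupp, ENNReal.tsum_prod']
  refine tsum_congr fun DE => ?_
  obtain ⟨D, E⟩ := DE
  -- inner sum over S
  have hvanish : ∀ S ∉ E.powerset, W ((D, E), S) = 0 := by
    intro S hS
    rw [Finset.mem_powerset] at hS
    rw [hWa, if_neg (by rintro ⟨-, h, -, -⟩; exact hS h)]
  rw [tsum_eq_sum hvanish]
  by_cases hdisj : Disjoint D E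
  · rw [if_pos hdisj]
    have : ∀ S ∈ E.powerset, W ((D, E), S) =
        if D.card + S.card = a ∧ D.card + (E \ S).card = b then
          (∏ i ∈ D, Q i) ^ 2 * ∏ i ∈ E, Q i else 0 := by
      intro S hS
      rw [Finset.mem_powerset] at hS
      rw [hWa]
      by_cases hc : D.card + S.card = a ∧ D.card + (E \ S).card = b
      · rw [if_pos ⟨hdisj, hS, hc⟩, if_pos hc]
      · rw [if_neg (by rintro ⟨-, -, h⟩; exact hc h), if_neg hc]
    rw [Finset.sum_congr rfl this, Finset.sum_ite, Finset.sum_const, Finset.sum_const_zero,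
      add_zero, nsmul_eq_mul]
  · rw [if_neg hdisj, zero_mul]
    refine Finset.sum_eq_zero fun S hS => ?_
    rw [hWa, if_neg (by rintro ⟨h, -⟩; exact hdisj h)]

lemma cardCompute (E : Finset ℕ) (d a b : ℕ) :
    ((E.powerset.filter (fun S => d + S.card = a ∧ d + (E \ S).card = b)).card) =
      if d ≤ a ∧ E.card + 2 * d = a + b then E.card.choose (a - d) else 0 := by
  split_ifs with h
  · rw [← Finset.card_powersetCard]
    congr 1
    ext S
    simp only [Finset.mem_filter, Finset.mem_powerset, Finset.mem_powersetCard]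
    constructor
    · rintro ⟨hS, h1, h2⟩
      exact ⟨hS, by omega⟩
    · rintro ⟨hS, h1⟩
      have hsm : S.card ≤ E.card := Finset.card_le_card hS
      have hsd : (E \ S).card = E.card - S.card := Finset.card_sdiff_of_subset hS
      exact ⟨hS, by omega, by omega⟩
  · rw [Finset.card_eq_zero]
    rw [Finset.filter_eq_empty_iff]
    intro S hS
    rw [Finset.mem_powerset] at hS
    have hsm : S.card ≤ E.card := Finset.card_le_card hS
    have hsd : (E \ S).card = E.card - S.card := Finset.card_sdiff_of_subset hS
    rintro ⟨h1, h2⟩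
    exact h ⟨by omega, by omega⟩

lemma keyCard (x : ℕ) (D E : Finset ℕ) (hDE : Disjoint D E) :
    (x + 2) * (E.powerset.filter
        (fun S => D.card + S.card = x ∧ D.card + (E \ S).card = x + 2)).card
      + (if E = ∅ ∧ D.card = x + 1 then x + 1 else 0)
    ≤ (x + 1) * (E.powerset.filter
        (fun S => D.card + S.card = x + 1 ∧ D.card + (E \ S).card = x + 1)).card := by
  rw [cardCompute, cardCompute]
  set d := D.card with hd
  set m := E.card with hm
  by_cases h2 : m + 2 * d = 2 * x + 2
  · by_cases hdx : d ≤ x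
    · -- main case
      have hite : ¬ (E = ∅ ∧ d = x + 1) := by rintro ⟨hE, hdd⟩; omega
      rw [if_neg hite, if_pos ⟨hdx, by omega⟩, if_pos ⟨by omega, by omega⟩]
      obtain ⟨r, hr⟩ : ∃ r, d + r = x + 1 ∧ 1 ≤ r ∧ m = 2 * r := ⟨x + 1 - d, by omega, by omega, by omega⟩
      obtain ⟨hr1, hr2, hr3⟩ := hr
      have hxd : x - d = r - 1 := by omega
      have hx1d : x + 1 - d = r := by omega
      rw [hxd, hx1d, hr3]
      -- identity: C(2r, r) * r = C(2r, r-1) * (r+1)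
      have hid := Nat.choose_succ_right_eq (2 * r) (r - 1)
      rw [show r - 1 + 1 = r by omega, show 2 * r - (r - 1) = r + 1 by omega] at hid
      -- hid : (2*r).choose r * r = (2*r).choose (r-1) * (r+1)
      apply Nat.le_of_mul_le_mul_right _ (show 0 < r + 1 by omega)
      have hcoef : (x + 2) * r ≤ (x + 1) * (r + 1) := by nlinarith
      calc ((x + 2) * (2*r).choose (r-1) + 0) * (r + 1)
          = (x + 2) * ((2*r).choose r * r) := by rw [Nat.add_zero, mul_assoc, ← hid]
        _ ≤ (x + 1) * (r + 1) * (2*r).choose r := by nlinarith [Nat.zero_le ((2*r).choose r)]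
        _ = (x + 1) * (2*r).choose r * (r + 1) := by ring
    · -- d = x + 1, E = ∅
      have hdd : d = x + 1 := by omega
      have hm0 : m = 0 := by omega
      have hE : E = ∅ := Finset.card_eq_zero.mp (by omega)
      rw [if_neg (by omega : ¬ (d ≤ x ∧ m + 2*d = x + (x+2))), if_pos ⟨hE, hdd⟩,
        if_pos ⟨by omega, by omega⟩]
      simp [hm0, hdd]
  · have hite : ¬ (E = ∅ ∧ d = x + 1) := by
      rintro ⟨hE, hdd⟩
      apply h2
      have : m = 0 := by rw [hm, hE]; simp
      omega
    rw [if_neg hite, if_neg (by omega), if_neg (by omega)]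
    omega

lemma powlem (Q : ℕ → ℝ≥0∞) : ∀ y : ℕ,
    ∑' f : Fin y → ℕ, ∏ j, Q (f j) = (∑' i, Q i) ^ y := by
  intro y
  induction y with
  | zero =>
      rw [pow_zero]
      have h0 : ∀ f : Fin 0 → ℕ, (∏ j, Q (f j)) = 1 := fun f => by simp
      rw [tsum_congr h0]
      exact tsum_eq_single (default : Fin 0 → ℕ)
        (fun b hb => absurd (Subsingleton.elim b default) hb) |>.trans rfl
  | succ y ih =>
      have he := (Fin.consEquiv (fun _ : Fin (y + 1) => ℕ)).tsum_eq
        (f := fun f : Fin (y + 1) → ℕ => ∏ j, Q (f j))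
      rw [← he]
      have hterm : ∀ z : ℕ × (Fin y → ℕ),
          (∏ j, Q ((Fin.consEquiv (fun _ : Fin (y + 1) => ℕ)) z j)) =
            Q z.1 * ∏ j, Q (z.2 j) := by
        rintro ⟨a, f⟩
        rw [Fin.prod_univ_succ]
        simp [Fin.consEquiv]
      rw [tsum_congr hterm, ENNReal.tsum_prod']
      simp only [ENNReal.tsum_mul_left]
      rw [ENNReal.tsum_mul_right, ih, pow_succ]
      ring
lemma auxF_ne_top (Q : ℕ → ℝ≥0∞) (hQ : ∑' i, Q i ≠ ∞) (y : ℕ) : auxF Q y ≠ ∞ := by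
  classical
  set emb : {J : Finset ℕ // J.card = y} → (Fin y → ℕ) :=
    fun J => ⇑(J.1.orderEmbOfFin J.2) with hemb
  have hinj : Function.Injective emb := by
    intro J J' h
    have := congrArg Set.range h
    rw [hemb] at this
    simp only [Finset.range_orderEmbOfFin] at this
    exact Subtype.ext (Finset.coe_injective this)
  have hprod : ∀ J : {J : Finset ℕ // J.card = y},
      ∏ i ∈ (J : Finset ℕ), Q i = ∏ j, Q (emb J j) := by
    intro J
    have h1 : ∀ j : Fin y, emb J j = ((J.1.orderIsoOfFin J.2) j : ℕ) := fun j =>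
      (Finset.coe_orderIsoOfFin_apply J.1 J.2 j).symm
    calc ∏ i ∈ (J : Finset ℕ), Q i = ∏ s : (J : Finset ℕ), Q ↑s :=
          (Finset.prod_coe_sort _ _).symm
      _ = ∏ j : Fin y, Q ↑((J.1.orderIsoOfFin J.2) j) :=
          (Equiv.prod_comp (J.1.orderIsoOfFin J.2).toEquiv (fun s => Q ↑s)).symm
      _ = ∏ j, Q (emb J j) := Finset.prod_congr rfl fun j _ => by rw [h1 j]
  have hle : auxF Q y ≤ ∑' f : Fin y → ℕ, ∏ j, Q (f j) := by
    rw [auxF, tsum_congr hprod]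
    exact ENNReal.tsum_comp_le_tsum_of_injective hinj _
  rw [powlem Q y] at hle
  exact ne_top_of_le_ne_top (ENNReal.pow_ne_top hQ) hle

lemma core (Q : ℕ → ℝ≥0∞) (x : ℕ) (D₀ : Finset ℕ) (hD₀ : D₀.card = x + 1) :
    (x + 2 : ℝ≥0∞) * (auxF Q x * auxF Q (x + 2)) + (x + 1 : ℝ≥0∞) * (∏ i ∈ D₀, Q i) ^ 2
      ≤ (x + 1 : ℝ≥0∞) * auxF Q (x + 1) ^ 2 := by
  classical
  have hc2 : ((x : ℝ≥0∞) + 2) = ((x + 2 : ℕ) : ℝ≥0∞) := by push_cast; ring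
  have hc1 : ((x : ℝ≥0∞) + 1) = ((x + 1 : ℕ) : ℝ≥0∞) := by push_cast; ring
  rw [hc1, hc2]
  set w : Finset ℕ × Finset ℕ → ℝ≥0∞ :=
    fun DE => (∏ i ∈ DE.1, Q i) ^ 2 * ∏ i ∈ DE.2, Q i with hw
  set cnt : ℕ → ℕ → Finset ℕ × Finset ℕ → ℕ := fun a b DE =>
    if Disjoint DE.1 DE.2 then
      (DE.2.powerset.filter (fun S => DE.1.card + S.card = a ∧
        DE.1.card + (DE.2 \ S).card = b)).card
    else 0 with hcnt
  have hcnta : ∀ a b (D E : Finset ℕ), cnt a b (D, E) = if Disjoint D E then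
      (E.powerset.filter (fun S => D.card + S.card = a ∧
        D.card + (E \ S).card = b)).card else 0 := fun _ _ _ _ => rfl
  have hwa : ∀ D E : Finset ℕ, w (D, E) = (∏ i ∈ D, Q i) ^ 2 * ∏ i ∈ E, Q i :=
    fun _ _ => rfl
  have hmaster : ∀ a b, auxF Q a * auxF Q b = ∑' DE, (cnt a b DE : ℝ≥0∞) * w DE := by
    intro a b
    rw [master Q a b]
    refine tsum_congr fun DE => ?_
    rw [show cnt a b DE = if Disjoint DE.1 DE.2 then
      (DE.2.powerset.filter (fun S => DE.1.card + S.card = a ∧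
        DE.1.card + (DE.2 \ S).card = b)).card else 0 from rfl]
    split_ifs with h <;> simp [hw]
  set s : Finset ℕ × Finset ℕ → ℝ≥0∞ := fun DE =>
    (if DE.2 = ∅ ∧ DE.1.card = x + 1 then ((x + 1 : ℕ) : ℝ≥0∞) else 0) * w DE with hs
  have hsa : ∀ D E : Finset ℕ, s (D, E) =
      (if E = ∅ ∧ D.card = x + 1 then ((x + 1 : ℕ) : ℝ≥0∞) else 0) * w (D, E) :=
    fun _ _ => rfl
  have pointwise : ∀ DE : Finset ℕ × Finset ℕ,
      ((x + 2 : ℕ) : ℝ≥0∞) * ((cnt x (x + 2) DE : ℝ≥0∞) * w DE) + s DE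
        ≤ ((x + 1 : ℕ) : ℝ≥0∞) * ((cnt (x + 1) (x + 1) DE : ℝ≥0∞) * w DE) := by
    rintro ⟨D, E⟩
    have hco : ((x + 2 : ℕ) : ℝ≥0∞) * ((cnt x (x + 2) (D, E) : ℕ) : ℝ≥0∞)
        + (if E = ∅ ∧ D.card = x + 1 then ((x + 1 : ℕ) : ℝ≥0∞) else 0)
        ≤ ((x + 1 : ℕ) : ℝ≥0∞) * ((cnt (x + 1) (x + 1) (D, E) : ℕ) : ℝ≥0∞) := by
      by_cases hdisj : Disjoint D E
      · have hkey := keyCard x D E hdisj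
        rw [hcnta, hcnta, if_pos hdisj, if_pos hdisj]
        calc ((x + 2 : ℕ) : ℝ≥0∞) * ((E.powerset.filter (fun S => D.card + S.card = x ∧
                D.card + (E \ S).card = x + 2)).card : ℕ)
              + (if E = ∅ ∧ D.card = x + 1 then ((x + 1 : ℕ) : ℝ≥0∞) else 0)
            = (((x + 2) * (E.powerset.filter (fun S => D.card + S.card = x ∧
                D.card + (E \ S).card = x + 2)).card
              + if E = ∅ ∧ D.card = x + 1 then x + 1 else 0 : ℕ) : ℝ≥0∞) := by
              split_ifs with h <;> push_cast <;> ring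
          _ ≤ (((x + 1) * (E.powerset.filter (fun S => D.card + S.card = x + 1 ∧
                D.card + (E \ S).card = x + 1)).card : ℕ) : ℝ≥0∞) := by
              exact_mod_cast Nat.cast_le.mpr hkey
          _ = ((x + 1 : ℕ) : ℝ≥0∞) * ((E.powerset.filter (fun S => D.card + S.card = x + 1 ∧
                D.card + (E \ S).card = x + 1)).card : ℕ) := by push_cast; ring
      · have hE : ¬(E = ∅ ∧ D.card = x + 1) := by
          rintro ⟨hE, -⟩
          exact hdisj (hE ▸ Finset.disjoint_empty_right D)
        rw [hcnta, hcnta, if_neg hdisj, if_neg hdisj, if_neg hE]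
        simp
    rw [hsa]
    calc ((x + 2 : ℕ) : ℝ≥0∞) * ((cnt x (x + 2) (D, E) : ℝ≥0∞) * w (D, E))
          + (if E = ∅ ∧ D.card = x + 1 then ((x + 1 : ℕ) : ℝ≥0∞) else 0) * w (D, E)
        = (((x + 2 : ℕ) : ℝ≥0∞) * ((cnt x (x + 2) (D, E) : ℕ) : ℝ≥0∞)
            + (if E = ∅ ∧ D.card = x + 1 then ((x + 1 : ℕ) : ℝ≥0∞) else 0)) * w (D, E) := by
          ring
      _ ≤ (((x + 1 : ℕ) : ℝ≥0∞) * ((cnt (x + 1) (x + 1) (D, E) : ℕ) : ℝ≥0∞)) * w (D, E) :=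
          mul_le_mul_left hco _
      _ = ((x + 1 : ℕ) : ℝ≥0∞) * ((cnt (x + 1) (x + 1) (D, E) : ℝ≥0∞) * w (D, E)) := by
          ring
  have hsum_s : ((x + 1 : ℕ) : ℝ≥0∞) * (∏ i ∈ D₀, Q i) ^ 2 ≤ ∑' DE, s DE := by
    have hle := ENNReal.le_tsum (f := s) (D₀, (∅ : Finset ℕ))
    refine le_trans (le_of_eq ?_) hle
    rw [hsa, if_pos ⟨rfl, hD₀⟩, hwa]
    simp
  have haux1 : ((x + 2 : ℕ) : ℝ≥0∞) * (auxF Q x * auxF Q (x + 2))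
      = ∑' DE, ((x + 2 : ℕ) : ℝ≥0∞) * ((cnt x (x + 2) DE : ℝ≥0∞) * w DE) := by
    rw [hmaster, ENNReal.tsum_mul_left]
  have haux2 : ((x + 1 : ℕ) : ℝ≥0∞) * auxF Q (x + 1) ^ 2
      = ∑' DE, ((x + 1 : ℕ) : ℝ≥0∞) * ((cnt (x + 1) (x + 1) DE : ℝ≥0∞) * w DE) := by
    rw [sq, hmaster, ENNReal.tsum_mul_left]
  calc ((x + 2 : ℕ) : ℝ≥0∞) * (auxF Q x * auxF Q (x + 2))
        + ((x + 1 : ℕ) : ℝ≥0∞) * (∏ i ∈ D₀, Q i) ^ 2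
      ≤ ((x + 2 : ℕ) : ℝ≥0∞) * (auxF Q x * auxF Q (x + 2)) + ∑' DE, s DE :=
        add_le_add_right hsum_s _
    _ = ∑' DE, (((x + 2 : ℕ) : ℝ≥0∞) * ((cnt x (x + 2) DE : ℝ≥0∞) * w DE) + s DE) := by
        rw [ENNReal.tsum_add, haux1]
    _ ≤ ∑' DE, ((x + 1 : ℕ) : ℝ≥0∞) * ((cnt (x + 1) (x + 1) DE : ℝ≥0∞) * w DE) :=
        ENNReal.tsum_le_tsum pointwise
    _ = ((x + 1 : ℕ) : ℝ≥0∞) * auxF Q (x + 1) ^ 2 := haux2.symm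


end Aux

section RealSide

variable {p : ℕ → ℝ} (hp : ∀ i, p i ∈ Set.Ico (0 : ℝ) 1) (hsum : Summable p)

include hp hsum in
lemma summable_q : Summable (fun i => p i / (1 - p i)) := by
  have h0 : ∀ i, 0 ≤ p i / (1 - p i) := fun i =>
    div_nonneg (hp i).1 (by linarith [(hp i).2])
  have htend : Filter.Tendsto p Filter.atTop (nhds 0) := hsum.tendsto_atTop_zero
  obtain ⟨N, hN⟩ : ∃ N, ∀ k ≥ N, p k ≤ 1 / 2 := by
    have := (htend.eventually (eventually_le_nhds (by norm_num : (0:ℝ) < 1/2)))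
    exact Filter.eventually_atTop.mp this
  rw [← summable_nat_add_iff N]
  refine Summable.of_nonneg_of_le (fun k => h0 (k + N)) ?_
    (((summable_nat_add_iff N).2 hsum).mul_left 2)
  · intro k
    have h1 : p (k + N) ≤ 1 / 2 := hN (k + N) (Nat.le_add_left N k)
    have h2 : 0 ≤ p (k + N) := (hp _).1
    have h3 : p (k + N) < 1 := (hp _).2
    rw [div_le_iff₀ (by linarith)]
    nlinarith

include hp hsum in
lemma summable_log : Summable (fun i => Real.log (1 - p i)) := by
  have hq := summable_q hp hsum
  refine Summable.of_abs (Summable.of_nonneg_of_le (fun i => abs_nonneg _) ?_ hq)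
  intro i
  have h2 : 0 ≤ p i := (hp i).1
  have h3 : p i < 1 := (hp i).2
  have hpos : 0 < 1 - p i := by linarith
  have hlog : Real.log (1 - p i) ≤ 0 :=
    Real.log_nonpos (by linarith) (by linarith)
  rw [abs_of_nonpos hlog]
  have : -Real.log (1 - p i) = Real.log (1 - p i)⁻¹ := (Real.log_inv _).symm
  rw [this]
  have hinvpos : 0 < (1 - p i)⁻¹ := inv_pos.2 hpos
  calc Real.log (1 - p i)⁻¹ ≤ (1 - p i)⁻¹ - 1 := Real.log_le_sub_one_of_pos hinvpos
    _ = p i / (1 - p i) := by field_simp; ring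

include hp hsum in
lemma pb_eq_s9 (y : ℕ) :
    pb p y = Real.exp (∑' k, Real.log (1 - p k)) *
      (auxF (fun i => ENNReal.ofReal (p i / (1 - p i))) y).toReal := by
  classical
  have hpos : ∀ i, (0:ℝ) < 1 - p i := fun i => by linarith [(hp i).2]
  have hq0 : ∀ i, 0 ≤ p i / (1 - p i) := fun i => div_nonneg (hp i).1 (hpos i).le
  have hℓ : Summable (fun i => Real.log (1 - p i)) := summable_log hp hsum
  set T := ∑' k, Real.log (1 - p k) with hT
  have hterm : ∀ J : {J : Finset ℕ // J.card = y},
      (∏ i ∈ (J : Finset ℕ), p i) * ∏' k : {k : ℕ // k ∉ (J : Finset ℕ)}, (1 - p k)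
        = Real.exp T * ∏ i ∈ (J : Finset ℕ), (p i / (1 - p i)) := by
    intro J
    have hs : Summable fun k : {k : ℕ // k ∉ (J : Finset ℕ)} => Real.log (1 - p ↑k) :=
      hℓ.subtype _
    have hprod := hs.hasSum.rexp
    have hfun : (Real.exp ∘ fun k : {k : ℕ // k ∉ (J : Finset ℕ)} => Real.log (1 - p ↑k))
        = fun k : {k : ℕ // k ∉ (J : Finset ℕ)} => 1 - p ↑k :=
      funext fun k => Real.exp_log (hpos ↑k)
    rw [hfun] at hprod
    have t1 : (∏' k : {k : ℕ // k ∉ (J : Finset ℕ)}, (1 - p ↑k))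
        = Real.exp (∑' k : {k : ℕ // k ∉ (J : Finset ℕ)}, Real.log (1 - p ↑k)) :=
      hprod.tprod_eq
    have t2 : (∑' k : {k : ℕ // k ∉ (J : Finset ℕ)}, Real.log (1 - p ↑k))
        = T - ∑ i ∈ (J : Finset ℕ), Real.log (1 - p i) := by
      have := Summable.sum_add_tsum_subtype_compl hℓ (J : Finset ℕ)
      linarith [this]
    have t3 : Real.exp (T - ∑ i ∈ (J : Finset ℕ), Real.log (1 - p i))
        = Real.exp T / ∏ i ∈ (J : Finset ℕ), (1 - p i) := by
      rw [Real.exp_sub, Real.exp_sum]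
      congr 1
      exact Finset.prod_congr rfl fun i _ => Real.exp_log (hpos i)
    rw [t1, t2, t3]
    rw [div_eq_mul_inv, ← mul_assoc, mul_comm (∏ i ∈ (J : Finset ℕ), p i), mul_assoc]
    congr 1
    rw [← Finset.prod_inv_distrib, ← Finset.prod_mul_distrib]
    exact Finset.prod_congr rfl fun i _ => by rw [div_eq_mul_inv]
  rw [pb, tsum_congr hterm, tsum_mul_left]
  congr 1
  have hterm2 : ∀ J : {J : Finset ℕ // J.card = y},
      ∏ i ∈ (J : Finset ℕ), (p i / (1 - p i))
        = ((∏ i ∈ (J : Finset ℕ), ENNReal.ofReal (p i / (1 - p i))).toReal) := by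
    intro J
    rw [ENNReal.toReal_prod]
    exact Finset.prod_congr rfl fun i _ => (ENNReal.toReal_ofReal (hq0 i)).symm
  rw [tsum_congr hterm2]
  exact (ENNReal.tsum_toReal_eq fun J =>
    (ENNReal.prod_lt_top fun i _ => ENNReal.ofReal_lt_top).ne).symm


end RealSide

/-- The ratio `(x+1) b(x+1)/b(x)` is strictly decreasing on the support of `b`. -/
theorem stmt_9 (p : ℕ → ℝ) (hp : ∀ i, p i ∈ Set.Ico (0 : ℝ) 1) (hsum : Summable p)
    (l : ℝ) (hl : l = ∑' i, p i) (hlpos : 0 < l)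
    (x : ℕ) (hx : 0 < pb p x) (hx1 : 0 < pb p (x + 1)) :
    ((x : ℝ) + 2) * pb p (x + 2) / pb p (x + 1) < ((x : ℝ) + 1) * pb p (x + 1) / pb p x := by
  classical
  set Q : ℕ → ENNReal := fun i => ENNReal.ofReal (p i / (1 - p i)) with hQ
  set T : ℝ := ∑' k, Real.log (1 - p k) with hT
  have hCP : 0 < Real.exp T := Real.exp_pos T
  have hpb : ∀ y, pb p y = Real.exp T * (auxF Q y).toReal := fun y => pb_eq_s9 hp hsum y
  have hq0 : ∀ i, 0 ≤ p i / (1 - p i) := fun i =>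
    div_nonneg (hp i).1 (by linarith [(hp i).2])
  have hQtop : ∑' i, Q i ≠ ⊤ := by
    rw [hQ, ← ENNReal.ofReal_tsum_of_nonneg hq0 (summable_q hp hsum)]
    exact ENNReal.ofReal_ne_top
  have hFfin : ∀ y, auxF Q y ≠ ⊤ := auxF_ne_top Q hQtop
  -- positivity
  have hEx : 0 < (auxF Q x).toReal := by
    rw [hpb x] at hx
    nlinarith [ENNReal.toReal_nonneg (a := auxF Q x)]
  have hEx1 : 0 < (auxF Q (x + 1)).toReal := by
    rw [hpb (x + 1)] at hx1
    nlinarith [ENNReal.toReal_nonneg (a := auxF Q (x + 1))]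
  have hFne0 : auxF Q (x + 1) ≠ 0 := by
    intro h
    rw [h] at hEx1
    simp at hEx1
  obtain ⟨J₀, hJ₀⟩ : ∃ J : {J : Finset ℕ // J.card = x + 1}, ∏ i ∈ (J : Finset ℕ), Q i ≠ 0 := by
    by_contra hall
    push_neg at hall
    exact hFne0 (ENNReal.tsum_eq_zero.mpr hall)
  have hcore := core Q x J₀.1 J₀.2
  have hpadne : (x + 1 : ENNReal) * (∏ i ∈ (J₀ : Finset ℕ), Q i) ^ 2 ≠ 0 := by
    apply mul_ne_zero
    · exact (lt_of_lt_of_le zero_lt_one (le_add_self)).ne'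
    · exact pow_ne_zero 2 hJ₀
  have hrhstop : (x + 1 : ENNReal) * auxF Q (x + 1) ^ 2 ≠ ⊤ := by
    apply ENNReal.mul_ne_top
    · exact ENNReal.add_ne_top.2 ⟨ENNReal.natCast_ne_top x, ENNReal.one_ne_top⟩
    · exact ENNReal.pow_ne_top (hFfin (x + 1))
  have hlhstop : (x + 2 : ENNReal) * (auxF Q x * auxF Q (x + 2)) ≠ ⊤ :=
    ne_top_of_le_ne_top hrhstop (le_trans (le_add_right le_rfl) hcore)
  have hstrict : (x + 2 : ENNReal) * (auxF Q x * auxF Q (x + 2))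
      < (x + 1 : ENNReal) * auxF Q (x + 1) ^ 2 :=
    lt_of_lt_of_le (ENNReal.lt_add_right hlhstop hpadne) hcore
  have hreal : ((x : ℝ) + 2) * ((auxF Q x).toReal * (auxF Q (x + 2)).toReal)
      < ((x : ℝ) + 1) * (auxF Q (x + 1)).toReal ^ 2 := by
    have := (ENNReal.toReal_lt_toReal hlhstop hrhstop).2 hstrict
    simp only [ENNReal.toReal_mul, ENNReal.toReal_pow] at this
    have hc2 : ((x : ENNReal) + 2).toReal = (x : ℝ) + 2 := by
      rw [ENNReal.toReal_add (ENNReal.natCast_ne_top x) (by norm_num)]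
      simp
    have hc1 : ((x : ENNReal) + 1).toReal = (x : ℝ) + 1 := by
      rw [ENNReal.toReal_add (ENNReal.natCast_ne_top x) ENNReal.one_ne_top]
      simp
    rwa [hc2, hc1] at this
  rw [div_lt_div_iff₀ hx1 hx, hpb x, hpb (x + 1), hpb (x + 2)]
  nlinarith [mul_lt_mul_of_pos_left hreal (mul_pos hCP hCP),
    ENNReal.toReal_nonneg (a := auxF Q (x + 2)), hCP, hEx, hEx1]
end

section
/- For any integer x ≥ 1 with b(x−1) > 0 and b(x) > 0: if x b(x) ≥ λ b(x−1), then (x+1) b(x+1) ≥ (λ − p*/(1 − p*)) · b(x). -/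
open scoped BigOperators

namespace PB14
open Filter Topology

noncomputable def esym (f : ℕ → ℝ) (s : Finset ℕ) (k : ℕ) : ℝ :=
  ∑ J ∈ s.powersetCard k, ∏ i ∈ J, f i

noncomputable def Es (f : ℕ → ℝ) (k : ℕ) : ℝ :=
  ∑' J : {J : Finset ℕ // J.card = k}, ∏ i ∈ (J : Finset ℕ), f i


lemma esym_zero (f : ℕ → ℝ) (s : Finset ℕ) : esym f s 0 = 1 := by
  simp [esym]

lemma esym_empty (f : ℕ → ℝ) (k : ℕ) : esym f ∅ (k+1) = 0 := by
  rw [esym, Finset.powersetCard_eq_empty.2 (by simp)]; simp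

lemma esym_insert (f : ℕ → ℝ) {a : ℕ} {s : Finset ℕ} (ha : a ∉ s) (k : ℕ) :
    esym f (insert a s) (k+1) = esym f s (k+1) + f a * esym f s k := by
  classical
  unfold esym
  rw [Finset.powersetCard_succ_insert ha, Finset.sum_union, Finset.sum_image]
  · rw [Finset.mul_sum]
    congr 1
    refine Finset.sum_congr rfl ?_
    intro J hJ
    rw [Finset.mem_powersetCard] at hJ
    rw [Finset.prod_insert (fun h => ha (hJ.1 h))]
  · intro J hJ J' hJ' h
    rw [Finset.mem_coe, Finset.mem_powersetCard] at hJ hJ'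
    have hJa : a ∉ J := fun h => ha (hJ.1 h)
    have hJ'a : a ∉ J' := fun h => ha (hJ'.1 h)
    rw [← Finset.erase_insert hJa, ← Finset.erase_insert hJ'a, h]
  · rw [Finset.disjoint_right]
    intro J hJ hJ2
    rw [Finset.mem_image] at hJ
    obtain ⟨K, hK, rfl⟩ := hJ
    rw [Finset.mem_powersetCard] at hJ2
    exact ha (hJ2.1 (Finset.mem_insert_self a K))

lemma esym_nonneg {f : ℕ → ℝ} (hf : ∀ i, 0 ≤ f i) (s : Finset ℕ) (k : ℕ) :
    0 ≤ esym f s k :=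
  Finset.sum_nonneg fun J _ => Finset.prod_nonneg fun i _ => hf i

lemma esym_mono_set {f : ℕ → ℝ} (hf : ∀ i, 0 ≤ f i) {s t : Finset ℕ} (h : s ⊆ t) (k : ℕ) :
    esym f s k ≤ esym f t k :=
  Finset.sum_le_sum_of_subset_of_nonneg (Finset.powersetCard_mono h)
    (fun J _ _ => Finset.prod_nonneg fun i _ => hf i)

lemma esym_mono_fun {f g : ℕ → ℝ} (hf : ∀ i, 0 ≤ f i) (hfg : ∀ i, f i ≤ g i)
    (s : Finset ℕ) (k : ℕ) : esym f s k ≤ esym g s k :=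
  Finset.sum_le_sum fun J _ => Finset.prod_le_prod (fun i _ => hf i) (fun i _ => hfg i)

lemma esym_le_pow {f : ℕ → ℝ} (hf : ∀ i, 0 ≤ f i) (s : Finset ℕ) (k : ℕ) :
    esym f s k ≤ (∑ i ∈ s, f i) ^ k := by
  classical
  induction s using Finset.induction_on generalizing k with
  | empty =>
    cases k with
    | zero => simp [esym_zero]
    | succ k => simp [esym_empty]
  | insert a s ha ih =>
    have hsum0 : 0 ≤ ∑ i ∈ s, f i := Finset.sum_nonneg fun i _ => hf i
    cases k with
    | zero => simp [esym_zero]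
    | succ k =>
      rw [esym_insert f ha, Finset.sum_insert ha]
      have h1 : esym f s (k+1) ≤ (∑ i ∈ s, f i)^(k+1) := ih _
      have h2 : f a * esym f s k ≤ f a * (∑ i ∈ s, f i)^k :=
        mul_le_mul_of_nonneg_left (ih _) (hf a)
      have h3 : (∑ i ∈ s, f i)^(k+1) + f a * (∑ i ∈ s, f i)^k ≤ (f a + ∑ i ∈ s, f i)^(k+1) := by
        have hb : (∑ i ∈ s, f i)^k ≤ (f a + ∑ i ∈ s, f i)^k :=
          pow_le_pow_left₀ hsum0 (by linarith [hf a]) k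
        calc (∑ i ∈ s, f i)^(k+1) + f a * (∑ i ∈ s, f i)^k
            = (∑ i ∈ s, f i + f a) * (∑ i ∈ s, f i)^k := by ring
          _ ≤ (∑ i ∈ s, f i + f a) * (f a + ∑ i ∈ s, f i)^k := by
              apply mul_le_mul_of_nonneg_left hb (by linarith [hf a])
          _ = (f a + ∑ i ∈ s, f i)^(k+1) := by ring
      linarith


lemma esym_lc {f : ℕ → ℝ} (hf : ∀ i, 0 ≤ f i) (s : Finset ℕ) :
    ∀ k l : ℕ, k ≤ l → esym f s k * esym f s (l+2) ≤ esym f s (k+1) * esym f s (l+1) := by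
  classical
  induction s using Finset.induction_on with
  | empty =>
    intro k l hkl
    cases k with
    | zero => simp [esym_zero, esym_empty]
    | succ k => simp [esym_empty]
  | insert a s ha ih =>
    intro k l hkl
    have hfa : 0 ≤ f a := hf a
    have hE : ∀ m, 0 ≤ esym f s m := esym_nonneg hf s
    cases k with
    | zero =>
      rw [esym_zero, one_mul, esym_insert f ha, esym_insert f ha, esym_insert f ha, esym_zero]
      have h1 := ih 0 l (Nat.zero_le l)
      rw [esym_zero, one_mul] at h1
      nlinarith [hE l, hE (l+1), hE (l+2), hE 0, hE 1,
        mul_nonneg hfa (hE l), mul_nonneg hfa (hE (l+1)),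
        mul_nonneg (mul_nonneg hfa hfa) (hE l),
        mul_nonneg (mul_nonneg hfa (hE 1)) (hE l)]
    | succ k' =>
      obtain ⟨l', rfl⟩ : ∃ l', l = l' + 1 := ⟨l - 1, by omega⟩
      have hk'l' : k' ≤ l' := by omega
      have hcross : esym f s k' * esym f s (l'+3) ≤ esym f s (k'+2) * esym f s (l'+1) := by
        rcases eq_or_lt_of_le hk'l' with h | h
        · subst h
          have h := ih k' (k'+1) (Nat.le_succ k')
          have e : k'+1+2 = k'+3 := by omega
          have e2 : k'+1+1 = k'+2 := by omega
          rw [e, e2] at h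
          linarith [h]
        · have ha1 := ih k' (l'+1) (by omega)
          have e : l'+1+2 = l'+3 := by omega
          have e2 : l'+1+1 = l'+2 := by omega
          rw [e, e2] at ha1
          have ha2 := ih (k'+1) l' (by omega)
          have hb : 0 ≤ esym f s k' := hE k'
          calc esym f s k' * esym f s (l'+3) ≤ esym f s (k'+1) * esym f s (l'+2) := ha1
            _ ≤ esym f s (k'+2) * esym f s (l'+1) := ha2
      -- expand all esym over insert
      have e1 : esym f (insert a s) (k'+1) = esym f s (k'+1) + f a * esym f s k' :=
        esym_insert f ha k'
      have e2 : esym f (insert a s) (k'+2) = esym f s (k'+2) + f a * esym f s (k'+1) :=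
        esym_insert f ha (k'+1)
      have e3 : esym f (insert a s) (l'+3) = esym f s (l'+3) + f a * esym f s (l'+2) :=
        esym_insert f ha (l'+2)
      have e4 : esym f (insert a s) (l'+2) = esym f s (l'+2) + f a * esym f s (l'+1) :=
        esym_insert f ha (l'+1)
      have h1 := ih (k'+1) (l'+1) (by omega)
      have h2 := ih k' l' hk'l'
      have goal' : esym f (insert a s) (k'+1) * esym f (insert a s) (l'+1+2)
          ≤ esym f (insert a s) (k'+1+1) * esym f (insert a s) (l'+1+1) := by
        have e3' : esym f (insert a s) (l'+1+2) = esym f s (l'+3) + f a * esym f s (l'+2) := by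
          rw [show l'+1+2 = l'+2+1 by ring, esym_insert f ha (l'+2)]
        have e4' : esym f (insert a s) (l'+1+1) = esym f s (l'+2) + f a * esym f s (l'+1) := by
          rw [show l'+1+1 = l'+1+1 by ring, esym_insert f ha (l'+1)]
        have e2' : esym f (insert a s) (k'+1+1) = esym f s (k'+2) + f a * esym f s (k'+1) := by
          rw [show k'+1+1 = k'+1+1 by ring, esym_insert f ha (k'+1)]
        rw [e1, e2', e3', e4']
        nlinarith [h1, mul_le_mul_of_nonneg_left hcross hfa,
          mul_le_mul_of_nonneg_left h2 (mul_nonneg hfa hfa)]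
      exact goal'



lemma sum_subtype_powersetCard (f : ℕ → ℝ) (S : Finset ℕ) (k : ℕ) :
    ∑ J ∈ (S.powersetCard k).subtype (fun J => J.card = k),
      (∏ i ∈ (J : Finset ℕ), f i) = esym f S k := by
  classical
  rw [Finset.sum_subtype_eq_sum_filter (fun K => ∏ i ∈ K, f i) (p := fun J => J.card = k)]
  unfold esym
  congr 1
  apply Finset.filter_true_of_mem
  intro J hJ
  exact (Finset.mem_powersetCard.1 hJ).2

lemma summable_Es {f : ℕ → ℝ} (hf0 : ∀ i, 0 ≤ f i) (hfs : Summable f) (k : ℕ) :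
    Summable (fun J : {J : Finset ℕ // J.card = k} => ∏ i ∈ (J : Finset ℕ), f i) := by
  classical
  apply summable_of_sum_le (c := (∑' i, f i) ^ k)
  · intro J
    exact Finset.prod_nonneg fun i _ => hf0 i
  · intro u
    set S : Finset ℕ := u.biUnion (fun J => J.1) with hS
    have h1 : ∑ J ∈ u, (∏ i ∈ (J : Finset ℕ), f i) = ∑ K ∈ u.image (fun J => J.1),
        ∏ i ∈ K, f i := by
      rw [Finset.sum_image]
      intro a _ b _ h
      exact Subtype.coe_injective h
    rw [h1]
    have h2 : u.image (fun J => J.1) ⊆ S.powersetCard k := by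
      intro K hK
      rw [Finset.mem_image] at hK
      obtain ⟨J, hJ, rfl⟩ := hK
      rw [Finset.mem_powersetCard]
      exact ⟨Finset.subset_biUnion_of_mem _ hJ, J.2⟩
    have h3 : ∑ K ∈ u.image (fun J => J.1), ∏ i ∈ K, f i ≤ esym f S k :=
      Finset.sum_le_sum_of_subset_of_nonneg h2
        (fun K _ _ => Finset.prod_nonneg fun i _ => hf0 i)
    have h4 : esym f S k ≤ (∑ i ∈ S, f i) ^ k := esym_le_pow hf0 S k
    have h5 : (∑ i ∈ S, f i) ^ k ≤ (∑' i, f i) ^ k := by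
      apply pow_le_pow_left₀ (Finset.sum_nonneg fun i _ => hf0 i)
      exact Summable.sum_le_tsum S (fun i _ => hf0 i) hfs
    linarith

lemma tendsto_esym {f : ℕ → ℝ} (hf0 : ∀ i, 0 ≤ f i) (hfs : Summable f) (k : ℕ) :
    Tendsto (fun S : Finset ℕ => esym f S k) atTop (𝓝 (Es f k)) := by
  classical
  have hs := (summable_Es hf0 hfs k).hasSum
  have hΦ : Tendsto (fun S : Finset ℕ => (S.powersetCard k).subtype (fun J => J.card = k))
      atTop atTop := by
    apply tendsto_atTop_atTop_of_monotone
    · intro S S' h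
      exact Finset.subtype_mono (Finset.powersetCard_mono h)
    · intro T
      refine ⟨T.biUnion (fun J => J.1), ?_⟩
      intro J hJ
      rw [Finset.mem_subtype, Finset.mem_powersetCard]
      exact ⟨Finset.subset_biUnion_of_mem _ hJ, J.2⟩
  have h := hs.comp hΦ
  refine h.congr ?_
  intro S
  exact sum_subtype_powersetCard f S k

lemma esym_le_Es {f : ℕ → ℝ} (hf0 : ∀ i, 0 ≤ f i) (hfs : Summable f) (S : Finset ℕ) (k : ℕ) :
    esym f S k ≤ Es f k := by
  classical
  rw [← sum_subtype_powersetCard f S k]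
  exact Summable.sum_le_tsum _ (fun J _ => Finset.prod_nonneg fun i _ => hf0 i) (summable_Es hf0 hfs k)

lemma Es_nonneg {f : ℕ → ℝ} (hf0 : ∀ i, 0 ≤ f i) (k : ℕ) : 0 ≤ Es f k :=
  tsum_nonneg fun J => Finset.prod_nonneg fun i _ => hf0 i

lemma Es_zero (f : ℕ → ℝ) : Es f 0 = 1 := by
  unfold Es
  rw [tsum_eq_single (⟨∅, Finset.card_empty⟩ : {J : Finset ℕ // J.card = 0})]
  · simp
  · intro J hJ
    exact absurd (Subtype.ext (Finset.card_eq_zero.1 J.2)) hJ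



lemma esym_update_not_mem {f : ℕ → ℝ} {i : ℕ} {s : Finset ℕ} (hi : i ∉ s) (k : ℕ) :
    esym (Function.update f i 0) s k = esym f s k := by
  classical
  unfold esym
  refine Finset.sum_congr rfl ?_
  intro J hJ
  refine Finset.prod_congr rfl ?_
  intro j hj
  have : j ≠ i := fun h => hi ((Finset.mem_powersetCard.1 hJ).1 (h ▸ hj))
  rw [Function.update_of_ne this]

lemma esym_update_erase {f : ℕ → ℝ} (i : ℕ) (s : Finset ℕ) (m : ℕ) :
    esym (Function.update f i 0) s m = esym f (s.erase i) m := by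
  classical
  by_cases hi : i ∈ s
  · have hie : i ∉ s.erase i := Finset.notMem_erase i s
    have hs : s = insert i (s.erase i) := (Finset.insert_erase hi).symm
    cases m with
    | zero => rw [esym_zero, esym_zero]
    | succ k =>
      rw [hs, esym_insert (Function.update f i 0) hie k, Function.update_self, zero_mul,
        add_zero, esym_update_not_mem hie (k+1), Finset.erase_insert hie]
  · rw [Finset.erase_eq_of_notMem hi, esym_update_not_mem hi]

lemma esym_update_mem {f : ℕ → ℝ} {i : ℕ} {s : Finset ℕ} (hi : i ∈ s) (k : ℕ) :
    esym f s (k+1) = esym (Function.update f i 0) s (k+1)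
      + f i * esym (Function.update f i 0) s k := by
  classical
  have hie : i ∉ s.erase i := Finset.notMem_erase i s
  have hs : s = insert i (s.erase i) := (Finset.insert_erase hi).symm
  rw [esym_update_erase i s (k+1), esym_update_erase i s k]
  calc esym f s (k+1) = esym f (insert i (s.erase i)) (k+1) := by rw [← hs]
    _ = esym f (s.erase i) (k+1) + f i * esym f (s.erase i) k := esym_insert f hie k

lemma esym_deriv (f : ℕ → ℝ) (s : Finset ℕ) (k : ℕ) :
    ∑ i ∈ s, f i * esym (Function.update f i 0) s k = (k+1 : ℝ) * esym f s (k+1) := by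
  classical
  -- rewrite each inner esym as a sum over J with i ∉ J
  have hinner : ∀ i ∈ s, f i * esym (Function.update f i 0) s k
      = ∑ J ∈ (s.powersetCard k).filter (fun J => i ∉ J), f i * ∏ j ∈ J, f j := by
    intro i _
    unfold esym
    rw [Finset.mul_sum, ← Finset.sum_filter_add_sum_filter_not (s.powersetCard k)
      (fun J => i ∉ J) (fun J => f i * ∏ j ∈ J, Function.update f i 0 j)]
    have h2 : ∑ J ∈ (s.powersetCard k).filter (fun J => ¬ i ∉ J),
        f i * ∏ j ∈ J, Function.update f i 0 j = 0 := by
      apply Finset.sum_eq_zero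
      intro J hJ
      rw [Finset.mem_filter] at hJ
      have hiJ : i ∈ J := not_not.1 hJ.2
      have : ∏ j ∈ J, Function.update f i 0 j = 0 :=
        Finset.prod_eq_zero hiJ (Function.update_self i 0 f)
      rw [this, mul_zero]
    rw [h2, add_zero]
    refine Finset.sum_congr rfl ?_
    intro J hJ
    rw [Finset.mem_filter] at hJ
    congr 1
    refine Finset.prod_congr rfl ?_
    intro j hj
    have hji : j ≠ i := by intro h; subst h; exact hJ.2 hj
    rw [Function.update_of_ne hji]
  rw [Finset.sum_congr rfl hinner]
  -- now a double sum over pairs (i, J), i ∈ s, J ⊆ s, |J| = k, i ∉ J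
  rw [Finset.sum_sigma']
  -- RHS: (k+1) * esym = ∑_{K} ∑_{i ∈ K} ∏_{j ∈ K} f j
  have hrhs : (k+1 : ℝ) * esym f s (k+1)
      = ∑ K ∈ s.powersetCard (k+1), ∑ i ∈ K, f i * ∏ j ∈ K.erase i, f j := by
    unfold esym
    rw [Finset.mul_sum]
    refine Finset.sum_congr rfl ?_
    intro K hK
    have hcard : K.card = k+1 := (Finset.mem_powersetCard.1 hK).2
    have : ∀ i ∈ K, f i * ∏ j ∈ K.erase i, f j = ∏ j ∈ K, f j := by
      intro i hi
      exact Finset.mul_prod_erase K f hi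
    rw [Finset.sum_congr rfl this, Finset.sum_const, hcard, nsmul_eq_mul]
    push_cast
    ring
  rw [hrhs, Finset.sum_sigma']
  apply Finset.sum_nbij' (fun x => (⟨insert x.1 x.2, x.1⟩ : Σ _ : Finset ℕ, ℕ))
    (fun x => (⟨x.2, x.1.erase x.2⟩ : Σ _ : ℕ, Finset ℕ))
  · intro x hx
    rw [Finset.mem_sigma] at hx ⊢
    obtain ⟨h1, h2⟩ := hx
    rw [Finset.mem_filter] at h2
    obtain ⟨hpc, hni⟩ := h2
    rw [Finset.mem_powersetCard] at hpc
    constructor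
    · rw [Finset.mem_powersetCard]
      constructor
      · exact Finset.insert_subset h1 hpc.1
      · rw [Finset.card_insert_of_notMem hni, hpc.2]
    · exact Finset.mem_insert_self _ _
  · intro x hx
    rw [Finset.mem_sigma] at hx ⊢
    obtain ⟨h1, h2⟩ := hx
    rw [Finset.mem_powersetCard] at h1
    constructor
    · exact h1.1 h2
    · rw [Finset.mem_filter, Finset.mem_powersetCard]
      refine ⟨⟨?_, ?_⟩, Finset.notMem_erase _ _⟩
      · exact (Finset.erase_subset _ _).trans h1.1
      · rw [Finset.card_erase_of_mem h2, h1.2]; omega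
  · intro x hx
    rw [Finset.mem_sigma] at hx
    obtain ⟨h1, h2⟩ := hx
    rw [Finset.mem_filter] at h2
    ext
    · simp
    · simp [Finset.erase_insert h2.2]
  · intro x hx
    rw [Finset.mem_sigma] at hx
    obtain ⟨h1, h2⟩ := hx
    ext
    · simp [Finset.insert_erase h2]
    · simp
  · intro x hx
    rw [Finset.mem_sigma] at hx
    obtain ⟨h1, h2⟩ := hx
    rw [Finset.mem_filter] at h2
    simp only
    rw [Finset.erase_insert h2.2]



section
variable {f : ℕ → ℝ}

lemma update_nonneg (hf0 : ∀ i, 0 ≤ f i) (i : ℕ) : ∀ j, 0 ≤ Function.update f i 0 j := by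
  intro j
  rcases eq_or_ne j i with h | h
  · subst h; rw [Function.update_self]
  · rw [Function.update_of_ne h]; exact hf0 j

lemma update_summable (hf0 : ∀ i, 0 ≤ f i) (hfs : Summable f) (i : ℕ) :
    Summable (Function.update f i 0) := by
  refine Summable.of_nonneg_of_le (update_nonneg hf0 i) (fun j => ?_) hfs
  rcases eq_or_ne j i with h | h
  · subst h; rw [Function.update_self]; exact hf0 j
  · rw [Function.update_of_ne h]

lemma Es_update (hf0 : ∀ i, 0 ≤ f i) (hfs : Summable f) (i : ℕ) (k : ℕ) :
    Es f (k+1) = Es (Function.update f i 0) (k+1) + f i * Es (Function.update f i 0) k := by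
  have h1 := tendsto_esym hf0 hfs (k+1)
  have h2 := tendsto_esym (update_nonneg hf0 i) (update_summable hf0 hfs i) (k+1)
  have h3 := tendsto_esym (update_nonneg hf0 i) (update_summable hf0 hfs i) k
  have hev : ∀ᶠ S in (atTop : Filter (Finset ℕ)),
      esym f S (k+1) = esym (Function.update f i 0) S (k+1)
        + f i * esym (Function.update f i 0) S k := by
    refine eventually_atTop.2 ⟨{i}, fun S hS => ?_⟩
    exact esym_update_mem (Finset.singleton_subset_iff.1 hS) k
  exact tendsto_nhds_unique (h1.congr' hev) (h2.add (h3.const_mul (f i)))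

lemma sum_le_Es_deriv (hf0 : ∀ i, 0 ≤ f i) (hfs : Summable f) (I : Finset ℕ) (k : ℕ) :
    ∑ i ∈ I, f i * Es (Function.update f i 0) k ≤ (k+1 : ℝ) * Es f (k+1) := by
  have hT : Tendsto (fun S : Finset ℕ => ∑ i ∈ I, f i * esym (Function.update f i 0) S k)
      atTop (𝓝 (∑ i ∈ I, f i * Es (Function.update f i 0) k)) := by
    apply tendsto_finset_sum
    intro i _
    exact (tendsto_esym (update_nonneg hf0 i) (update_summable hf0 hfs i) k).const_mul (f i)
  apply le_of_tendsto hT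
  filter_upwards [eventually_ge_atTop I] with S hS
  calc ∑ i ∈ I, f i * esym (Function.update f i 0) S k
      ≤ ∑ i ∈ S, f i * esym (Function.update f i 0) S k := by
        apply Finset.sum_le_sum_of_subset_of_nonneg hS
        intro i _ _
        exact mul_nonneg (hf0 i) (esym_nonneg (update_nonneg hf0 i) S k)
    _ = (k+1 : ℝ) * esym f S (k+1) := esym_deriv f S k
    _ ≤ (k+1 : ℝ) * Es f (k+1) := by
        apply mul_le_mul_of_nonneg_left (esym_le_Es hf0 hfs S (k+1))
        positivity

lemma summable_mul_Es (hf0 : ∀ i, 0 ≤ f i) (hfs : Summable f) (k : ℕ) :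
    Summable (fun i => f i * Es (Function.update f i 0) k) := by
  apply summable_of_sum_le (c := (k+1 : ℝ) * Es f (k+1))
  · intro i
    exact mul_nonneg (hf0 i) (Es_nonneg (update_nonneg hf0 i) k)
  · intro u
    exact sum_le_Es_deriv hf0 hfs u k

lemma Es_deriv (hf0 : ∀ i, 0 ≤ f i) (hfs : Summable f) (k : ℕ) :
    ∑' i, f i * Es (Function.update f i 0) k = (k+1 : ℝ) * Es f (k+1) := by
  apply le_antisymm
  · exact Summable.tsum_le_of_sum_le (summable_mul_Es hf0 hfs k) (fun I => sum_le_Es_deriv hf0 hfs I k)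
  · apply le_of_tendsto ((tendsto_esym hf0 hfs (k+1)).const_mul ((k+1 : ℝ)))
    refine Eventually.of_forall (fun S => ?_)
    calc (k+1 : ℝ) * esym f S (k+1)
        = ∑ i ∈ S, f i * esym (Function.update f i 0) S k := (esym_deriv f S k).symm
      _ ≤ ∑ i ∈ S, f i * Es (Function.update f i 0) k := by
          apply Finset.sum_le_sum
          intro i _
          exact mul_le_mul_of_nonneg_left
            (esym_le_Es (update_nonneg hf0 i) (update_summable hf0 hfs i) S k) (hf0 i)
      _ ≤ ∑' i, f i * Es (Function.update f i 0) k := by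
          apply Summable.sum_le_tsum S
          · intro i _
            exact mul_nonneg (hf0 i) (Es_nonneg (update_nonneg hf0 i) k)
          · exact summable_mul_Es hf0 hfs k

lemma Es_bracket (hf0 : ∀ i, 0 ≤ f i) (hfs : Summable f) (i : ℕ) (z : ℕ) :
    Es (Function.update f i 0) z * Es f (z+2)
      ≤ Es (Function.update f i 0) (z+1) * Es f (z+1) := by
  set u := Function.update f i 0 with hu
  have hu0 : ∀ j, 0 ≤ u j := update_nonneg hf0 i
  have hus : Summable u := update_summable hf0 hfs i
  have hL : Tendsto (fun S : Finset ℕ => esym u S z * esym f S (z+2)) atTop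
      (𝓝 (Es u z * Es f (z+2))) :=
    (tendsto_esym hu0 hus z).mul (tendsto_esym hf0 hfs (z+2))
  have hR : Tendsto (fun S : Finset ℕ => esym u S (z+1) * esym f S (z+1)) atTop
      (𝓝 (Es u (z+1) * Es f (z+1))) :=
    (tendsto_esym hu0 hus (z+1)).mul (tendsto_esym hf0 hfs (z+1))
  apply le_of_tendsto_of_tendsto hL hR
  rw [EventuallyLE]
  filter_upwards [eventually_ge_atTop ({i} : Finset ℕ)] with S hS
  have hiS : i ∈ S := Finset.singleton_subset_iff.1 hS
  have e1 : esym f S (z+2) = esym u S (z+2) + f i * esym u S (z+1) :=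
    esym_update_mem hiS (z+1)
  have e2 : esym f S (z+1) = esym u S (z+1) + f i * esym u S z :=
    esym_update_mem hiS z
  rw [e1, e2]
  have hlc := esym_lc hu0 S z z le_rfl
  nlinarith [mul_nonneg (hf0 i) (mul_nonneg (esym_nonneg hu0 S z) (esym_nonneg hu0 S (z+1)))]

end


lemma neg_log_le {t : ℝ} (h0 : 0 ≤ t) (h1 : t < 1) :
    -Real.log (1 - t) ≤ t / (1 - t) := by
  have hpos : 0 < 1 - t := by linarith
  have h2 : -Real.log (1 - t) = Real.log (1 - t)⁻¹ := (Real.log_inv (1 - t)).symm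
  rw [h2]
  have h3 : Real.log (1 - t)⁻¹ ≤ (1 - t)⁻¹ - 1 :=
    Real.log_le_sub_one_of_pos (by positivity)
  have h4 : (1 - t)⁻¹ - 1 = t / (1 - t) := by
    rw [eq_div_iff hpos.ne', sub_mul, inv_mul_cancel₀ hpos.ne']; ring
  linarith

lemma log_summable {p : ℕ → ℝ} (hp : ∀ i, p i ∈ Set.Ico (0 : ℝ) 1) (hsum : Summable p)
    {pstar : ℝ} (hps1 : pstar < 1) (hub : ∀ i, p i ≤ pstar) :
    Summable (fun k => Real.log (1 - p k)) := by
  rw [← summable_neg_iff]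
  have hd : 0 < 1 - pstar := by linarith
  refine Summable.of_nonneg_of_le ?_ ?_ (hsum.mul_right ((1 - pstar)⁻¹))
  · intro k
    have h := Real.log_nonpos (x := 1 - p k) (by linarith [(hp k).1, (hp k).2])
      (by linarith [(hp k).1])
    linarith
  · intro k
    have h1 := neg_log_le (hp k).1 (hp k).2
    have h2 : p k / (1 - p k) ≤ p k * (1 - pstar)⁻¹ := by
      rw [div_eq_mul_inv]
      apply mul_le_mul_of_nonneg_left _ (hp k).1
      apply inv_anti₀ hd
      linarith [hub k]
    linarith

lemma pb_eq_C_mul_Es {p : ℕ → ℝ} (hp : ∀ i, p i ∈ Set.Ico (0 : ℝ) 1)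
    (hL : Summable (fun k => Real.log (1 - p k))) (m : ℕ) :
    pb p m = Real.exp (∑' k, Real.log (1 - p k))
      * Es (fun i => p i / (1 - p i)) m := by
  have h1p : ∀ k, 0 < 1 - p k := fun k => by linarith [(hp k).2]
  unfold pb Es
  rw [← tsum_mul_left]
  apply tsum_congr
  intro J
  set C := Real.exp (∑' k, Real.log (1 - p k)) with hC
  have hsub : Summable (fun k : {k : ℕ // k ∉ (J : Finset ℕ)} => Real.log (1 - p k)) :=
    hL.subtype _
  have htp : (∏' k : {k : ℕ // k ∉ (J : Finset ℕ)}, (1 - p k))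
      = Real.exp (∑' k : {k : ℕ // k ∉ (J : Finset ℕ)}, Real.log (1 - p k)) := by
    have hfe : (fun k : {k : ℕ // k ∉ (J : Finset ℕ)} => 1 - p k)
        = (Real.exp ∘ fun k : {k : ℕ // k ∉ (J : Finset ℕ)} => Real.log (1 - p k)) :=
      funext fun k => (Real.exp_log (h1p k)).symm
    rw [hfe]
    exact (hsub.hasSum.rexp).tprod_eq
  have hsplit : ∑ k ∈ (J : Finset ℕ), Real.log (1 - p k)
      + ∑' k : {k : ℕ // k ∉ (J : Finset ℕ)}, Real.log (1 - p k)
      = ∑' k, Real.log (1 - p k) := Summable.sum_add_tsum_subtype_compl hL (J : Finset ℕ)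
  have hprodpos : 0 < ∏ i ∈ (J : Finset ℕ), (1 - p i) :=
    Finset.prod_pos fun i _ => h1p i
  have hCsplit : C = (∏ i ∈ (J : Finset ℕ), (1 - p i))
      * Real.exp (∑' k : {k : ℕ // k ∉ (J : Finset ℕ)}, Real.log (1 - p k)) := by
    rw [hC, ← hsplit, Real.exp_add, Real.exp_sum]
    congr 1
    exact Finset.prod_congr rfl fun i _ => Real.exp_log (h1p i)
  rw [htp]
  have hq : ∏ i ∈ (J : Finset ℕ), (p i / (1 - p i))
      = (∏ i ∈ (J : Finset ℕ), p i) / (∏ i ∈ (J : Finset ℕ), (1 - p i)) :=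
    Finset.prod_div_distrib _ _
  rw [hq]
  rw [hCsplit]
  field_simp



lemma core (q : ℕ → ℝ) (hq0 : ∀ i, 0 ≤ q i) (hqsum : Summable q)
    (qs : ℝ) (hqs0 : 0 ≤ qs) (hqub : ∀ i, q i ≤ qs)
    (l : ℝ) (y : ℕ) (hEy : 0 < Es q y)
    (hratio : l * Es q y ≤ ((y:ℝ)+1) * Es q (y+1)) :
    (l - qs) * Es q (y+1) ≤ ((y:ℝ)+2) * Es q (y+2) := by
  classical
  have hE0 : ∀ m, 0 ≤ Es q m := fun m => Es_nonneg hq0 m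
  have hF0 : ∀ i m, 0 ≤ Es (Function.update q i 0) m :=
    fun i m => Es_nonneg (update_nonneg hq0 i) m
  have hA : ∀ k : ℕ, ∑' i, q i * Es (Function.update q i 0) k = ((k:ℝ)+1) * Es q (k+1) :=
    fun k => by exact_mod_cast Es_deriv hq0 hqsum k
  have hB : ∀ (i : ℕ) (k : ℕ), Es q (k+1) = Es (Function.update q i 0) (k+1)
      + q i * Es (Function.update q i 0) k := fun i k => Es_update hq0 hqsum i k
  have hsum_qF : ∀ k : ℕ, Summable (fun i => q i * Es (Function.update q i 0) k) :=
    fun k => summable_mul_Es hq0 hqsum k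
  have hsum_q2F : ∀ k : ℕ, Summable (fun i => q i ^ 2 * Es (Function.update q i 0) k) := by
    intro k
    refine Summable.of_nonneg_of_le (fun i => ?_) (fun i => ?_) ((hsum_qF k).mul_left qs)
    · exact mul_nonneg (sq_nonneg _) (hF0 i k)
    · calc q i ^ 2 * Es (Function.update q i 0) k
          = q i * (q i * Es (Function.update q i 0) k) := by ring
        _ ≤ qs * (q i * Es (Function.update q i 0) k) :=
            mul_le_mul_of_nonneg_right (hqub i) (mul_nonneg (hq0 i) (hF0 i k))
  have key1 : ∀ k : ℕ, ((k:ℝ)+2) * Es q (k+2)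
      = (∑' i, q i) * Es q (k+1) - ∑' i, q i ^ 2 * Es (Function.update q i 0) k := by
    intro k
    have e : ∀ i, q i * Es (Function.update q i 0) (k+1)
        = q i * Es q (k+1) - q i ^ 2 * Es (Function.update q i 0) k := by
      intro i
      have h := hB i k
      have h2 : Es (Function.update q i 0) (k+1)
          = Es q (k+1) - q i * Es (Function.update q i 0) k := by linarith
      rw [h2]; ring
    have h3 := tsum_congr (L := SummationFilter.unconditional ℕ) e
    have h4 : ∑' i, (q i * Es q (k+1) - q i ^ 2 * Es (Function.update q i 0) k)
        = (∑' i, q i * Es q (k+1)) - ∑' i, q i ^ 2 * Es (Function.update q i 0) k :=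
      Summable.tsum_sub (hqsum.mul_right _) (hsum_q2F k)
    have h5 : (∑' i, q i * Es q (k+1)) = (∑' i, q i) * Es q (k+1) := tsum_mul_right
    have h6 := hA (k+1)
    rw [h3, h4, h5] at h6
    have e7 : Es q (k+1+1) = Es q (k+2) := rfl
    rw [e7] at h6
    rw [h6]
    push_cast
    ring
  have key2 : ∀ z : ℕ,
      (∑' i, q i ^ 2 * Es (Function.update q i 0) (z+1)) * Es q (z+1)
      ≤ (∑' i, q i ^ 2 * Es (Function.update q i 0) z) * Es q (z+2)
        + qs * Es q (z+2) * Es q (z+1) := by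
    intro z
    have hbr : ∀ i, Es (Function.update q i 0) z * Es q (z+2)
        ≤ Es (Function.update q i 0) (z+1) * Es q (z+1) := fun i => Es_bracket hq0 hqsum i z
    have h1 : ∀ i, q i ^ 2 * Es (Function.update q i 0) (z+1) * Es q (z+1)
        ≤ q i ^ 2 * Es (Function.update q i 0) z * Es q (z+2)
          + qs * (q i * Es (Function.update q i 0) (z+1) * Es q (z+1)
            - q i * Es (Function.update q i 0) z * Es q (z+2)) := by
      intro i
      nlinarith [mul_nonneg (mul_nonneg (sub_nonneg.2 (hqub i)) (hq0 i))
        (sub_nonneg.2 (hbr i))]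
    have hs1 : Summable (fun i => q i ^ 2 * Es (Function.update q i 0) (z+1) * Es q (z+1)) :=
      (hsum_q2F (z+1)).mul_right _
    have hs2 : Summable (fun i => q i * Es (Function.update q i 0) (z+1) * Es q (z+1)) :=
      (hsum_qF (z+1)).mul_right _
    have hs3 : Summable (fun i => q i * Es (Function.update q i 0) z * Es q (z+2)) :=
      (hsum_qF z).mul_right _
    have hs4 : Summable (fun i => q i ^ 2 * Es (Function.update q i 0) z * Es q (z+2)) :=
      (hsum_q2F z).mul_right _
    have hs5 : Summable (fun i => q i ^ 2 * Es (Function.update q i 0) z * Es q (z+2)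
        + qs * (q i * Es (Function.update q i 0) (z+1) * Es q (z+1)
          - q i * Es (Function.update q i 0) z * Es q (z+2))) :=
      hs4.add ((hs2.sub hs3).mul_left qs)
    have h2 := Summable.tsum_le_tsum h1 hs1 hs5
    rw [Summable.tsum_add hs4 ((hs2.sub hs3).mul_left qs), tsum_mul_left, Summable.tsum_sub hs2 hs3] at h2
    rw [show (∑' i, q i ^ 2 * Es (Function.update q i 0) (z+1) * Es q (z+1))
        = (∑' i, q i ^ 2 * Es (Function.update q i 0) (z+1)) * Es q (z+1) from tsum_mul_right,
      show (∑' i, q i ^ 2 * Es (Function.update q i 0) z * Es q (z+2))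
        = (∑' i, q i ^ 2 * Es (Function.update q i 0) z) * Es q (z+2) from tsum_mul_right,
      show (∑' i, q i * Es (Function.update q i 0) (z+1) * Es q (z+1))
        = (∑' i, q i * Es (Function.update q i 0) (z+1)) * Es q (z+1) from tsum_mul_right,
      show (∑' i, q i * Es (Function.update q i 0) z * Es q (z+2))
        = (∑' i, q i * Es (Function.update q i 0) z) * Es q (z+2) from tsum_mul_right] at h2
    rw [hA (z+1), hA z] at h2
    calc (∑' i, q i ^ 2 * Es (Function.update q i 0) (z+1)) * Es q (z+1)
        ≤ (∑' i, q i ^ 2 * Es (Function.update q i 0) z) * Es q (z+2)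
          + qs * (((z:ℝ)+1+1) * Es q (z+1+1) * Es q (z+1)
            - ((z:ℝ)+1) * Es q (z+1) * Es q (z+1+1)) := by
          push_cast at h2 ⊢
          linarith [h2]
      _ = (∑' i, q i ^ 2 * Es (Function.update q i 0) z) * Es q (z+2)
          + qs * Es q (z+2) * Es q (z+1) := by
          rw [show z+1+1 = z+2 from rfl]
          ring
  -- now the two cases
  cases y with
  | zero =>
    have hk := key1 0
    have hE0_1 : Es q 0 = 1 := Es_zero q
    have hT0 : (∑' i, q i ^ 2 * Es (Function.update q i 0) 0) = ∑' i, q i ^ 2 := by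
      apply tsum_congr
      intro i
      rw [Es_zero]
      ring
    have hsumq2 : Summable (fun i => q i ^ 2) := by
      refine Summable.of_nonneg_of_le (fun i => sq_nonneg _) (fun i => ?_) (hqsum.mul_left qs)
      calc q i ^ 2 = q i * q i := sq (q i)
        _ ≤ qs * q i := mul_le_mul_of_nonneg_right (hqub i) (hq0 i)
    have hT0le : (∑' i, q i ^ 2) ≤ qs * ∑' i, q i := by
      rw [← tsum_mul_left]
      refine Summable.tsum_le_tsum (fun i => ?_) hsumq2 (hqsum.mul_left qs)
      calc q i ^ 2 = q i * q i := sq (q i)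
        _ ≤ qs * q i := mul_le_mul_of_nonneg_right (hqub i) (hq0 i)
    have hQ1E1 : (∑' i, q i) = Es q 1 := by
      have h := hA 0
      have h2 : ∀ i, q i * Es (Function.update q i 0) 0 = q i := by
        intro i
        rw [Es_zero]
        ring
      rw [tsum_congr h2] at h
      rw [h]
      norm_num
    have e1 : Es q (0+1) = Es q 1 := rfl
    have e2 : Es q (0+2) = Es q 2 := rfl
    have hlE1 : l ≤ Es q 1 := by
      rw [hE0_1, e1] at hratio
      push_cast at hratio
      linarith
    rw [hT0, hQ1E1, e1, e2] at hk
    rw [hQ1E1] at hT0le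
    have hm : l * Es q 1 ≤ Es q 1 * Es q 1 := mul_le_mul_of_nonneg_right hlE1 (hE0 1)
    rw [e1, e2]
    push_cast at hk ⊢
    linarith [hk, hm, hT0le]
  | succ z =>
    have I1 := key1 (z+1)
    have I2 := key1 z
    have K := key2 z
    have e2' : Es q (z+1+1) = Es q (z+2) := rfl
    rw [e2'] at hratio
    push_cast at hratio
    have hr2 : l * Es q (z+1) * Es q (z+2) ≤ ((z:ℝ)+2) * Es q (z+2) * Es q (z+2) := by
      nlinarith [hE0 (z+2), hratio]
    -- multiply identities by the appropriate Es values
    have e1 : Es q (z+1+2) = Es q (z+3) := rfl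
    have e2 : Es q (z+1+1) = Es q (z+2) := rfl
    rw [e1, e2] at I1
    push_cast at I1
    have I1' : ((z:ℝ)+3) * Es q (z+3) * Es q (z+1)
        = (∑' i, q i) * Es q (z+2) * Es q (z+1)
          - (∑' i, q i ^ 2 * Es (Function.update q i 0) (z+1)) * Es q (z+1) := by
      linear_combination Es q (z+1) * I1
    have I2' : (∑' i, q i ^ 2 * Es (Function.update q i 0) z) * Es q (z+2)
        = (∑' i, q i) * Es q (z+1) * Es q (z+2)
          - ((z:ℝ)+2) * Es q (z+2) * Es q (z+2) := by
      linear_combination Es q (z+2) * I2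
    have main : ((l - qs) * Es q (z+2)) * Es q (z+1)
        ≤ (((z:ℝ)+3) * Es q (z+3)) * Es q (z+1) := by
      linarith [I1', I2', K, hr2]
    have hfin := le_of_mul_le_mul_right main hEy
    rw [e1, e2]
    push_cast
    linarith [hfin]


end PB14

open PB14 in
/-- If `x ≥ 1`, `b(x−1) > 0`, `b(x) > 0` and `x b(x) ≥ λ b(x−1)`, then
`(x+1) b(x+1) ≥ (λ − p*/(1 − p*)) b(x)`. -/
theorem stmt_14 (p : ℕ → ℝ) (hp : ∀ i, p i ∈ Set.Ico (0 : ℝ) 1) (hsum : Summable p)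
    (l : ℝ) (hl : l = ∑' i, p i) (hlpos : 0 < l)
    (pstar : ℝ) (hpstar : IsGreatest (Set.range p) pstar)
    (x : ℕ) (hx1 : 1 ≤ x) (hbx' : 0 < pb p (x - 1)) (hbx : 0 < pb p x)
    (hratio : l * pb p (x - 1) ≤ (x : ℝ) * pb p x) :
    (l - pstar / (1 - pstar)) * pb p x ≤ ((x : ℝ) + 1) * pb p (x + 1) := by
  classical
  obtain ⟨⟨i0, hi0⟩, hub'⟩ := hpstar
  have hub : ∀ i, p i ≤ pstar := fun i => hub' ⟨i, rfl⟩
  have hps0 : 0 ≤ pstar := hi0 ▸ (hp i0).1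
  have hps1 : pstar < 1 := hi0 ▸ (hp i0).2
  have hd : (0:ℝ) < 1 - pstar := by linarith
  have h1p : ∀ k, 0 < 1 - p k := fun k => by linarith [(hp k).2]
  have hq0 : ∀ i, 0 ≤ p i / (1 - p i) := fun i => div_nonneg (hp i).1 (le_of_lt (h1p i))
  have hqs0 : 0 ≤ pstar / (1 - pstar) := div_nonneg hps0 (le_of_lt hd)
  have hqub : ∀ i, p i / (1 - p i) ≤ pstar / (1 - pstar) := by
    intro i
    rw [div_le_div_iff₀ (h1p i) hd]
    nlinarith [hub i, (hp i).1]
  have hqsum : Summable (fun i => p i / (1 - p i)) := by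
    refine Summable.of_nonneg_of_le hq0 (fun i => ?_) (hsum.mul_right ((1 - pstar)⁻¹))
    rw [div_eq_mul_inv]
    refine mul_le_mul_of_nonneg_left ?_ (hp i).1
    refine inv_anti₀ hd ?_
    linarith [hub i]
  have hL := log_summable hp hsum hps1 hub
  have hC : 0 < Real.exp (∑' k, Real.log (1 - p k)) := Real.exp_pos _
  have hpb : ∀ m, pb p m = Real.exp (∑' k, Real.log (1 - p k))
      * Es (fun i => p i / (1 - p i)) m := fun m => pb_eq_C_mul_Es hp hL m
  obtain ⟨y, rfl⟩ : ∃ y, x = y + 1 := ⟨x - 1, by omega⟩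
  have hxm : y + 1 - 1 = y := by omega
  rw [hxm] at hbx' hratio
  rw [hpb, hpb] at hratio
  rw [hpb] at hbx'
  rw [hpb, hpb]
  have hEy : 0 < Es (fun i => p i / (1 - p i)) y := by
    by_contra h
    push_neg at h
    nlinarith [hbx']
  have hratio' : l * Es (fun i => p i / (1 - p i)) y
      ≤ ((y:ℝ)+1) * Es (fun i => p i / (1 - p i)) (y+1) := by
    push_cast at hratio
    have h := hratio
    nlinarith [h, hC]
  have core' := core (fun i => p i / (1 - p i)) hq0 hqsum (pstar / (1 - pstar)) hqs0 hqub
    l y hEy hratio'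
  push_cast
  rw [show y+1+1 = y+2 from rfl]
  nlinarith [core', hC]
end
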